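/- arXiv:2208.08471 — 7 statements merged into one kernel-verified Lean document; each statement's English description precedes it below -/
import Mathlib

section
/- Let X₁,…,Xₙ be iid Pareto(α) with α ∈ (0,1], let A₁,…,Aₙ be events independent of (X₁,…,Xₙ), and let (θ₁,…,θₙ) ∈ ℝ₊ⁿ. Let λ ≥ ∑ᵢ θᵢ, let X be Pareto(α) independent of an event A with λ·ℙ(A) = ∑ᵢ θᵢ ℙ(Aᵢ). Then λ·X·𝟙_A ≤_st ∑ᵢ θᵢ Xᵢ 𝟙_{Aᵢ}. -/
open MeasureTheory ProbabilityTheory Set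


open Set Finset

lemma concave_pair {f : ℝ → ℝ} (hf : ConcaveOn ℝ (Set.Ici 0) f) {a b c d : ℝ}
    (hd : 0 ≤ d) (hdb : d ≤ b) (hba : b ≤ a) (hac : a ≤ c) (hsum : c + d = a + b) :
    f c + f d ≤ f a + f b := by
  rcases eq_or_lt_of_le (hdb.trans (hba.trans hac)) with h | h
  · have hda : d = a := le_antisymm (hdb.trans hba) (by linarith)
    have hdbb : d = b := le_antisymm hdb (by linarith)
    rw [← h, ← hda, ← hdbb]
  · set μ : ℝ := (a - d) / (c - d) with hμ
    have hcd : (0:ℝ) < c - d := by linarith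
    have hμ0 : 0 ≤ μ := div_nonneg (by linarith) hcd.le
    have hμ1 : μ ≤ 1 := (div_le_one hcd).2 (by linarith)
    have hmemc : c ∈ Set.Ici (0:ℝ) := by
      simp only [Set.mem_Ici]; linarith
    have hmemd : d ∈ Set.Ici (0:ℝ) := hd
    have ha' : a = μ * c + (1 - μ) * d := by
      have hμc : μ * (c - d) = a - d := div_mul_cancel₀ _ hcd.ne'
      linear_combination -hμc
    have hb' : b = (1 - μ) * c + μ * d := by
      have : b = (c + d) - a := by linarith
      rw [this, ha']; ring
    have h1 : μ * f c + (1 - μ) * f d ≤ f a := by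
      rw [ha']
      have := hf.2 hmemc hmemd hμ0 (show (0:ℝ) ≤ 1 - μ by linarith) (show μ + (1 - μ) = 1 by ring)
      simpa [smul_eq_mul] using this
    have h2 : (1 - μ) * f c + μ * f d ≤ f b := by
      rw [hb']
      have := hf.2 hmemc hmemd (show (0:ℝ) ≤ 1 - μ by linarith) hμ0 (show (1 - μ) + μ = 1 by ring)
      simpa [smul_eq_mul] using this
    nlinarith [h1, h2]

lemma rpow_concave {α : ℝ} (h0 : 0 < α) (h1 : α ≤ 1) :
    ConcaveOn ℝ (Set.Ici 0) fun x : ℝ => x ^ α :=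
  Real.concaveOn_rpow h0.le h1

/-- key pair inequality -/
lemma pair_ineq {α a b : ℝ} (h0 : 0 < α) (h1 : α ≤ 1)
    (ha0 : 0 ≤ a) (ha1 : a ≤ 1) (hb0 : 0 ≤ b) (hb1 : b ≤ 1) :
    (1 - a ^ α) * (1 - b ^ α) ≤ 1 - (a + b - a * b) ^ α := by
  have key : ∀ x y : ℝ, 0 ≤ x → x ≤ 1 → 0 ≤ y → y ≤ x →
      (x + y - x * y) ^ α + (x * y) ^ α ≤ x ^ α + y ^ α := by
    intro x y hx0 hx1 hy0 hyx
    exact concave_pair (rpow_concave h0 h1) (mul_nonneg hx0 hy0)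
      (by nlinarith) hyx (by nlinarith) (by ring)
  have hab : (a * b) ^ α = a ^ α * b ^ α := Real.mul_rpow ha0 hb0
  rcases le_total b a with h | h
  · have := key a b ha0 ha1 hb0 h
    nlinarith [this]
  · have := key b a hb0 hb1 ha0 h
    have e : b + a - b * a = a + b - a * b := by ring
    rw [e, mul_comm b a] at this
    nlinarith [this]

/-- iterated product inequality -/
lemma prod_ineq {ι : Type*} {α : ℝ} (h0 : 0 < α) (h1 : α ≤ 1)
    (q : ι → ℝ) : ∀ (S : Finset ι), (∀ i ∈ S, 0 ≤ q i ∧ q i ≤ 1) →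
    ∏ i ∈ S, (1 - q i ^ α) ≤ 1 - (1 - ∏ i ∈ S, (1 - q i)) ^ α := by
  intro S
  induction S using Finset.cons_induction with
  | empty => simp [Real.zero_rpow h0.ne']
  | cons j S hj ih =>
    intro hq
    have hqj := hq j (Finset.mem_cons_self j S)
    have hq' : ∀ i ∈ S, 0 ≤ q i ∧ q i ≤ 1 := fun i hi => hq i (Finset.mem_cons_of_mem hi)
    rw [Finset.prod_cons, Finset.prod_cons]
    have hPS0 : 0 ≤ ∏ i ∈ S, (1 - q i) :=
      Finset.prod_nonneg fun i hi => by linarith [(hq' i hi).2]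
    have hPS1 : ∏ i ∈ S, (1 - q i) ≤ 1 :=
      Finset.prod_le_one (fun i hi => by linarith [(hq' i hi).2])
        (fun i hi => by linarith [(hq' i hi).1])
    set Q : ℝ := 1 - ∏ i ∈ S, (1 - q i) with hQ
    have hQ0 : 0 ≤ Q := by simp [hQ]; linarith
    have hQ1 : Q ≤ 1 := by simp [hQ]; linarith
    have h2 : (1 - q j ^ α) * ∏ i ∈ S, (1 - q i ^ α) ≤ (1 - q j ^ α) * (1 - Q ^ α) := by
      apply mul_le_mul_of_nonneg_left (ih hq')
      have : q j ^ α ≤ 1 := Real.rpow_le_one hqj.1 hqj.2 h0.le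
      linarith
    refine h2.trans ?_
    have h3 := pair_ineq h0 h1 hqj.1 hqj.2 hQ0 hQ1
    have e : 1 - (1 - q j) * ∏ i ∈ S, (1 - q i) = q j + Q - q j * Q := by
      simp [hQ]; ring
    rw [e]; exact h3

/-- product lower bound: ∏ (β+θᵢ)/β ≥ (β+Θ)/β -/
lemma prod_ratio {ι : Type*} {β : ℝ} (hβ : 0 < β) (θ : ι → ℝ) :
    ∀ (S : Finset ι), (∀ i ∈ S, 0 ≤ θ i) →
    (β + ∑ i ∈ S, θ i) / β ≤ ∏ i ∈ S, ((β + θ i) / β) := by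
  intro S
  induction S using Finset.cons_induction with
  | empty => simp [div_self hβ.ne']
  | cons j S hj ih =>
    intro hθ
    have hθj : 0 ≤ θ j := hθ j (Finset.mem_cons_self j S)
    have hθ' : ∀ i ∈ S, 0 ≤ θ i := fun i hi => hθ i (Finset.mem_cons_of_mem hi)
    have hΘ0 : 0 ≤ ∑ i ∈ S, θ i := Finset.sum_nonneg hθ'
    rw [Finset.prod_cons, Finset.sum_cons]
    have h1 : (β + θ j) / β * ((β + ∑ i ∈ S, θ i) / β) ≤
        (β + θ j) / β * ∏ i ∈ S, ((β + θ i) / β) := by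
      apply mul_le_mul_of_nonneg_left (ih hθ')
      positivity
    refine le_trans ?_ h1
    rw [div_mul_div_comm, div_le_div_iff₀ hβ (by positivity)]
    nlinarith [mul_nonneg (mul_nonneg hβ.le hθj) hΘ0]

/-- x ≤ x^α for x ∈ [0,1], α ∈ (0,1] -/
lemma le_rpow_self {α x : ℝ} (h0 : 0 < α) (h1 : α ≤ 1) (hx0 : 0 ≤ x) (hx1 : x ≤ 1) :
    x ≤ x ^ α := by
  rcases eq_or_lt_of_le hx0 with h | h
  · rw [← h]; positivity
  · calc x = x ^ (1:ℝ) := (Real.rpow_one x).symm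
    _ ≤ x ^ α := Real.rpow_le_rpow_of_exponent_ge h hx1 h1

/-- main scalar inequality -/
lemma scalar_main {ι : Type*} {α t : ℝ} (h0 : 0 < α) (h1 : α ≤ 1)
    (θ : ι → ℝ) (S : Finset ι) (hpos : ∀ i ∈ S, 0 < θ i)
    (ht : ∑ i ∈ S, θ i < t) :
    ∏ i ∈ S, (1 - (θ i / (t - ∑ j ∈ S, θ j + θ i)) ^ α) ≤ 1 - ((∑ i ∈ S, θ i) / t) ^ α := by
  set Θ := ∑ i ∈ S, θ i with hΘ
  have hΘ0 : 0 ≤ Θ := Finset.sum_nonneg fun i hi => (hpos i hi).le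
  set β := t - Θ with hβdef
  have hβ : 0 < β := by simp [hβdef]; linarith
  have ht0 : 0 < t := by linarith
  have hq : ∀ i ∈ S, 0 ≤ θ i / (β + θ i) ∧ θ i / (β + θ i) ≤ 1 := by
    intro i hi
    have := hpos i hi
    constructor
    · positivity
    · rw [div_le_one (by linarith)]; linarith
  have key := prod_ineq h0 h1 (fun i => θ i / (β + θ i)) S hq
  have e : ∀ i ∈ S, (1:ℝ) - θ i / (β + θ i) = β / (β + θ i) := by
    intro i hi
    have := hpos i hi
    field_simp; ring
  have hprodeq : ∏ i ∈ S, ((1:ℝ) - θ i / (β + θ i)) = ∏ i ∈ S, (β / (β + θ i)) :=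
    Finset.prod_congr rfl e
  have hratio := prod_ratio hβ θ S (fun i hi => (hpos i hi).le)
  -- ∏ β/(β+θᵢ) ≤ β/t
  have hprodle : ∏ i ∈ S, (β / (β + θ i)) ≤ β / t := by
    have hprodpos : 0 < ∏ i ∈ S, ((β + θ i) / β) := by
      apply Finset.prod_pos; intro i hi; have := hpos i hi; positivity
    have hinv : ∏ i ∈ S, (β / (β + θ i)) = (∏ i ∈ S, ((β + θ i) / β))⁻¹ := by
      rw [← Finset.prod_inv_distrib]
      apply Finset.prod_congr rfl
      intro i hi; rw [inv_div]
    rw [hinv]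
    have htβ : (β + Θ) / β = t / β := by rw [hβdef]; ring_nf
    have h2 : t / β ≤ ∏ i ∈ S, ((β + θ i) / β) := by rw [← htβ]; exact hratio
    have hβt : 0 < t / β := by positivity
    calc (∏ i ∈ S, ((β + θ i) / β))⁻¹ ≤ (t / β)⁻¹ := by
          apply inv_anti₀ hβt h2
      _ = β / t := by rw [inv_div]
  -- so 1 - ∏(1-qᵢ) ≥ Θ/t
  have hQge : Θ / t ≤ 1 - ∏ i ∈ S, ((1:ℝ) - θ i / (β + θ i)) := by
    rw [hprodeq]
    have : β / t = 1 - Θ / t := by field_simp [hβdef]; linarith [hβdef]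
    linarith [hprodle]
  have hQ1 : 1 - ∏ i ∈ S, ((1:ℝ) - θ i / (β + θ i)) ≤ 1 := by
    have : 0 ≤ ∏ i ∈ S, ((1:ℝ) - θ i / (β + θ i)) :=
      Finset.prod_nonneg fun i hi => by linarith [(hq i hi).2]
    linarith
  have hrpow : (Θ / t) ^ α ≤ (1 - ∏ i ∈ S, ((1:ℝ) - θ i / (β + θ i))) ^ α :=
    Real.rpow_le_rpow (by positivity) hQge h0.le
  calc ∏ i ∈ S, (1 - (θ i / (β + θ i)) ^ α)
      ≤ 1 - (1 - ∏ i ∈ S, ((1:ℝ) - θ i / (β + θ i))) ^ α := key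
    _ ≤ 1 - (Θ / t) ^ α := by linarith

open MeasureTheory ProbabilityTheory Set

/-- `X` is a Pareto(α) random variable under `P`: `P(X > t) = t^{-α}` for `t ≥ 1`,
and `X ≥ 1` almost surely. -/
def IsPareto {Ω : Type*} [MeasurableSpace Ω] (P : Measure Ω) (X : Ω → ℝ) (α : ℝ) : Prop :=
  Measurable X ∧ P {ω | 1 ≤ X ω} = 1 ∧
    ∀ t : ℝ, 1 ≤ t → P {ω | t < X ω} = ENNReal.ofReal (t ^ (-α))

section prob

variable {Ω : Type*} [MeasurableSpace Ω] (P : Measure Ω) [IsProbabilityMeasure P]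

lemma pareto_gt_one {X : Ω → ℝ} {α : ℝ} (hX : IsPareto P X α) : P {ω | 1 < X ω} = 1 := by
  have := hX.2.2 1 le_rfl
  simpa [Real.one_rpow] using this

lemma as_gt_one {n : ℕ} {α : ℝ} (Xs : Fin n → Ω → ℝ) (hXs : ∀ i, IsPareto P (Xs i) α) :
    P {ω | ∀ i, 1 < Xs i ω} = 1 := by
  have hmeas : ∀ i, MeasurableSet {ω | 1 < Xs i ω} := fun i =>
    measurableSet_lt measurable_const (hXs i).1
  have hset : {ω | ∀ i, 1 < Xs i ω} = ⋂ i, {ω | 1 < Xs i ω} := by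
    ext ω; simp
  rw [hset, ← prob_compl_eq_zero_iff (MeasurableSet.iInter hmeas)]
  rw [Set.compl_iInter]
  apply measure_iUnion_null
  intro i
  rw [prob_compl_eq_zero_iff (hmeas i)]
  exact pareto_gt_one P (hXs i)

lemma core_one {n : ℕ} {α : ℝ} (Xs : Fin n → Ω → ℝ) (hXs : ∀ i, IsPareto P (Xs i) α)
    (θ : Fin n → ℝ) (S : Finset (Fin n)) (hpos : ∀ i ∈ S, 0 < θ i) (hS : S.Nonempty)
    {t : ℝ} (ht : t ≤ ∑ i ∈ S, θ i) :
    P {ω | t < ∑ i ∈ S, θ i * Xs i ω} = 1 := by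
  refine le_antisymm prob_le_one ?_
  rw [← as_gt_one P Xs hXs]
  apply measure_mono
  intro ω hω
  simp only [Set.mem_setOf_eq] at hω ⊢
  have : ∑ i ∈ S, θ i < ∑ i ∈ S, θ i * Xs i ω := by
    apply Finset.sum_lt_sum_of_nonempty hS
    intro i hi
    exact (lt_mul_iff_one_lt_right (hpos i hi)).2 (hω i)
  linarith

end prob
section prob2

open MeasureTheory ProbabilityTheory Set

variable {Ω : Type*} [MeasurableSpace Ω] (P : Measure Ω) [IsProbabilityMeasure P]

lemma core_tail {n : ℕ} {α : ℝ} (hα : α ∈ Set.Ioc (0:ℝ) 1)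
    (Xs : Fin n → Ω → ℝ) (hXs : ∀ i, IsPareto P (Xs i) α)
    (hind : iIndepFun Xs P)
    (θ : Fin n → ℝ) (S : Finset (Fin n)) (hpos : ∀ i ∈ S, 0 < θ i)
    {t : ℝ} (ht : ∑ i ∈ S, θ i < t) :
    ENNReal.ofReal (((∑ i ∈ S, θ i) / t) ^ α) ≤ P {ω | t < ∑ i ∈ S, θ i * Xs i ω} := by
  obtain ⟨hα0, hα1⟩ := hα
  rcases S.eq_empty_or_nonempty with rfl | hS
  · have ht0 : (0:ℝ) < t := by simpa using ht
    simp [Real.zero_rpow hα0.ne']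
  set Θ := ∑ i ∈ S, θ i with hΘ
  have hΘpos : 0 < Θ := Finset.sum_pos hpos hS
  set β := t - Θ with hβdef
  have hβ : 0 < β := by simp only [hβdef]; linarith
  have ht0 : 0 < t := by linarith
  set s : Fin n → ℝ := fun i => (β + θ i) / θ i with hs
  have hs1 : ∀ i ∈ S, 1 ≤ s i := by
    intro i hi
    rw [hs]
    rw [le_div_iff₀ (hpos i hi)]
    linarith
  -- measurability of target
  have hmeasSum : Measurable fun ω => ∑ i ∈ S, θ i * Xs i ω :=
    Finset.measurable_sum S fun i _ => ((hXs i).1.const_mul (θ i))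
  -- the union event
  set U : Set Ω := ⋃ i ∈ S, Xs i ⁻¹' Set.Ioi (s i) with hU
  have hUmeas : MeasurableSet U :=
    MeasurableSet.biUnion (Finset.countable_toSet S)
      (fun i _ => (hXs i).1 measurableSet_Ioi)
  -- complement of U
  have hUc : Uᶜ = ⋂ i ∈ S, Xs i ⁻¹' Set.Iic (s i) := by
    rw [hU, Set.compl_iUnion₂]
    refine Set.iInter₂_congr fun i hi => ?_
    rw [← Set.preimage_compl, Set.compl_Ioi]
  -- independence product
  have hprod : P (⋂ i ∈ S, Xs i ⁻¹' Set.Iic (s i)) = ∏ i ∈ S, P (Xs i ⁻¹' Set.Iic (s i)) :=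
    hind.measure_inter_preimage_eq_mul S (sets := fun i => Set.Iic (s i))
      (fun i _ => measurableSet_Iic)
  -- each factor
  have hfac : ∀ i ∈ S, P (Xs i ⁻¹' Set.Iic (s i)) = ENNReal.ofReal (1 - s i ^ (-α)) := by
    intro i hi
    have htail : P {ω | s i < Xs i ω} = ENNReal.ofReal (s i ^ (-α)) :=
      (hXs i).2.2 (s i) (hs1 i hi)
    have hcompl : Xs i ⁻¹' Set.Iic (s i) = {ω | s i < Xs i ω}ᶜ := by
      ext ω; simp [not_lt]
    rw [hcompl, measure_compl (measurableSet_lt measurable_const (hXs i).1)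
      (measure_ne_top P _), htail, measure_univ]
    rw [ENNReal.ofReal_sub 1 (Real.rpow_nonneg (le_trans zero_le_one (hs1 i hi)) _)]
    simp
  have hx1 : ∀ i ∈ S, s i ^ (-α) ≤ 1 := by
    intro i hi
    exact Real.rpow_le_one_of_one_le_of_nonpos (hs1 i hi) (by linarith)
  -- product as ofReal
  have hprodval : P Uᶜ = ENNReal.ofReal (∏ i ∈ S, (1 - s i ^ (-α))) := by
    rw [hUc, hprod, Finset.prod_congr rfl hfac,
      ENNReal.ofReal_prod_of_nonneg (fun i hi => by linarith [hx1 i hi])]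
  -- scalar bound
  have hscalareq : ∀ i ∈ S, s i ^ (-α) = (θ i / (t - ∑ j ∈ S, θ j + θ i)) ^ α := by
    intro i hi
    rw [Real.rpow_neg (le_trans zero_le_one (hs1 i hi)), ← Real.inv_rpow
      (le_trans zero_le_one (hs1 i hi)), hs, inv_div]
  have hscalar : ∏ i ∈ S, (1 - s i ^ (-α)) ≤ 1 - (Θ / t) ^ α := by
    calc ∏ i ∈ S, (1 - s i ^ (-α))
        = ∏ i ∈ S, (1 - (θ i / (t - ∑ j ∈ S, θ j + θ i)) ^ α) :=
          Finset.prod_congr rfl (fun i hi => by rw [hscalareq i hi])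
      _ ≤ 1 - ((∑ i ∈ S, θ i) / t) ^ α := scalar_main hα0 hα1 θ S hpos ht
  set g : ℝ := (Θ / t) ^ α with hg
  have hg0 : 0 ≤ g := Real.rpow_nonneg (by positivity) _
  have hg1 : g ≤ 1 := Real.rpow_le_one (by positivity) ((div_le_one ht0).2 ht.le) hα0.le
  have hUclb : P Uᶜ ≤ ENNReal.ofReal (1 - g) := by
    rw [hprodval]
    exact ENNReal.ofReal_le_ofReal hscalar
  -- P U ≥ ofReal g
  have hPU : ENNReal.ofReal g ≤ P U := by
    have hsum : P U + P Uᶜ = 1 := by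
      rw [measure_add_measure_compl hUmeas, measure_univ]
    have hgsum : ENNReal.ofReal g + ENNReal.ofReal (1 - g) = 1 := by
      rw [← ENNReal.ofReal_add hg0 (by linarith)]
      norm_num
    have h1 : ENNReal.ofReal g = 1 - ENNReal.ofReal (1 - g) :=
      ENNReal.eq_sub_of_add_eq ENNReal.ofReal_ne_top hgsum
    have h2 : P U = 1 - P Uᶜ :=
      ENNReal.eq_sub_of_add_eq (measure_ne_top P _) hsum
    rw [h1, h2]
    exact tsub_le_tsub_left hUclb 1
  -- a.s. set
  have hN : P {ω | ∀ j, 1 < Xs j ω} = 1 := as_gt_one P Xs hXs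
  have hNc : P {ω | ∀ j, 1 < Xs j ω}ᶜ = 0 := by
    rw [prob_compl_eq_zero_iff]
    · exact hN
    · have : {ω | ∀ j, 1 < Xs j ω} = ⋂ j, {ω | 1 < Xs j ω} := by ext ω; simp
      rw [this]
      exact MeasurableSet.iInter fun j => measurableSet_lt measurable_const (hXs j).1
  -- inclusion
  have hincl : U ∩ {ω | ∀ j, 1 < Xs j ω} ⊆ {ω | t < ∑ i ∈ S, θ i * Xs i ω} := by
    rintro ω ⟨hωU, hωN⟩
    simp only [Set.mem_setOf_eq] at hωN ⊢
    rw [hU, Set.mem_iUnion₂] at hωU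
    obtain ⟨i, hi, hωi⟩ := hωU
    simp only [Set.mem_preimage, Set.mem_Ioi] at hωi
    have hterm : β + θ i < θ i * Xs i ω := by
      have h' : (β + θ i) / θ i < Xs i ω := hωi
      calc β + θ i = θ i * ((β + θ i) / θ i) := by
            rw [eq_comm, mul_comm]; exact div_mul_cancel₀ _ (hpos i hi).ne'
        _ < θ i * Xs i ω := mul_lt_mul_of_pos_left h' (hpos i hi)
    have hrest : ∑ j ∈ S.erase i, θ j ≤ ∑ j ∈ S.erase i, θ j * Xs j ω := by
      apply Finset.sum_le_sum
      intro j hj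
      have hj' := hpos j (Finset.mem_of_mem_erase hj)
      nlinarith [hωN j]
    have e1 : ∑ j ∈ S.erase i, θ j * Xs j ω + θ i * Xs i ω = ∑ j ∈ S, θ j * Xs j ω :=
      Finset.sum_erase_add S _ hi
    have e2 : ∑ j ∈ S.erase i, θ j + θ i = Θ :=
      Finset.sum_erase_add S _ hi
    have : t = β + Θ := by rw [hβdef]; ring
    linarith
  calc ENNReal.ofReal g ≤ P U := hPU
    _ = P (U ∩ {ω | ∀ j, 1 < Xs j ω}) := (measure_inter_conull hNc).symm
    _ ≤ P {ω | t < ∑ i ∈ S, θ i * Xs i ω} := measure_mono hincl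

end prob2

/-- Catastrophic-loss model: for iid Pareto(α), `α ∈ (0,1]`, events `A₁,…,Aₙ`
independent of the losses, nonnegative exposures `θᵢ`, `λ ≥ ∑ θᵢ`, and a Pareto(α)
variable `X` independent of an event `A` with `λ·P(A) = ∑ θᵢ P(Aᵢ)`, we have
`λ·X·𝟙_A ≤_st ∑ θᵢ Xᵢ 𝟙_{Aᵢ}`. -/
theorem stmt12 {Ω : Type*} [MeasurableSpace Ω] (P : Measure Ω) [IsProbabilityMeasure P]
    (n : ℕ) (α : ℝ) (hα : α ∈ Set.Ioc (0:ℝ) 1)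
    (Xs : Fin n → Ω → ℝ) (hXs : ∀ i, IsPareto P (Xs i) α)
    (hind : iIndepFun Xs P)
    (A : Fin n → Set Ω) (hAmeas : ∀ i, MeasurableSet (A i))
    (hindA : IndepFun (fun ω i => Xs i ω)
      (fun ω i => (A i).indicator (fun _ => (1:ℝ)) ω) P)
    (θ : Fin n → ℝ) (hθ : ∀ i, 0 ≤ θ i)
    (lam : ℝ) (hlam : ∑ i, θ i ≤ lam)
    (X : Ω → ℝ) (hX : IsPareto P X α)
    (A₀ : Set Ω) (hA₀ : MeasurableSet A₀)
    (hindX : IndepFun X (A₀.indicator (fun _ => (1:ℝ))) P)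
    (hPA : ENNReal.ofReal lam * P A₀ = ∑ i, ENNReal.ofReal (θ i) * P (A i)) :
    ∀ t : ℝ, P {ω | t < lam * X ω * A₀.indicator (fun _ => (1:ℝ)) ω}
      ≤ P {ω | t < ∑ i, θ i * Xs i ω * (A i).indicator (fun _ => (1:ℝ)) ω} := by
  classical
  obtain ⟨hα0, hα1⟩ := hα
  intro t
  by_cases ht0 : 0 ≤ t
  swap
  · -- t < 0 : RHS has probability 1
    push_neg at ht0
    have hRHS : P {ω | t < ∑ i, θ i * Xs i ω * (A i).indicator (fun _ => (1:ℝ)) ω} = 1 := by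
      refine le_antisymm prob_le_one ?_
      rw [← as_gt_one P Xs hXs]
      apply measure_mono
      intro ω hω
      simp only [Set.mem_setOf_eq] at hω ⊢
      have hnn : 0 ≤ ∑ i, θ i * Xs i ω * (A i).indicator (fun _ => (1:ℝ)) ω := by
        apply Finset.sum_nonneg
        intro i _
        have h1 : (0:ℝ) ≤ Xs i ω := le_trans zero_le_one (hω i).le
        have h2 : (0:ℝ) ≤ (A i).indicator (fun _ => (1:ℝ)) ω :=
          Set.indicator_nonneg (fun _ _ => zero_le_one) ω
        have := hθ i
        positivity
      linarith
    rw [hRHS]; exact prob_le_one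
  · have hlam0' : 0 ≤ lam := le_trans (Finset.sum_nonneg fun i _ => hθ i) hlam
    rcases eq_or_lt_of_le hlam0' with heq | hlam0
    · -- lam = 0 : LHS is empty
      have hempty : {ω | t < lam * X ω * A₀.indicator (fun _ => (1:ℝ)) ω} = ∅ := by
        ext ω
        simp only [Set.mem_setOf_eq, Set.mem_empty_iff_false, iff_false, not_lt, ← heq,
          zero_mul]
        exact ht0
      rw [hempty]; simp
    -- main case : 0 ≤ t, 0 < lam
    set m : ℝ := if t ≤ lam then 1 else (lam / t) ^ α with hm
    have hm0 : 0 ≤ m := by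
      rw [hm]; split
      · norm_num
      · positivity
    have hm1 : m ≤ 1 := by
      rw [hm]; split
      · exact le_refl 1
      · rename_i h
        push_neg at h
        exact Real.rpow_le_one (by positivity) ((div_le_one (by linarith)).2 h.le) hα0.le
    -- LHS bound
    have hLHS : P {ω | t < lam * X ω * A₀.indicator (fun _ => (1:ℝ)) ω}
        ≤ ENNReal.ofReal m * P A₀ := by
      have hset : {ω | t < lam * X ω * A₀.indicator (fun _ => (1:ℝ)) ω}
          = X ⁻¹' Set.Ioi (t / lam) ∩ (A₀.indicator (fun _ => (1:ℝ))) ⁻¹' {1} := by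
        ext ω
        by_cases hω : ω ∈ A₀
        · simp only [Set.mem_setOf_eq, Set.mem_inter_iff, Set.mem_preimage, Set.mem_Ioi,
            Set.mem_singleton_iff, Set.indicator_of_mem hω]
          constructor
          · intro h
            refine ⟨?_, by trivial⟩
            rw [div_lt_iff₀ hlam0]
            nlinarith
          · rintro ⟨h, -⟩
            rw [div_lt_iff₀ hlam0] at h
            nlinarith
        · simp only [Set.mem_setOf_eq, Set.mem_inter_iff, Set.mem_preimage, Set.mem_Ioi,
            Set.mem_singleton_iff, Set.indicator_of_notMem hω]
          constructor
          · intro h; exfalso; rw [mul_zero] at h; linarith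
          · rintro ⟨-, h⟩; exact absurd h (by norm_num)
      have hpre : (A₀.indicator (fun _ => (1:ℝ))) ⁻¹' {1} = A₀ := by
        ext ω
        by_cases hω : ω ∈ A₀
        · simp [Set.indicator_of_mem hω, hω]
        · simp [Set.indicator_of_notMem hω, hω]
      rw [hset, hindX.measure_inter_preimage_eq_mul _ _ measurableSet_Ioi
        (measurableSet_singleton 1), hpre]
      have htail : P (X ⁻¹' Set.Ioi (t / lam)) ≤ ENNReal.ofReal m := by
        by_cases htl : t ≤ lam
        · rw [hm, if_pos htl]
          simpa using prob_le_one
        · push_neg at htl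
          have h1 : 1 ≤ t / lam := (le_div_iff₀ hlam0).2 (by linarith)
          have heq2 : P (X ⁻¹' Set.Ioi (t / lam)) = ENNReal.ofReal ((t / lam) ^ (-α)) := by
            rw [show X ⁻¹' Set.Ioi (t / lam) = {ω | t / lam < X ω} from rfl]
            exact hX.2.2 _ h1
          rw [heq2, hm, if_neg (not_le.2 htl)]
          have : (t / lam) ^ (-α) = (lam / t) ^ α := by
            rw [Real.rpow_neg (by positivity), ← Real.inv_rpow (by positivity), inv_div]
          rw [this]
      exact mul_le_mul_left htail (P A₀)
    -- partition events
    set B : Finset (Fin n) → Set Ω := fun S => {ω | ∀ i, (ω ∈ A i ↔ i ∈ S)} with hB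
    have hBeq : ∀ S, B S = ⋂ i, (if i ∈ S then A i else (A i)ᶜ) := by
      intro S
      ext ω
      simp only [hB, Set.mem_setOf_eq, Set.mem_iInter]
      constructor
      · intro h i
        by_cases hi : i ∈ S
        · simp [hi, (h i).2 hi]
        · simp only [hi, if_false, Set.mem_compl_iff]
          intro hA
          exact hi ((h i).1 hA)
      · intro h i
        by_cases hi : i ∈ S
        · have := h i; rw [if_pos hi] at this; exact ⟨fun _ => hi, fun _ => this⟩
        · have := h i; rw [if_neg hi] at this
          exact ⟨fun hA => absurd hA this, fun hS => absurd hS hi⟩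
    have hBmeas : ∀ S, MeasurableSet (B S) := by
      intro S
      rw [hBeq]
      exact MeasurableSet.iInter fun i => by
        split
        · exact hAmeas i
        · exact (hAmeas i).compl
    have hBdisj : ∀ S T : Finset (Fin n), S ≠ T → Disjoint (B S) (B T) := by
      intro S T hST
      rw [Set.disjoint_left]
      intro ω hωS hωT
      apply hST
      ext i
      rw [← hωS i, ← hωT i]
    have hBcover : ∀ ω : Ω, ω ∈ B (Finset.univ.filter (fun i => ω ∈ A i)) := by
      intro ω i
      simp [Finset.mem_filter]
    -- partition lemma
    have hpart : ∀ C : Set Ω, MeasurableSet C →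
        P C = ∑ S : Finset (Fin n), P (B S ∩ C) := by
      intro C hC
      have hcov : C = ⋃ S ∈ (Finset.univ : Finset (Finset (Fin n))), (B S ∩ C) := by
        ext ω
        simp only [Set.mem_iUnion, Finset.mem_univ, Set.mem_inter_iff, exists_prop,
          true_and]
        constructor
        · intro h
          exact ⟨Finset.univ.filter (fun i => ω ∈ A i), hBcover ω, h⟩
        · rintro ⟨S, -, h⟩; exact h
      conv_lhs => rw [hcov]
      rw [measure_biUnion_finset]
      · intro S _ T _ hST
        exact (hBdisj S T hST).mono Set.inter_subset_left Set.inter_subset_left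
      · intro S _
        exact (hBmeas S).inter hC
    -- measurability of loss sets
    have hLmeas : MeasurableSet {ω | t < ∑ i, θ i * Xs i ω * (A i).indicator (fun _ => (1:ℝ)) ω} := by
      apply measurableSet_lt measurable_const
      apply Finset.measurable_sum
      intro i _
      exact (((hXs i).1.const_mul (θ i)).mul
        (measurable_const.indicator (hAmeas i)))
    have hLSmeas : ∀ S : Finset (Fin n), MeasurableSet {ω | t < ∑ i ∈ S, θ i * Xs i ω} := by
      intro S
      exact measurableSet_lt measurable_const
        (Finset.measurable_sum S fun i _ => ((hXs i).1.const_mul (θ i)))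
    -- on B S the loss equals the restricted sum
    have hBsum : ∀ S : Finset (Fin n), ∀ ω ∈ B S,
        ∑ i, θ i * Xs i ω * (A i).indicator (fun _ => (1:ℝ)) ω = ∑ i ∈ S, θ i * Xs i ω := by
      intro S ω hω
      rw [← Finset.sum_filter_of_ne (p := fun i => i ∈ S)
        (f := fun i => θ i * Xs i ω * (A i).indicator (fun _ => (1:ℝ)) ω)]
      · have : Finset.univ.filter (fun i => i ∈ S) = S := by
          ext i; simp
        rw [this]
        apply Finset.sum_congr rfl
        intro i hi
        rw [Set.indicator_of_mem ((hω i).2 hi), mul_one]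
      · intro i _ hne
        by_contra hiS
        apply hne
        rw [Set.indicator_of_notMem (fun hA => hiS ((hω i).1 hA)), mul_zero]
    -- independence split
    have hindS : ∀ S : Finset (Fin n),
        P (B S ∩ {ω | t < ∑ i ∈ S, θ i * Xs i ω})
          = P {ω | t < ∑ i ∈ S, θ i * Xs i ω} * P (B S) := by
      intro S
      have hD : MeasurableSet {v : Fin n → ℝ | t < ∑ i ∈ S, θ i * v i} :=
        measurableSet_lt measurable_const
          (Finset.measurable_sum S fun i _ => by fun_prop)
      have hC : MeasurableSet {v : Fin n → ℝ | ∀ i, v i = if i ∈ S then (1:ℝ) else 0} := by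
        have : {v : Fin n → ℝ | ∀ i, v i = if i ∈ S then (1:ℝ) else 0}
            = ⋂ i, (fun v : Fin n → ℝ => v i) ⁻¹' {if i ∈ S then (1:ℝ) else 0} := by
          ext v; simp [Set.mem_iInter]
        rw [this]
        exact MeasurableSet.iInter fun i => (measurable_pi_apply i) (measurableSet_singleton _)
      have hfD : (fun ω (i : Fin n) => Xs i ω) ⁻¹' {v | t < ∑ i ∈ S, θ i * v i}
          = {ω | t < ∑ i ∈ S, θ i * Xs i ω} := rfl
      have hgC : (fun ω (i : Fin n) => (A i).indicator (fun _ => (1:ℝ)) ω) ⁻¹'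
          {v | ∀ i, v i = if i ∈ S then (1:ℝ) else 0} = B S := by
        ext ω
        simp only [Set.mem_preimage, Set.mem_setOf_eq, hB]
        constructor
        · intro h i
          have := h i
          by_cases hω : ω ∈ A i
          · rw [Set.indicator_of_mem hω] at this
            constructor
            · intro _
              by_contra hiS
              rw [if_neg hiS] at this; norm_num at this
            · intro _; exact hω
          · rw [Set.indicator_of_notMem hω] at this
            constructor
            · intro hA; exact absurd hA hω
            · intro hiS
              rw [if_pos hiS] at this; norm_num at this
        · intro h i
          by_cases hω : ω ∈ A i
          · rw [Set.indicator_of_mem hω, if_pos ((h i).1 hω)]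
          · rw [Set.indicator_of_notMem hω, if_neg (fun hiS => hω ((h i).2 hiS))]
      have := hindA.measure_inter_preimage_eq_mul
        (s := {v : Fin n → ℝ | t < ∑ i ∈ S, θ i * v i})
        (t := {v : Fin n → ℝ | ∀ i, v i = if i ∈ S then (1:ℝ) else 0}) hD hC
      rw [hfD, hgC] at this
      rw [Set.inter_comm]
      exact this
    -- per-S lower bound
    have hSb : ∀ S : Finset (Fin n),
        ENNReal.ofReal ((∑ i ∈ S, θ i) * (m / lam)) ≤ P {ω | t < ∑ i ∈ S, θ i * Xs i ω} := by
      intro S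
      set S' := S.filter (fun i => 0 < θ i) with hS'
      have hposS' : ∀ i ∈ S', 0 < θ i := fun i hi => (Finset.mem_filter.1 hi).2
      have hsum_eq : ∑ i ∈ S', θ i = ∑ i ∈ S, θ i :=
        Finset.sum_filter_of_ne fun i _ hne => lt_of_le_of_ne (hθ i) (Ne.symm hne)
      have hsum_eq2 : ∀ ω, ∑ i ∈ S', θ i * Xs i ω = ∑ i ∈ S, θ i * Xs i ω := by
        intro ω
        apply Finset.sum_filter_of_ne
        intro i _ hne
        rcases eq_or_lt_of_le (hθ i) with h | h
        · exfalso; apply hne; rw [← h, zero_mul]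
        · exact h
      have hsetEq : {ω | t < ∑ i ∈ S, θ i * Xs i ω} = {ω | t < ∑ i ∈ S', θ i * Xs i ω} := by
        ext ω; rw [Set.mem_setOf_eq, Set.mem_setOf_eq, hsum_eq2]
      rw [hsetEq, ← hsum_eq]
      rcases eq_or_lt_of_le (Finset.sum_nonneg fun i hi => (hposS' i hi).le) with hΘ0 | hΘpos
      · rw [← hΘ0, zero_mul]
        simp
      · have hΘlam : (∑ i ∈ S', θ i) ≤ lam := by
          refine le_trans ?_ hlam
          apply Finset.sum_le_sum_of_subset_of_nonneg (Finset.subset_univ S')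
          intro i _ _
          exact hθ i
        rcases le_or_gt t (∑ i ∈ S', θ i) with htΘ | htΘ
        · -- probability 1 case
          have hS'ne : S'.Nonempty := by
            by_contra h
            rw [Finset.not_nonempty_iff_eq_empty] at h
            rw [h, Finset.sum_empty] at hΘpos
            exact lt_irrefl _ hΘpos
          rw [core_one P Xs hXs θ S' hposS' hS'ne htΘ]
          apply ENNReal.ofReal_le_one.2
          rw [mul_div_assoc']
          rw [div_le_one hlam0]
          nlinarith
        · -- tail case
          refine le_trans ?_ (core_tail P ⟨hα0, hα1⟩ Xs hXs hind θ S' hposS' htΘ)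
          apply ENNReal.ofReal_le_ofReal
          have ht0' : 0 < t := lt_trans hΘpos htΘ
          set Θ : ℝ := ∑ i ∈ S', θ i with hΘdef
          by_cases htl : t ≤ lam
          · rw [hm, if_pos htl]
            have h1 : Θ * (1 / lam) = Θ / lam := by ring
            rw [h1]
            have h2 : Θ / lam ≤ Θ / t := by
              rw [div_le_div_iff₀ hlam0 ht0']
              nlinarith
            refine le_trans h2 ?_
            exact le_rpow_self hα0 hα1 (by positivity) ((div_le_one ht0').2 htΘ.le)
          · push_neg at htl
            rw [hm, if_neg (not_le.2 htl)]
            have h1 : Θ / lam ≤ (Θ / lam) ^ α :=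
              le_rpow_self hα0 hα1 (by positivity) ((div_le_one hlam0).2 hΘlam)
            have h2 : (Θ / lam) ^ α * (lam / t) ^ α = (Θ / t) ^ α := by
              rw [← Real.mul_rpow (by positivity) (by positivity)]
              congr 1
              field_simp
            calc Θ * ((lam / t) ^ α / lam) = Θ / lam * (lam / t) ^ α := by ring
              _ ≤ (Θ / lam) ^ α * (lam / t) ^ α :=
                  mul_le_mul_of_nonneg_right h1 (by positivity)
              _ = (Θ / t) ^ α := h2
    -- assemble RHS
    have hRHS : ENNReal.ofReal m * P A₀
        ≤ P {ω | t < ∑ i, θ i * Xs i ω * (A i).indicator (fun _ => (1:ℝ)) ω} := by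
      have step1 : P {ω | t < ∑ i, θ i * Xs i ω * (A i).indicator (fun _ => (1:ℝ)) ω}
          = ∑ S : Finset (Fin n), P {ω | t < ∑ i ∈ S, θ i * Xs i ω} * P (B S) := by
        rw [hpart _ hLmeas]
        apply Finset.sum_congr rfl
        intro S _
        rw [← hindS S]
        congr 1
        ext ω
        simp only [Set.mem_inter_iff, Set.mem_setOf_eq]
        constructor
        · rintro ⟨h1, h2⟩
          exact ⟨h1, by rwa [← hBsum S ω h1]⟩
        · rintro ⟨h1, h2⟩
          exact ⟨h1, by rwa [hBsum S ω h1]⟩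
      have step2 : ∑ S : Finset (Fin n), ENNReal.ofReal ((∑ i ∈ S, θ i) * (m / lam)) * P (B S)
          ≤ ∑ S : Finset (Fin n), P {ω | t < ∑ i ∈ S, θ i * Xs i ω} * P (B S) :=
        Finset.sum_le_sum fun S _ => mul_le_mul_left (hSb S) _
      have step3 : ∑ S : Finset (Fin n), ENNReal.ofReal ((∑ i ∈ S, θ i) * (m / lam)) * P (B S)
          = ENNReal.ofReal (m / lam) * ∑ S : Finset (Fin n),
              (∑ i ∈ S, ENNReal.ofReal (θ i)) * P (B S) := by
        rw [Finset.mul_sum]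
        apply Finset.sum_congr rfl
        intro S _
        rw [ENNReal.ofReal_mul (Finset.sum_nonneg fun i _ => hθ i),
          ENNReal.ofReal_sum_of_nonneg (fun i _ => hθ i)]
        ring
      have step4 : ∑ S : Finset (Fin n), (∑ i ∈ S, ENNReal.ofReal (θ i)) * P (B S)
          = ∑ i, ENNReal.ofReal (θ i) * P (A i) := by
        have e1 : ∀ S : Finset (Fin n), (∑ i ∈ S, ENNReal.ofReal (θ i)) * P (B S)
            = ∑ i, (if i ∈ S then ENNReal.ofReal (θ i) * P (B S) else 0) := by
          intro S
          rw [Finset.sum_mul]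
          rw [← Finset.sum_filter]
          have : Finset.univ.filter (fun i => i ∈ S) = S := by ext i; simp
          rw [this]
        calc ∑ S : Finset (Fin n), (∑ i ∈ S, ENNReal.ofReal (θ i)) * P (B S)
            = ∑ S : Finset (Fin n), ∑ i, (if i ∈ S then ENNReal.ofReal (θ i) * P (B S) else 0) :=
              Finset.sum_congr rfl fun S _ => e1 S
          _ = ∑ i, ∑ S : Finset (Fin n), (if i ∈ S then ENNReal.ofReal (θ i) * P (B S) else 0) :=
              Finset.sum_comm
          _ = ∑ i, ENNReal.ofReal (θ i) * P (A i) := by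
              apply Finset.sum_congr rfl
              intro i _
              have e2 : ∀ S : Finset (Fin n),
                  (if i ∈ S then ENNReal.ofReal (θ i) * P (B S) else 0)
                    = ENNReal.ofReal (θ i) * P (B S ∩ A i) := by
                intro S
                by_cases hiS : i ∈ S
                · rw [if_pos hiS]
                  congr 1
                  rw [Set.inter_eq_left.2]
                  intro ω hω
                  exact (hω i).2 hiS
                · rw [if_neg hiS]
                  have : B S ∩ A i = ∅ := by
                    ext ω
                    simp only [Set.mem_inter_iff, Set.mem_empty_iff_false, iff_false]
                    rintro ⟨h1, h2⟩
                    exact hiS ((h1 i).1 h2)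
                  rw [this, measure_empty, mul_zero]
              rw [Finset.sum_congr rfl fun S _ => e2 S, ← Finset.mul_sum,
                ← hpart (A i) (hAmeas i)]
      calc ENNReal.ofReal m * P A₀
          = ENNReal.ofReal (m / lam) * (ENNReal.ofReal lam * P A₀) := by
            rw [← mul_assoc, ← ENNReal.ofReal_mul (by positivity)]
            rw [div_mul_cancel₀ m hlam0.ne']
        _ = ENNReal.ofReal (m / lam) * ∑ i, ENNReal.ofReal (θ i) * P (A i) := by rw [hPA]
        _ = ENNReal.ofReal (m / lam) * ∑ S : Finset (Fin n),
              (∑ i ∈ S, ENNReal.ofReal (θ i)) * P (B S) := by rw [step4]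
        _ = ∑ S : Finset (Fin n), ENNReal.ofReal ((∑ i ∈ S, θ i) * (m / lam)) * P (B S) :=
            step3.symm
        _ ≤ ∑ S : Finset (Fin n), P {ω | t < ∑ i ∈ S, θ i * Xs i ω} * P (B S) := step2
        _ = P {ω | t < ∑ i, θ i * Xs i ω * (A i).indicator (fun _ => (1:ℝ)) ω} := step1.symm
    exact le_trans hLHS hRHS
end

section
/- Let X₁, X₂ be iid Pareto(α) with α ∈ (0,1], and let A₁, A₂ be events with ℙ(A₁) = ℙ(A₂), independent of (X₁,X₂). Then X₁·𝟙_{A₁} ≤_st (1/2)X₁𝟙_{A₁} + (1/2)X₂𝟙_{A₂}. -/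
open MeasureTheory ProbabilityTheory Set
open scoped ENNReal

lemma amgm13 {x α : ℝ} (hx : 0 ≤ x) (h0 : 0 ≤ α) (h1 : α ≤ 1) :
    x ^ α ≤ α * x + (1 - α) := by
  have := Real.geom_mean_le_arith_mean2_weighted h0 (by linarith : (0:ℝ) ≤ 1 - α)
    hx (zero_le_one) (by ring)
  simpa using this

lemma core13 {α t : ℝ} (hα0 : 0 < α) (hα1 : α ≤ 1) (ht : 1 ≤ t) :
    t ^ (-α) ≤ 2 * (2*t-1) ^ (-α) - ((2*t-1) ^ (-α))^2 := by
  have ht0 : (0:ℝ) < t := by linarith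
  have hc1 : (1:ℝ) ≤ 2*t-1 := by linarith
  have hc0 : (0:ℝ) < 2*t-1 := by linarith
  set c := 2*t-1 with hc
  have hv0 : 0 ≤ c ^ (-α) := Real.rpow_nonneg hc0.le _
  have hu : t ^ (-α) = c ^ (-α) * (c/t) ^ α := by
    rw [Real.div_rpow hc0.le ht0.le, Real.rpow_neg hc0.le, Real.rpow_neg ht0.le]
    field_simp
  have h1 : (c/t) ^ α ≤ α * (c/t) + (1-α) :=
    amgm13 (by positivity) hα0.le hα1
  have h2 : c ^ (-α) ≤ α * (1/c) + (1-α) := by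
    have : c ^ (-α) = (1/c) ^ α := by
      rw [one_div, Real.inv_rpow hc0.le, Real.rpow_neg hc0.le]
    rw [this]
    exact amgm13 (by positivity) hα0.le hα1
  have hsum : (c/t) ^ α + c ^ (-α) ≤ 2 := by
    have htc : 1/c ≤ 1/t := by
      apply one_div_le_one_div_of_le ht0; linarith
    have : α * (c/t) + (1-α) + (α * (1/c) + (1-α)) ≤ 2 := by
      have hct : c/t = 2 - 1/t := by field_simp; linarith
      rw [hct]
      have h1t : 1/t ≤ 1 := by rw [div_le_one ht0]; exact ht
      nlinarith [hα0.le]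
    linarith
  calc t ^ (-α) = c ^ (-α) * (c/t) ^ α := hu
    _ ≤ c ^ (-α) * (2 - c ^ (-α)) := by
        apply mul_le_mul_of_nonneg_left _ hv0; linarith
    _ = 2 * c ^ (-α) - (c ^ (-α))^2 := by ring

lemma half_le_tail13 {α s : ℝ} (hα0 : 0 < α) (hα1 : α ≤ 1) (hs1 : 1 ≤ s) (hs2 : s ≤ 2) :
    (1:ℝ)/2 ≤ s ^ (-α) := by
  have h1 : s ^ α ≤ 2 := by
    calc s ^ α ≤ 2 ^ α := Real.rpow_le_rpow (by linarith) hs2 hα0.le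
      _ ≤ 2 ^ (1:ℝ) := Real.rpow_le_rpow_of_exponent_le one_le_two hα1
      _ = 2 := Real.rpow_one 2
  have h2 : (0:ℝ) < s ^ α := Real.rpow_pos_of_pos (by linarith) _
  rw [Real.rpow_neg (by linarith)]
  rw [← one_div]
  exact one_div_le_one_div_of_le h2 h1

/-- Two catastrophic losses triggered with equal probabilities: for iid Pareto(α),
`α ∈ (0,1]`, and events `A₁, A₂` with `P(A₁) = P(A₂)` independent of `(X₁, X₂)`,
`X₁·𝟙_{A₁} ≤_st ½X₁𝟙_{A₁} + ½X₂𝟙_{A₂}`. -/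
theorem stmt13 {Ω : Type*} [MeasurableSpace Ω] (P : Measure Ω) [IsProbabilityMeasure P]
    (α : ℝ) (hα : α ∈ Set.Ioc (0:ℝ) 1)
    (X₁ X₂ : Ω → ℝ) (hX₁ : IsPareto P X₁ α) (hX₂ : IsPareto P X₂ α)
    (hind : IndepFun X₁ X₂ P)
    (A₁ A₂ : Set Ω) (hA₁ : MeasurableSet A₁) (hA₂ : MeasurableSet A₂)
    (hPA : P A₁ = P A₂)
    (hindA : IndepFun (fun ω => (X₁ ω, X₂ ω))
      (fun ω => (A₁.indicator (fun _ => (1:ℝ)) ω, A₂.indicator (fun _ => (1:ℝ)) ω)) P) :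
    ∀ t : ℝ, P {ω | t < X₁ ω * A₁.indicator (fun _ => (1:ℝ)) ω}
      ≤ P {ω | t < (1/2) * X₁ ω * A₁.indicator (fun _ => (1:ℝ)) ω
          + (1/2) * X₂ ω * A₂.indicator (fun _ => (1:ℝ)) ω} := by
  obtain ⟨hα0, hα1⟩ := hα
  obtain ⟨mX₁, hX₁1, hX₁t⟩ := hX₁
  obtain ⟨mX₂, hX₂1, hX₂t⟩ := hX₂
  intro t
  set I₁ : Ω → ℝ := A₁.indicator (fun _ => (1:ℝ)) with hI₁def
  set I₂ : Ω → ℝ := A₂.indicator (fun _ => (1:ℝ)) with hI₂def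
  have hI₁mem : ∀ ω ∈ A₁, I₁ ω = 1 := fun ω h => Set.indicator_of_mem h _
  have hI₁nmem : ∀ ω ∉ A₁, I₁ ω = 0 := fun ω h => Set.indicator_of_notMem h _
  have hI₂mem : ∀ ω ∈ A₂, I₂ ω = 1 := fun ω h => Set.indicator_of_mem h _
  have hI₂nmem : ∀ ω ∉ A₂, I₂ ω = 0 := fun ω h => Set.indicator_of_notMem h _
  -- conull sets
  have mS₁ : MeasurableSet {ω | 1 ≤ X₁ ω} := measurableSet_le measurable_const mX₁
  have mS₂ : MeasurableSet {ω | 1 ≤ X₂ ω} := measurableSet_le measurable_const mX₂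
  have hS₁c : P {ω | 1 ≤ X₁ ω}ᶜ = 0 := by
    rw [measure_compl mS₁ (measure_ne_top _ _), measure_univ, hX₁1, tsub_self]
  have hS₂c : P {ω | 1 ≤ X₂ ω}ᶜ = 0 := by
    rw [measure_compl mS₂ (measure_ne_top _ _), measure_univ, hX₂1, tsub_self]
  set G : Set Ω := {ω | 1 ≤ X₁ ω} ∩ {ω | 1 ≤ X₂ ω} with hGdef
  have hGc : P Gᶜ = 0 := by
    rw [hGdef, Set.compl_inter]
    exact measure_union_null hS₁c hS₂c
  have mG : MeasurableSet G := mS₁.inter mS₂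
  have hG1 : P G = 1 := by
    have h := measure_add_measure_compl mG (μ := P)
    rw [hGc, add_zero, measure_univ] at h
    exact h
  -- key independence tool
  have key : ∀ (B T : Set (ℝ×ℝ)), MeasurableSet B → MeasurableSet T →
      P ((fun ω => (X₁ ω, X₂ ω)) ⁻¹' B ∩ (fun ω => (I₁ ω, I₂ ω)) ⁻¹' T)
        = P ((fun ω => (X₁ ω, X₂ ω)) ⁻¹' B) * P ((fun ω => (I₁ ω, I₂ ω)) ⁻¹' T) :=
    fun B T hB hT => hindA.measure_inter_preimage_eq_mul B T hB hT
  -- indicator preimage identities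
  have hv1 : ∀ ω, (I₁ ω = 1 ↔ ω ∈ A₁) := by
    intro ω; by_cases h : ω ∈ A₁ <;> simp [hI₁mem, hI₁nmem, h]
  have hv2 : ∀ ω, (I₂ ω = 1 ↔ ω ∈ A₂) := by
    intro ω; by_cases h : ω ∈ A₂ <;> simp [hI₂mem, hI₂nmem, h]
  have hw1 : ∀ ω, (I₁ ω = 0 ↔ ω ∉ A₁) := by
    intro ω; by_cases h : ω ∈ A₁ <;> simp [hI₁mem, hI₁nmem, h]
  have hw2 : ∀ ω, (I₂ ω = 0 ↔ ω ∉ A₂) := by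
    intro ω; by_cases h : ω ∈ A₂ <;> simp [hI₂mem, hI₂nmem, h]
  have g11 : (fun ω => (I₁ ω, I₂ ω)) ⁻¹' (({1} : Set ℝ) ×ˢ ({1} : Set ℝ)) = A₁ ∩ A₂ := by
    ext ω
    simp only [Set.mem_preimage, Set.mem_prod, Set.mem_singleton_iff, Set.mem_inter_iff]
    rw [hv1 ω, hv2 ω]
  have g10 : (fun ω => (I₁ ω, I₂ ω)) ⁻¹' (({1} : Set ℝ) ×ˢ ({0} : Set ℝ)) = A₁ ∩ A₂ᶜ := by
    ext ω
    simp only [Set.mem_preimage, Set.mem_prod, Set.mem_singleton_iff, Set.mem_inter_iff,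
      Set.mem_compl_iff]
    rw [hv1 ω, hw2 ω]
  have g01 : (fun ω => (I₁ ω, I₂ ω)) ⁻¹' (({0} : Set ℝ) ×ˢ ({1} : Set ℝ)) = A₁ᶜ ∩ A₂ := by
    ext ω
    simp only [Set.mem_preimage, Set.mem_prod, Set.mem_singleton_iff, Set.mem_inter_iff,
      Set.mem_compl_iff]
    rw [hw1 ω, hv2 ω]
  have g1u : (fun ω => (I₁ ω, I₂ ω)) ⁻¹' (({1} : Set ℝ) ×ˢ (Set.univ : Set ℝ)) = A₁ := by
    ext ω
    simp only [Set.mem_preimage, Set.mem_prod, Set.mem_singleton_iff, Set.mem_univ, and_true]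
    exact hv1 ω
  -- measure of events
  set a : ℝ≥0∞ := P (A₁ ∩ A₂) with hadef
  set b : ℝ≥0∞ := P (A₁ ∩ A₂ᶜ) with hbdef
  have hab : P A₁ = a + b := by
    rw [hadef, hbdef, ← Set.diff_eq]
    exact (measure_inter_add_diff A₁ hA₂).symm
  have hcb : P (A₁ᶜ ∩ A₂) = b := by
    have h2 : P A₂ = a + P (A₁ᶜ ∩ A₂) := by
      have h := measure_inter_add_diff (μ := P) A₂ hA₁
      have e1 : A₂ ∩ A₁ = A₁ ∩ A₂ := Set.inter_comm _ _
      have e2 : A₂ \ A₁ = A₁ᶜ ∩ A₂ := by ext ω; simp [Set.mem_diff, and_comm]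
      rw [e1, e2] at h
      rw [hadef]
      exact h.symm
    have ha_ne : a ≠ ⊤ := by rw [hadef]; exact measure_ne_top _ _
    have h3 : a + b = a + P (A₁ᶜ ∩ A₂) := by rw [← hab, hPA, h2]
    exact ((ENNReal.add_right_inj ha_ne).mp h3).symm
  -- case t < 0
  rcases lt_or_ge t 0 with ht0 | ht0
  · have hR1 : G ⊆ {ω | t < (1/2) * X₁ ω * I₁ ω + (1/2) * X₂ ω * I₂ ω} := by
      intro ω hω
      obtain ⟨h1, h2⟩ := hω
      simp only [Set.mem_setOf_eq] at h1 h2 ⊢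
      have i1 : 0 ≤ I₁ ω := Set.indicator_nonneg (fun _ _ => zero_le_one) ω
      have i2 : 0 ≤ I₂ ω := Set.indicator_nonneg (fun _ _ => zero_le_one) ω
      nlinarith
    calc P {ω | t < X₁ ω * I₁ ω} ≤ 1 := prob_le_one
      _ = P G := hG1.symm
      _ ≤ _ := measure_mono hR1
  -- now t ≥ 0 : LHS identity
  have hLset : {ω | t < X₁ ω * I₁ ω} = (fun ω => (X₁ ω, X₂ ω)) ⁻¹' (Set.Ioi t ×ˢ Set.univ)
      ∩ (fun ω => (I₁ ω, I₂ ω)) ⁻¹' (({1} : Set ℝ) ×ˢ (Set.univ : Set ℝ)) := by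
    ext ω
    by_cases h : ω ∈ A₁
    · simp [Set.mem_prod, hI₁mem ω h, hv1, h]
    · simp only [Set.mem_setOf_eq, hI₁nmem ω h, mul_zero, Set.mem_inter_iff,
        Set.mem_preimage, Set.mem_prod, Set.mem_Ioi, Set.mem_univ, and_true,
        Set.mem_singleton_iff]
      constructor
      · intro hh; exact absurd hh (not_lt.mpr ht0)
      · intro hh; exact absurd hh.2 (by norm_num)
  -- preimage identity for X-events
  have fIoi1 : ∀ s : ℝ, (fun ω => (X₁ ω, X₂ ω)) ⁻¹' (Set.Ioi s ×ˢ Set.univ)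
      = {ω | s < X₁ ω} := by intro s; ext ω; simp
  have fIoi2 : ∀ s : ℝ, (fun ω => (X₁ ω, X₂ ω)) ⁻¹' ((Set.univ : Set ℝ) ×ˢ Set.Ioi s)
      = {ω | s < X₂ ω} := by intro s; ext ω; simp
  have hLval : P {ω | t < X₁ ω * I₁ ω} = P {ω | t < X₁ ω} * (a + b) := by
    rw [hLset, key _ _ ((measurableSet_Ioi).prod MeasurableSet.univ)
      ((measurableSet_singleton _).prod MeasurableSet.univ), g1u, ← hab, fIoi1]
  rw [hLval]
  -- case 0 ≤ t < 1
  rcases lt_or_ge t 1 with ht1 | ht1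
  · -- P {t < X₁} = 1
    have htail1 : P {ω | t < X₁ ω} = 1 := by
      have hsub : {ω | 1 ≤ X₁ ω} ⊆ {ω | t < X₁ ω} :=
        fun ω h => lt_of_lt_of_le ht1 h
      exact le_antisymm prob_le_one (hX₁1 ▸ measure_mono hsub)
    rw [htail1, one_mul]
    -- events
    set Ea := (fun ω => (X₁ ω, X₂ ω)) ⁻¹' ((Set.Ici 1 ×ˢ Set.Ici 1) : Set (ℝ×ℝ))
        ∩ (A₁ ∩ A₂) with hEadef
    set Eb := (fun ω => (X₁ ω, X₂ ω)) ⁻¹' (Set.Ioi (2*t) ×ˢ Set.univ) ∩ (A₁ ∩ A₂ᶜ) with hEbdef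
    set Ec := (fun ω => (X₁ ω, X₂ ω)) ⁻¹' ((Set.univ : Set ℝ) ×ˢ Set.Ioi (2*t))
        ∩ (A₁ᶜ ∩ A₂) with hEcdef
    have hEaR : Ea ⊆ {ω | t < (1/2) * X₁ ω * I₁ ω + (1/2) * X₂ ω * I₂ ω} := by
      intro ω hω
      obtain ⟨hf, h1, h2⟩ := hω
      simp only [Set.mem_preimage, Set.mem_prod, Set.mem_Ici] at hf
      simp only [Set.mem_setOf_eq, hI₁mem ω h1, hI₂mem ω h2, mul_one]
      obtain ⟨p1, p2⟩ := hf
      linarith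
    have hEbR : Eb ⊆ {ω | t < (1/2) * X₁ ω * I₁ ω + (1/2) * X₂ ω * I₂ ω} := by
      intro ω hω
      obtain ⟨hf, h1, h2⟩ := hω
      simp only [Set.mem_preimage, Set.mem_prod, Set.mem_Ioi, Set.mem_univ, and_true] at hf
      simp only [Set.mem_setOf_eq, hI₁mem ω h1, hI₂nmem ω h2, mul_one, mul_zero, add_zero]
      linarith
    have hEcR : Ec ⊆ {ω | t < (1/2) * X₁ ω * I₁ ω + (1/2) * X₂ ω * I₂ ω} := by
      intro ω hω
      obtain ⟨hf, h1, h2⟩ := hω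
      simp only [Set.mem_preimage, Set.mem_prod, Set.mem_Ioi, Set.mem_univ, true_and] at hf
      simp only [Set.mem_setOf_eq, hI₁nmem ω h1, hI₂mem ω h2, mul_one, mul_zero, zero_add]
      linarith
    -- measures
    have hEa : P Ea = P ((fun ω => (X₁ ω, X₂ ω)) ⁻¹' ((Set.Ici 1 ×ˢ Set.Ici 1) : Set (ℝ×ℝ))) * a := by
      rw [hEadef, ← g11, key _ _ ((measurableSet_Ici).prod measurableSet_Ici)
        ((measurableSet_singleton _).prod (measurableSet_singleton _)), g11]
    have hGpre : (fun ω => (X₁ ω, X₂ ω)) ⁻¹' ((Set.Ici 1 ×ˢ Set.Ici 1) : Set (ℝ×ℝ)) = G := by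
      ext ω; simp [hGdef, Prod.le_def]
    have hEa1 : P Ea = a := by rw [hEa, hGpre, hG1, one_mul]
    have hEb : P Eb = P {ω | 2*t < X₁ ω} * b := by
      rw [hEbdef, ← g10, key _ _ ((measurableSet_Ioi).prod MeasurableSet.univ)
        ((measurableSet_singleton _).prod (measurableSet_singleton _)), g10, fIoi1]
    have hEc : P Ec = P {ω | 2*t < X₂ ω} * b := by
      rw [hEcdef, ← g01, key _ _ (MeasurableSet.univ.prod measurableSet_Ioi)
        ((measurableSet_singleton _).prod (measurableSet_singleton _)), g01, fIoi2, hcb]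
    -- tail bound : P {2t < Xᵢ} ≥ 1/2
    have htail : ∀ (X : Ω → ℝ), P {ω | 1 ≤ X ω} = 1 →
        (∀ s : ℝ, 1 ≤ s → P {ω | s < X ω} = ENNReal.ofReal (s ^ (-α))) →
        ENNReal.ofReal (1/2) ≤ P {ω | 2*t < X ω} := by
      intro X hX1 hXt
      rcases lt_or_ge (2*t) 1 with h2t | h2t
      · have hsub : {ω | 1 ≤ X ω} ⊆ {ω | 2*t < X ω} :=
          fun ω h => lt_of_lt_of_le h2t h
        calc ENNReal.ofReal (1/2) ≤ 1 := by
              rw [← ENNReal.ofReal_one]; exact ENNReal.ofReal_le_ofReal (by norm_num)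
          _ = P {ω | 1 ≤ X ω} := hX1.symm
          _ ≤ _ := measure_mono hsub
      · rw [hXt _ h2t]
        exact ENNReal.ofReal_le_ofReal (half_le_tail13 hα0 hα1 h2t (by linarith))
    -- disjointness
    have hd_ab : Disjoint Ea Eb := by
      apply Set.disjoint_left.mpr
      rintro ω ⟨_, _, h2⟩ ⟨_, _, h2'⟩; exact h2' h2
    have hd_ac : Disjoint Ea Ec := by
      apply Set.disjoint_left.mpr
      rintro ω ⟨_, h1, _⟩ ⟨_, h1', _⟩; exact h1' h1
    have hd_bc : Disjoint Eb Ec := by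
      apply Set.disjoint_left.mpr
      rintro ω ⟨_, h1, _⟩ ⟨_, h1', _⟩; exact h1' h1
    have mEb : MeasurableSet Eb :=
      ((mX₁.prodMk mX₂) ((measurableSet_Ioi).prod MeasurableSet.univ)).inter
        (hA₁.inter hA₂.compl)
    have mEc : MeasurableSet Ec :=
      ((mX₁.prodMk mX₂) (MeasurableSet.univ.prod measurableSet_Ioi)).inter
        (hA₁.compl.inter hA₂)
    have hunion : P Ea + P Eb + P Ec ≤
        P {ω | t < (1/2) * X₁ ω * I₁ ω + (1/2) * X₂ ω * I₂ ω} := by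
      have h1 : P (Ea ∪ Eb ∪ Ec) = P Ea + P Eb + P Ec := by
        rw [measure_union (hd_ac.union_left hd_bc) mEc,
          measure_union hd_ab mEb]
      rw [← h1]
      exact measure_mono (Set.union_subset (Set.union_subset hEaR hEbR) hEcR)
    refine le_trans ?_ hunion
    rw [hEa1, hEb, hEc]
    calc a + b ≤ a + (P {ω | 2*t < X₁ ω} * b + P {ω | 2*t < X₂ ω} * b) := by
          apply add_le_add_right
          have e : b = ENNReal.ofReal (1/2) * b + ENNReal.ofReal (1/2) * b := by
            rw [← add_mul, ← ENNReal.ofReal_add (by norm_num) (by norm_num)]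
            norm_num
          calc b = ENNReal.ofReal (1/2) * b + ENNReal.ofReal (1/2) * b := e
            _ ≤ _ := add_le_add (mul_le_mul_left (htail X₁ hX₁1 hX₁t) b)
                (mul_le_mul_left (htail X₂ hX₂1 hX₂t) b)
      _ = a + P {ω | 2*t < X₁ ω} * b + P {ω | 2*t < X₂ ω} * b := by ring
  · -- case 1 ≤ t
    have h2t1 : (1:ℝ) ≤ 2*t := by linarith
    set c : ℝ := 2*t - 1 with hcdef
    have hc1 : (1:ℝ) ≤ c := by linarith
    set vr : ℝ := c ^ (-α) with hvrdef
    have hvr0 : 0 ≤ vr := Real.rpow_nonneg (by linarith) _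
    have hvr1 : vr ≤ 1 := Real.rpow_le_one_of_one_le_of_nonpos hc1 (by linarith)
    have hu : P {ω | t < X₁ ω} = ENNReal.ofReal (t ^ (-α)) := hX₁t t ht1
    -- the sum-event W
    set W : Set Ω := {ω | c < X₁ ω} ∪ ({ω | X₁ ω ≤ c} ∩ {ω | c < X₂ ω}) with hWdef
    have hIic : P {ω | X₁ ω ≤ c} = 1 - ENNReal.ofReal vr := by
      have hcompl : {ω | X₁ ω ≤ c} = {ω | c < X₁ ω}ᶜ := by ext ω; simp
      rw [hcompl, measure_compl (measurableSet_lt measurable_const mX₁) (measure_ne_top _ _),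
        measure_univ, hX₁t c hc1]
    have hW2 : P ({ω | X₁ ω ≤ c} ∩ {ω | c < X₂ ω})
        = (1 - ENNReal.ofReal vr) * ENNReal.ofReal vr := by
      have h := hind.measure_inter_preimage_eq_mul (Set.Iic c) (Set.Ioi c)
        measurableSet_Iic measurableSet_Ioi
      have e1 : X₁ ⁻¹' Set.Iic c = {ω | X₁ ω ≤ c} := rfl
      have e2 : X₂ ⁻¹' Set.Ioi c = {ω | c < X₂ ω} := rfl
      rw [e1, e2] at h
      rw [h, hIic, hX₂t c hc1]
    have hPW : P W = ENNReal.ofReal (2 * vr - vr ^ 2) := by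
      have hdisj : Disjoint {ω | c < X₁ ω} ({ω | X₁ ω ≤ c} ∩ {ω | c < X₂ ω}) := by
        apply Set.disjoint_left.mpr
        rintro ω h1 ⟨h2, _⟩
        simp only [Set.mem_setOf_eq] at h1 h2
        linarith
      rw [hWdef, measure_union hdisj
        ((measurableSet_le mX₁ measurable_const).inter (measurableSet_lt measurable_const mX₂)),
        hX₁t c hc1, hW2]
      have hsub : (1 : ℝ≥0∞) - ENNReal.ofReal vr = ENNReal.ofReal (1 - vr) := by
        rw [ENNReal.ofReal_sub _ hvr0, ENNReal.ofReal_one]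
      rw [hsub, ← ENNReal.ofReal_mul (by linarith), ← ENNReal.ofReal_add hvr0 (by nlinarith)]
      congr 1
      ring
    -- events
    set Ba : Set (ℝ × ℝ) := ((Set.Ioi c ×ˢ Set.univ) ∪ (Set.Iic c ×ˢ Set.Ioi c))
        ∩ (Set.Ici 1 ×ˢ Set.Ici 1) with hBadef
    have mBa : MeasurableSet Ba :=
      (((measurableSet_Ioi).prod MeasurableSet.univ).union
        ((measurableSet_Iic).prod measurableSet_Ioi)).inter
        ((measurableSet_Ici).prod measurableSet_Ici)
    have hBapre : (fun ω => (X₁ ω, X₂ ω)) ⁻¹' Ba = W ∩ G := by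
      ext ω
      simp [hBadef, hWdef, hGdef, Set.mem_prod, Prod.le_def]
    set Ea := (fun ω => (X₁ ω, X₂ ω)) ⁻¹' Ba ∩ (A₁ ∩ A₂) with hEadef
    set Eb := (fun ω => (X₁ ω, X₂ ω)) ⁻¹' (Set.Ioi (2*t) ×ˢ Set.univ) ∩ (A₁ ∩ A₂ᶜ) with hEbdef
    set Ec := (fun ω => (X₁ ω, X₂ ω)) ⁻¹' ((Set.univ : Set ℝ) ×ˢ Set.Ioi (2*t))
        ∩ (A₁ᶜ ∩ A₂) with hEcdef
    have hEaval : P Ea = ENNReal.ofReal (2 * vr - vr ^ 2) * a := by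
      rw [hEadef, ← g11, key _ _ mBa
        ((measurableSet_singleton _).prod (measurableSet_singleton _)), g11, hBapre,
        measure_inter_conull hGc, hPW]
    have hq : P {ω | 2*t < X₁ ω} = ENNReal.ofReal ((2*t) ^ (-α)) := hX₁t _ h2t1
    have hq2 : P {ω | 2*t < X₂ ω} = ENNReal.ofReal ((2*t) ^ (-α)) := hX₂t _ h2t1
    have hEbval : P Eb = ENNReal.ofReal ((2*t) ^ (-α)) * b := by
      rw [hEbdef, ← g10, key _ _ ((measurableSet_Ioi).prod MeasurableSet.univ)
        ((measurableSet_singleton _).prod (measurableSet_singleton _)), g10, fIoi1, hq]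
    have hEcval : P Ec = ENNReal.ofReal ((2*t) ^ (-α)) * b := by
      rw [hEcdef, ← g01, key _ _ (MeasurableSet.univ.prod measurableSet_Ioi)
        ((measurableSet_singleton _).prod (measurableSet_singleton _)), g01, fIoi2, hq2, hcb]
    -- subsets of target
    have hEaR : Ea ⊆ {ω | t < (1/2) * X₁ ω * I₁ ω + (1/2) * X₂ ω * I₂ ω} := by
      intro ω hω
      obtain ⟨hf, h1, h2⟩ := hω
      rw [Set.mem_preimage, hBadef] at hf
      simp only [Set.mem_inter_iff, Set.mem_union, Set.mem_prod, Set.mem_Ioi, Set.mem_Iic,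
        Set.mem_Ici, Set.mem_univ, and_true, true_and] at hf
      obtain ⟨hor, hg1, hg2⟩ := hf
      simp only [Set.mem_setOf_eq, hI₁mem ω h1, hI₂mem ω h2, mul_one]
      rcases hor with h | ⟨_, h⟩
      · rw [hcdef] at h; linarith
      · rw [hcdef] at h; linarith
    have hEbR : Eb ⊆ {ω | t < (1/2) * X₁ ω * I₁ ω + (1/2) * X₂ ω * I₂ ω} := by
      intro ω hω
      obtain ⟨hf, h1, h2⟩ := hω
      simp only [Set.mem_preimage, Set.mem_prod, Set.mem_Ioi, Set.mem_univ, and_true] at hf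
      simp only [Set.mem_setOf_eq, hI₁mem ω h1, hI₂nmem ω h2, mul_one, mul_zero, add_zero]
      linarith
    have hEcR : Ec ⊆ {ω | t < (1/2) * X₁ ω * I₁ ω + (1/2) * X₂ ω * I₂ ω} := by
      intro ω hω
      obtain ⟨hf, h1, h2⟩ := hω
      simp only [Set.mem_preimage, Set.mem_prod, Set.mem_Ioi, Set.mem_univ, true_and] at hf
      simp only [Set.mem_setOf_eq, hI₁nmem ω h1, hI₂mem ω h2, mul_one, mul_zero, zero_add]
      linarith
    -- disjointness and union
    have hd_ab : Disjoint Ea Eb := by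
      apply Set.disjoint_left.mpr
      rintro ω ⟨_, _, h2⟩ ⟨_, _, h2'⟩; exact h2' h2
    have hd_ac : Disjoint Ea Ec := by
      apply Set.disjoint_left.mpr
      rintro ω ⟨_, h1, _⟩ ⟨_, h1', _⟩; exact h1' h1
    have hd_bc : Disjoint Eb Ec := by
      apply Set.disjoint_left.mpr
      rintro ω ⟨_, h1, _⟩ ⟨_, h1', _⟩; exact h1' h1
    have mEb : MeasurableSet Eb :=
      ((mX₁.prodMk mX₂) ((measurableSet_Ioi).prod MeasurableSet.univ)).inter
        (hA₁.inter hA₂.compl)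
    have mEc : MeasurableSet Ec :=
      ((mX₁.prodMk mX₂) (MeasurableSet.univ.prod measurableSet_Ioi)).inter
        (hA₁.compl.inter hA₂)
    have hunion : P Ea + P Eb + P Ec ≤
        P {ω | t < (1/2) * X₁ ω * I₁ ω + (1/2) * X₂ ω * I₂ ω} := by
      have h1 : P (Ea ∪ Eb ∪ Ec) = P Ea + P Eb + P Ec := by
        rw [measure_union (hd_ac.union_left hd_bc) mEc, measure_union hd_ab mEb]
      rw [← h1]
      exact measure_mono (Set.union_subset (Set.union_subset hEaR hEbR) hEcR)
    refine le_trans ?_ hunion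
    rw [hEaval, hEbval, hEcval, hu]
    -- final arithmetic
    have hcore : ENNReal.ofReal (t ^ (-α)) ≤ ENNReal.ofReal (2 * vr - vr ^ 2) :=
      ENNReal.ofReal_le_ofReal (core13 hα0 hα1 ht1)
    have hq_half : ENNReal.ofReal (t ^ (-α))
        ≤ ENNReal.ofReal ((2*t) ^ (-α)) + ENNReal.ofReal ((2*t) ^ (-α)) := by
      rw [← ENNReal.ofReal_add (Real.rpow_nonneg (by linarith) _)
        (Real.rpow_nonneg (by linarith) _)]
      apply ENNReal.ofReal_le_ofReal
      have hmul : (2*t) ^ (-α) = 2 ^ (-α) * t ^ (-α) :=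
        Real.mul_rpow (by norm_num) (by linarith)
      have hhalf : (1:ℝ)/2 ≤ 2 ^ (-α) := half_le_tail13 hα0 hα1 (by norm_num) (by norm_num)
      have htnn : 0 ≤ t ^ (-α) := Real.rpow_nonneg (by linarith) _
      rw [hmul]
      nlinarith
    calc ENNReal.ofReal (t ^ (-α)) * (a + b)
        = ENNReal.ofReal (t ^ (-α)) * a + ENNReal.ofReal (t ^ (-α)) * b := by rw [mul_add]
      _ ≤ ENNReal.ofReal (2 * vr - vr ^ 2) * a
          + (ENNReal.ofReal ((2*t) ^ (-α)) + ENNReal.ofReal ((2*t) ^ (-α))) * b :=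
            add_le_add (mul_le_mul_left hcore a) (mul_le_mul_left hq_half b)
      _ = ENNReal.ofReal (2 * vr - vr ^ 2) * a + ENNReal.ofReal ((2*t) ^ (-α)) * b
          + ENNReal.ofReal ((2*t) ^ (-α)) * b := by ring
end

section
/- Let X, X₁,…,Xₙ be iid Pareto(α) with α ∈ (0,1] and (θ₁,…,θₙ) in the simplex with at least two θᵢ > 0. Then for every p ∈ (0,1), VaR_p(∑ᵢ θᵢXᵢ) > ∑ᵢ θᵢ·VaR_p(Xᵢ) = VaR_p(X); i.e., Value-at-Risk is strictly superadditive for weighted averages of iid ultra heavy-tailed Pareto losses at every level p. -/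
open MeasureTheory ProbabilityTheory Set

section Aux
open Real

lemma factor_lt {r t : ℝ} (hr : 0 < r) (h0 : 0 < t) (h1 : t < 1) :
    r / (r + t) < (r / (r + 1)) ^ t := by
  have hx : (0:ℝ) < t / r := div_pos h0 hr
  have hp : 1 < 1 / t := by rw [lt_div_iff₀ h0]; linarith
  have key : 1 + (1/t) * (t/r) < (1 + t/r) ^ (1/t) :=
    one_add_mul_self_lt_rpow_one_add (by linarith) (ne_of_gt hx) hp
  have h2 : (1:ℝ) + 1/r = 1 + (1/t) * (t/r) := by field_simp
  have h3 : ((1:ℝ) + 1/r) ^ t < ((1 + t/r) ^ (1/t)) ^ t := by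
    apply Real.rpow_lt_rpow (by positivity) _ h0
    rw [h2]; exact key
  have h4 : ((1 + t/r) ^ (1/t)) ^ t = 1 + t/r := by
    rw [← Real.rpow_mul (by positivity), one_div_mul_cancel (ne_of_gt h0), Real.rpow_one]
  rw [h4] at h3
  have h5 : r / (r + t) = (1 + t/r)⁻¹ := by field_simp
  have h6 : r / (r + 1) = ((1 + 1/r))⁻¹ := by field_simp
  rw [h5, h6, Real.inv_rpow (by positivity)]
  exact inv_strictAnti₀ (by positivity) h3

lemma prod_lt_aux {n : ℕ} (θ : Fin n → ℝ) (hθ : ∀ i, 0 ≤ θ i) (hsum : ∑ i, θ i = 1)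
    (htwo : ∃ i j, i ≠ j ∧ 0 < θ i ∧ 0 < θ j) {T : ℝ} (hT : 1 < T) :
    ∏ k ∈ Finset.univ.filter (fun k => 0 < θ k), ((T-1) / (T-1+θ k)) < 1 - 1/T := by
  obtain ⟨i, j, hij, hi, hj⟩ := htwo
  set r := T - 1 with hr'
  have hr : 0 < r := by simp [hr']; linarith
  set s := Finset.univ.filter (fun k => 0 < θ k) with hs
  have hmem : ∀ k, k ∈ s ↔ 0 < θ k := by intro k; simp [hs]
  have hsumS : ∑ k ∈ s, θ k = 1 := by
    rw [hs, Finset.sum_filter_of_ne, hsum]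
    intro x _ hx
    exact lt_of_le_of_ne (hθ x) (Ne.symm hx)
  have hlt1 : ∀ k ∈ s, θ k < 1 := by
    intro k hk
    obtain ⟨l, hkl, hl⟩ : ∃ l, k ≠ l ∧ 0 < θ l := by
      rcases eq_or_ne k i with rfl | h
      · exact ⟨j, hij, hj⟩
      · exact ⟨i, h, hi⟩
    have hpair : θ k + θ l ≤ ∑ m, θ m := by
      rw [← Finset.sum_pair hkl]
      exact Finset.sum_le_sum_of_subset_of_nonneg (Finset.subset_univ _)
        (fun m _ _ => hθ m)
    rw [hsum] at hpair; linarith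
  have hfac : ∀ k ∈ s, r / (r + θ k) < (r / (r + 1)) ^ (θ k) := by
    intro k hk
    exact factor_lt hr ((hmem k).mp hk) (hlt1 k hk)
  have hne : s.Nonempty := ⟨i, (hmem i).mpr hi⟩
  calc ∏ k ∈ s, (r / (r + θ k)) < ∏ k ∈ s, (r / (r + 1)) ^ (θ k) := by
        apply Finset.prod_lt_prod_of_nonempty _ hfac hne
        intro k hk
        have := (hmem k).mp hk
        positivity
    _ = (r / (r + 1)) ^ (∑ k ∈ s, θ k) := (Real.rpow_sum_of_pos (by positivity) _ _).symm
    _ = 1 - 1/T := by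
        rw [hsumS, Real.rpow_one, hr']
        field_simp
        rw [sub_add_cancel, mul_div_cancel_left₀ _ (by linarith : T ≠ 0)]

end Aux

/-- Value-at-Risk at level `p`: the left `p`-quantile. -/
noncomputable def VaR {Ω : Type*} [MeasurableSpace Ω] (P : Measure Ω) (Y : Ω → ℝ)
    (p : ℝ) : ℝ :=
  sInf {t : ℝ | ENNReal.ofReal p ≤ P {ω | Y ω ≤ t}}


section
variable {Ω : Type*} [MeasurableSpace Ω] {P : Measure Ω} [IsProbabilityMeasure P]

lemma cdf_lt_one {Z : Ω → ℝ} {α : ℝ} (hZ : IsPareto P Z α) {t : ℝ} (ht : t < 1) :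
    P {ω | Z ω ≤ t} = 0 := by
  obtain ⟨hm, h1, _⟩ := hZ
  have hsub : {ω | Z ω ≤ t} ⊆ {ω | 1 ≤ Z ω}ᶜ := by
    intro ω hω
    simp only [mem_compl_iff, mem_setOf_eq, not_le] at *
    linarith
  have hms : MeasurableSet {ω | 1 ≤ Z ω} := hm measurableSet_Ici
  have hc : P {ω | 1 ≤ Z ω}ᶜ = 0 := by
    rw [measure_compl hms (measure_ne_top _ _), h1, measure_univ, tsub_self]
  exact le_antisymm (le_trans (measure_mono hsub) hc.le) zero_le

lemma cdf_ge_one {Z : Ω → ℝ} {α : ℝ} (hZ : IsPareto P Z α) {t : ℝ} (hα : 0 < α) (ht : 1 ≤ t) :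
    P {ω | Z ω ≤ t} = ENNReal.ofReal (1 - t ^ (-α)) := by
  obtain ⟨hm, h1, htail⟩ := hZ
  have hset : {ω | Z ω ≤ t} = {ω | t < Z ω}ᶜ := by
    ext ω; simp [not_lt]
  have hle1 : t ^ (-α) ≤ 1 :=
    Real.rpow_le_one_of_one_le_of_nonpos ht (by linarith)
  have hms : MeasurableSet {ω | t < Z ω} := hm measurableSet_Ioi
  rw [hset, measure_compl hms (measure_ne_top _ _), measure_univ,
    htail t ht, ENNReal.ofReal_sub 1 (Real.rpow_nonneg (by linarith) _), ENNReal.ofReal_one]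

lemma var_pareto {α : ℝ} (hα : α ∈ Set.Ioc (0:ℝ) 1) {Z : Ω → ℝ} (hZ : IsPareto P Z α)
    {p : ℝ} (hp : p ∈ Set.Ioo (0:ℝ) 1) :
    VaR P Z p = (1 - p) ^ (-α⁻¹ : ℝ) := by
  obtain ⟨hα0, hα1⟩ := hα
  obtain ⟨hp0, hp1⟩ := hp
  set q : ℝ := (1 - p) ^ (-α⁻¹ : ℝ) with hq
  have h1p : 0 < 1 - p := by linarith
  have hq1 : 1 < q := by
    rw [hq, Real.one_lt_rpow_iff_of_pos h1p]
    exact Or.inr ⟨by linarith, neg_lt_zero.mpr (inv_pos.mpr hα0)⟩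
  have hqα : q ^ (-α) = 1 - p := by
    rw [hq, ← Real.rpow_mul h1p.le]
    have : (-α⁻¹) * (-α) = 1 := by
      field_simp
    rw [this, Real.rpow_one]
  have hkey : {t : ℝ | ENNReal.ofReal p ≤ P {ω | Z ω ≤ t}} = Set.Ici q := by
    ext t
    simp only [mem_setOf_eq, mem_Ici]
    constructor
    · intro h
      by_contra hlt
      push_neg at hlt
      rcases lt_or_ge t 1 with ht | ht
      · rw [cdf_lt_one hZ ht] at h
        simp at h
        linarith
      · rw [cdf_ge_one hZ hα0 ht] at h
        rw [ENNReal.ofReal_le_ofReal_iff (by nlinarith [Real.rpow_le_one_of_one_le_of_nonpos ht (by linarith : -α ≤ 0)] : (0:ℝ) ≤ 1 - t ^ (-α))] at h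
        have : q ^ (-α) < t ^ (-α) :=
          Real.rpow_lt_rpow_of_neg (by linarith) hlt (by linarith)
        rw [hqα] at this
        linarith
    · intro h
      have ht1 : (1:ℝ) ≤ t := le_trans hq1.le h
      rw [cdf_ge_one hZ hα0 ht1]
      apply ENNReal.ofReal_le_ofReal
      have : t ^ (-α) ≤ q ^ (-α) :=
        Real.rpow_le_rpow_of_nonpos (by linarith) h (by linarith)
      rw [hqα] at this
      linarith
  rw [VaR, hkey, csInf_Ici]
end

lemma tail_dominance {Ω : Type*} [MeasurableSpace Ω] (P : Measure Ω) [IsProbabilityMeasure P]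
    {n : ℕ} {α : ℝ} (hα : α ∈ Set.Ioc (0:ℝ) 1)
    {Xs : Fin n → Ω → ℝ} (hXs : ∀ i, IsPareto P (Xs i) α)
    (hind : iIndepFun Xs P)
    {θ : Fin n → ℝ} (hθ : ∀ i, 0 ≤ θ i) (hsum : ∑ i, θ i = 1)
    (htwo : ∃ i j, i ≠ j ∧ 0 < θ i ∧ 0 < θ j)
    {t : ℝ} (ht : 1 < t) :
    ENNReal.ofReal (t ^ (-α)) < P {ω | t < ∑ i, θ i * Xs i ω} := by
  obtain ⟨hα0, hα1⟩ := hα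
  have ht0 : (0:ℝ) < t := by linarith
  set T : ℝ := t ^ α with hT'
  have hT : 1 < T := (Real.one_lt_rpow_iff_of_pos ht0).mpr (Or.inl ⟨ht, hα0⟩)
  have htT : t ^ (-α) = 1 / T := by
    rw [Real.rpow_neg ht0.le, one_div]
  set s : Finset (Fin n) := Finset.univ.filter (fun k => 0 < θ k) with hs
  have hmem : ∀ k, k ∈ s ↔ 0 < θ k := by intro k; simp [hs]
  -- thresholds
  set b : Fin n → ℝ := fun k => ((T - 1 + θ k) / θ k) ^ (α⁻¹ : ℝ) with hb'
  have hratio : ∀ k ∈ s, 1 ≤ (T - 1 + θ k) / θ k := by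
    intro k hk
    have hk' := (hmem k).mp hk
    rw [le_div_iff₀ hk']
    linarith
  have hb1 : ∀ k ∈ s, 1 ≤ b k := fun k hk =>
    Real.one_le_rpow ((hratio k hk)) (by positivity)
  have hbα : ∀ k ∈ s, (b k) ^ (α : ℝ) = (T - 1 + θ k) / θ k := by
    intro k hk
    rw [hb', ← Real.rpow_mul (le_trans zero_le_one (hratio k hk)),
      inv_mul_cancel₀ (ne_of_gt hα0), Real.rpow_one]
  have hbneg : ∀ k ∈ s, (b k) ^ (-α : ℝ) = θ k / (T - 1 + θ k) := by
    intro k hk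
    have hk' := (hmem k).mp hk
    rw [Real.rpow_neg (le_trans zero_le_one (hb1 k hk)), hbα k hk, inv_div]
  -- events
  set A : Fin n → Set Ω := fun k => {ω | b k < Xs k ω} with hA'
  have hAmeas : ∀ k, MeasurableSet (A k) := fun k =>
    ((hXs k).1 measurableSet_Ioi : MeasurableSet {ω | b k < Xs k ω})
  set N : Set Ω := ⋂ m, {ω | 1 ≤ Xs m ω} with hN'
  have hNc : P Nᶜ = 0 := by
    rw [hN', Set.compl_iInter]
    refine measure_iUnion_null fun m => ?_
    have hms : MeasurableSet {ω | 1 ≤ Xs m ω} := (hXs m).1 measurableSet_Ici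
    rw [measure_compl hms (measure_ne_top _ _), (hXs m).2.1, measure_univ, tsub_self]
  set U : Set Ω := ⋃ k ∈ s, A k with hU'
  have hUmeas : MeasurableSet U :=
    MeasurableSet.biUnion s.countable_toSet (fun k _ => hAmeas k)
  -- pointwise inclusion
  have hincl : U ∩ N ⊆ {ω | t < ∑ i, θ i * Xs i ω} := by
    rintro ω ⟨hωU, hωN⟩
    simp only [hU', Set.mem_iUnion] at hωU
    obtain ⟨k, hk, hωk⟩ := hωU
    have hx1 : ∀ m, 1 ≤ Xs m ω := fun m => Set.mem_iInter.mp hωN m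
    have hxk : b k < Xs k ω := hωk
    have hθk := (hmem k).mp hk
    have hstep1 : T < ∑ m, θ m * (Xs m ω) ^ (α:ℝ) := by
      have hsplit : ∑ m, θ m * (Xs m ω) ^ (α:ℝ)
          = θ k * (Xs k ω) ^ (α:ℝ) + ∑ m ∈ Finset.univ.erase k, θ m * (Xs m ω) ^ (α:ℝ) :=
        (Finset.add_sum_erase _ _ (Finset.mem_univ k)).symm
      have hrest : ∑ m ∈ Finset.univ.erase k, θ m
          ≤ ∑ m ∈ Finset.univ.erase k, θ m * (Xs m ω) ^ (α:ℝ) := by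
        refine Finset.sum_le_sum fun m _ => ?_
        have h1 : 1 ≤ (Xs m ω) ^ (α:ℝ) := Real.one_le_rpow (hx1 m) hα0.le
        nlinarith [hθ m]
      have herase : ∑ m ∈ Finset.univ.erase k, θ m = 1 - θ k := by
        have h := Finset.add_sum_erase Finset.univ θ (Finset.mem_univ k)
        rw [hsum] at h
        linarith
      have hkterm : T - 1 + θ k < θ k * (Xs k ω) ^ (α:ℝ) := by
        have hblt : (b k) ^ (α:ℝ) < (Xs k ω) ^ (α:ℝ) :=
          Real.rpow_lt_rpow (le_trans zero_le_one (hb1 k hk)) hxk hα0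
        rw [hbα k hk] at hblt
        calc T - 1 + θ k = θ k * ((T-1+θ k)/θ k) := by field_simp
          _ < θ k * (Xs k ω) ^ (α:ℝ) := (mul_lt_mul_iff_right₀ hθk).mpr hblt
      rw [herase] at hrest
      rw [hsplit]
      linarith
    have hinv1 : (1:ℝ) ≤ α⁻¹ := by
      have h1 : 0 < α⁻¹ := inv_pos.mpr hα0
      nlinarith [mul_inv_cancel₀ (ne_of_gt hα0)]
    have hstep2 : (∑ m, θ m * (Xs m ω) ^ (α:ℝ)) ^ (α⁻¹:ℝ) ≤ ∑ m, θ m * Xs m ω := by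
      have h := Real.rpow_arith_mean_le_arith_mean_rpow Finset.univ θ
        (fun m => (Xs m ω) ^ (α:ℝ)) (fun m _ => hθ m) hsum
        (fun m _ => Real.rpow_nonneg (le_trans zero_le_one (hx1 m)) _) hinv1
      have heq : ∀ m : Fin n, θ m * ((Xs m ω) ^ (α:ℝ)) ^ (α⁻¹:ℝ) = θ m * Xs m ω := by
        intro m
        rw [← Real.rpow_mul (le_trans zero_le_one (hx1 m)),
          mul_inv_cancel₀ (ne_of_gt hα0), Real.rpow_one]
      calc (∑ m, θ m * (Xs m ω) ^ (α:ℝ)) ^ (α⁻¹:ℝ)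
          ≤ ∑ m, θ m * ((Xs m ω) ^ (α:ℝ)) ^ (α⁻¹:ℝ) := h
        _ = ∑ m, θ m * Xs m ω := Finset.sum_congr rfl (fun m _ => heq m)
    have htT2 : T ^ (α⁻¹:ℝ) = t := by
      rw [hT', ← Real.rpow_mul ht0.le, mul_inv_cancel₀ (ne_of_gt hα0), Real.rpow_one]
    have hfin : t < (∑ m, θ m * (Xs m ω) ^ (α:ℝ)) ^ (α⁻¹:ℝ) := by
      rw [← htT2]
      exact Real.rpow_lt_rpow (by positivity) hstep1 (inv_pos.mpr hα0)
    exact lt_of_lt_of_le hfin hstep2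
  -- probability of each complement
  have hdenom : ∀ k ∈ s, (0:ℝ) < T - 1 + θ k := by
    intro k hk
    have := (hmem k).mp hk
    linarith
  have hPA : ∀ k ∈ s, P (A k) = ENNReal.ofReal (θ k / (T - 1 + θ k)) := by
    intro k hk
    rw [hA', ← hbneg k hk]
    exact (hXs k).2.2 (b k) (hb1 k hk)
  have hfrac_nonneg : ∀ k ∈ s, (0:ℝ) ≤ θ k / (T - 1 + θ k) := by
    intro k hk
    exact div_nonneg (hθ k) (hdenom k hk).le
  have hPAc : ∀ k ∈ s, P (A k)ᶜ = ENNReal.ofReal ((T-1) / (T-1+θ k)) := by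
    intro k hk
    have hid : (T-1) / (T-1+θ k) = 1 - θ k / (T - 1 + θ k) := by
      have hne : (T - 1 + θ k) ≠ 0 := (hdenom k hk).ne'
      rw [eq_sub_iff_add_eq, ← add_div, div_eq_one_iff_eq hne]
    rw [measure_compl (hAmeas k) (measure_ne_top _ _), measure_univ, hPA k hk, hid,
      ENNReal.ofReal_sub 1 (hfrac_nonneg k hk), ENNReal.ofReal_one]
  -- independence
  have hUc : Uᶜ = ⋂ k ∈ s, (A k)ᶜ := by
    simp [hU']
  have hProdU : P Uᶜ = ∏ k ∈ s, P (A k)ᶜ := by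
    rw [hUc]
    refine hind.meas_biInter (fun k hk => ?_)
    refine ⟨Set.Iic (b k), measurableSet_Iic, ?_⟩
    ext ω
    simp [hA', not_lt]
  have hUclt : P Uᶜ < ENNReal.ofReal (1 - 1/T) := by
    rw [hProdU]
    have h1 : ∏ k ∈ s, P (A k)ᶜ = ENNReal.ofReal (∏ k ∈ s, (T-1) / (T-1+θ k)) := by
      rw [ENNReal.ofReal_prod_of_nonneg (fun k hk => div_nonneg (by linarith) (hdenom k hk).le)]
      exact Finset.prod_congr rfl hPAc
    rw [h1]
    exact (ENNReal.ofReal_lt_ofReal_iff (by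
      have : 1/T < 1 := by rw [div_lt_one (by linarith)]; linarith
      linarith)).mpr (prod_lt_aux θ hθ hsum htwo hT)
  -- conclusion
  by_contra hcon
  push_neg at hcon
  have hPU : P U ≤ ENNReal.ofReal (1/T) := by
    rw [← htT]
    calc P U = P (U ∩ N) := (measure_inter_conull hNc).symm
      _ ≤ P {ω | t < ∑ i, θ i * Xs i ω} := measure_mono hincl
      _ ≤ ENNReal.ofReal (t ^ (-α)) := hcon
  have hsum1 : P U + P Uᶜ = 1 := prob_add_prob_compl hUmeas
  have hlt : P U + P Uᶜ < ENNReal.ofReal (1/T) + ENNReal.ofReal (1 - 1/T) :=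
    ENNReal.add_lt_add_of_le_of_lt (measure_ne_top _ _) hPU hUclt
  rw [hsum1, ← ENNReal.ofReal_add (by positivity) (by
      have : 1/T < 1 := by rw [div_lt_one (by linarith)]; linarith
      linarith)] at hlt
  simp at hlt


/-- Strict superadditivity of VaR at every level: for iid Pareto(α), `α ∈ (0,1]`, and
simplex weights with at least two positive components,
`VaR_p(∑ θᵢXᵢ) > ∑ θᵢ VaR_p(Xᵢ) = VaR_p(X)` for every `p ∈ (0,1)`. -/
theorem stmt14 {Ω : Type*} [MeasurableSpace Ω] (P : Measure Ω) [IsProbabilityMeasure P]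
    (n : ℕ) (α : ℝ) (hα : α ∈ Set.Ioc (0:ℝ) 1)
    (X : Ω → ℝ) (Xs : Fin n → Ω → ℝ)
    (hX : IsPareto P X α) (hXs : ∀ i, IsPareto P (Xs i) α)
    (hind : iIndepFun Xs P)
    (θ : Fin n → ℝ) (hθ : ∀ i, 0 ≤ θ i) (hsum : ∑ i, θ i = 1)
    (htwo : ∃ i j, i ≠ j ∧ 0 < θ i ∧ 0 < θ j) :
    ∀ p ∈ Set.Ioo (0:ℝ) 1,
      (∑ i, θ i * VaR P (Xs i) p = VaR P X p) ∧
      ∑ i, θ i * VaR P (Xs i) p < VaR P (fun ω => ∑ i, θ i * Xs i ω) p := by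
  intro p hp
  obtain ⟨hα0, hα1⟩ := hα
  obtain ⟨hp0, hp1⟩ := hp
  set q : ℝ := (1 - p) ^ (-α⁻¹ : ℝ) with hq
  have h1p : 0 < 1 - p := by linarith
  have hq1 : 1 < q := by
    rw [hq, Real.one_lt_rpow_iff_of_pos h1p]
    exact Or.inr ⟨by linarith, neg_lt_zero.mpr (inv_pos.mpr hα0)⟩
  have hqα : q ^ (-α) = 1 - p := by
    rw [hq, ← Real.rpow_mul h1p.le]
    have h : (-α⁻¹) * (-α) = 1 := by field_simp
    rw [h, Real.rpow_one]
  have hVX : VaR P X p = q := var_pareto ⟨hα0, hα1⟩ hX ⟨hp0, hp1⟩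
  have hVs : ∀ i, VaR P (Xs i) p = q := fun i => var_pareto ⟨hα0, hα1⟩ (hXs i) ⟨hp0, hp1⟩
  have hsum' : ∑ i, θ i * VaR P (Xs i) p = q := by
    have : ∀ i ∈ Finset.univ, θ i * VaR P (Xs i) p = θ i * q := fun i _ => by rw [hVs i]
    rw [Finset.sum_congr rfl this, ← Finset.sum_mul, hsum, one_mul]
  refine ⟨by rw [hsum', hVX], ?_⟩
  rw [hsum']
  set S : Ω → ℝ := fun ω => ∑ i, θ i * Xs i ω with hS'
  have hSmeas : Measurable S :=
    Finset.measurable_sum _ (fun i _ => measurable_const.mul (hXs i).1)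
  have hdom := tail_dominance P ⟨hα0, hα1⟩ hXs hind hθ hsum htwo hq1
  rw [hqα] at hdom
  have hcdfq : P {ω | S ω ≤ q} < ENNReal.ofReal p := by
    by_contra hcon
    push_neg at hcon
    have hcompl : {ω | q < S ω} = {ω | S ω ≤ q}ᶜ := by ext ω; simp [not_le]
    have h1 : P {ω | S ω ≤ q} + P {ω | S ω ≤ q}ᶜ = 1 :=
      prob_add_prob_compl (hSmeas measurableSet_Iic)
    have hlt : ENNReal.ofReal p + ENNReal.ofReal (1 - p)
        < P {ω | S ω ≤ q} + P {ω | q < S ω} :=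
      ENNReal.add_lt_add_of_le_of_lt ENNReal.ofReal_ne_top hcon hdom
    rw [hcompl, h1, ← ENNReal.ofReal_add hp0.le h1p.le] at hlt
    simp at hlt
  set A : ℕ → Set Ω := fun m => {ω | S ω ≤ q + 1/(m+1)} with hA'
  have hAm : ∀ m, NullMeasurableSet (A m) P :=
    fun m => (hSmeas measurableSet_Iic).nullMeasurableSet
  have hAanti : Antitone A := by
    intro m m' hmm ω hω
    simp only [hA', mem_setOf_eq] at *
    have hc : ((m:ℝ)+1) ≤ ((m':ℝ)+1) := by
      have : (m:ℝ) ≤ (m':ℝ) := Nat.cast_le.mpr hmm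
      linarith
    have : (1:ℝ)/(m'+1) ≤ 1/(m+1) := by
      apply one_div_le_one_div_of_le (by positivity) hc
    linarith
  have hInter : ⋂ m, A m = {ω | S ω ≤ q} := by
    ext ω
    simp only [mem_iInter, hA', mem_setOf_eq]
    constructor
    · intro h
      by_contra hgt
      push_neg at hgt
      obtain ⟨m, hm⟩ := exists_nat_one_div_lt (by linarith : (0:ℝ) < S ω - q)
      have := h m
      linarith
    · intro h m
      have : (0:ℝ) < 1/(m+1) := by positivity
      linarith
  have htend := tendsto_measure_iInter_atTop hAm hAanti ⟨0, measure_ne_top _ _⟩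
  rw [hInter] at htend
  obtain ⟨m, hm⟩ := (htend.eventually_lt_const hcdfq).exists
  have hne : ∃ u : ℝ, ENNReal.ofReal p ≤ P {ω | S ω ≤ u} := by
    set B : ℕ → Set Ω := fun m => {ω | S ω ≤ m} with hB'
    have hBmono : Monotone B := by
      intro a b hab ω hω
      simp only [hB', mem_setOf_eq] at *
      exact le_trans hω (Nat.cast_le.mpr hab)
    have ht2 := tendsto_measure_iUnion_atTop (μ := P) hBmono
    have hBU : ⋃ m, B m = univ := by
      ext ω
      simp only [mem_iUnion, mem_univ, iff_true, hB', mem_setOf_eq]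
      exact exists_nat_ge (S ω)
    rw [hBU, measure_univ] at ht2
    obtain ⟨m, hm2⟩ := (ht2.eventually_const_lt (ENNReal.ofReal_lt_one.mpr hp1)).exists
    exact ⟨m, hm2.le⟩
  obtain ⟨u0, hu0⟩ := hne
  have hlow : ∀ u ∈ {u : ℝ | ENNReal.ofReal p ≤ P {ω | S ω ≤ u}}, q + 1/(m+1) ≤ u := by
    intro u hu
    by_contra hcon
    push_neg at hcon
    have hsub : {ω | S ω ≤ u} ⊆ A m := fun ω hω => le_trans hω hcon.le
    exact absurd (le_trans hu (measure_mono hsub)) (not_le.mpr hm)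
  have hfin : q + 1/(m+1) ≤ VaR P S p := le_csInf ⟨u0, hu0⟩ hlow
  have hpos : (0:ℝ) < 1/(m+1) := by positivity
  linarith
end

section
/- Let ξ ≥ 1, β₁,…,βₙ > 0, and let Y₁,…,Yₙ be independent with Yᵢ following the generalized Pareto distribution G_{ξ,βᵢ}. Let Y follow G_{ξ,β} with β = ∑ᵢ βᵢ. Then Y ≤_st ∑ᵢ Yᵢ. -/
open MeasureTheory ProbabilityTheory Set

/-- `Y` follows the generalized Pareto distribution `G_{ξ,β}`:
`P(Y > x) = (1 + ξx/β)^{-1/ξ}` for `x ≥ 0`, and `Y ≥ 0` almost surely. -/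
def IsGPD {Ω : Type*} [MeasurableSpace Ω] (P : Measure Ω) (Y : Ω → ℝ) (ξ β : ℝ) : Prop :=
  Measurable Y ∧ P {ω | 0 ≤ Y ω} = 1 ∧
    ∀ x : ℝ, 0 ≤ x → P {ω | x < Y ω} = ENNReal.ofReal ((1 + ξ * x / β) ^ (-1/ξ))

section Aux
open Real

/-- Derivative of `F λ = λ * log (1 - (1+s*λ)^(-α))` and its sign. -/
lemma F_hasDeriv {α s : ℝ} (hα : 0 < α) (hs : 0 < s) {l : ℝ} (hl : 0 < l) :
    HasDerivAt (fun l : ℝ => l * Real.log (1 - (1 + s * l) ^ (-α)))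
      (Real.log (1 - (1 + s * l) ^ (-α)) +
        l * ((α * (1 + s * l) ^ (-α - 1) * s) / (1 - (1 + s * l) ^ (-α)))) l := by
  have hu : (0:ℝ) < 1 + s * l := by positivity
  have hu1 : (1:ℝ) < 1 + s * l := by nlinarith
  have hy1 : (1 + s * l) ^ (-α) < 1 := by
    rw [rpow_neg hu.le]
    have : (1:ℝ) < (1 + s * l) ^ α := one_lt_rpow_iff_of_pos hu |>.2 (Or.inl ⟨hu1, hα⟩)
    rw [inv_lt_one_iff₀]; right; exact this
  have hg : (0:ℝ) < 1 - (1 + s * l) ^ (-α) := by linarith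
  have h1 : HasDerivAt (fun l : ℝ => 1 + s * l) s l := by
    simpa using ((hasDerivAt_id l).const_mul s).const_add 1
  have h2 : HasDerivAt (fun l : ℝ => (1 + s * l) ^ (-α))
      (-α * (1 + s * l) ^ (-α - 1) * s) l := by
    have := (Real.hasDerivAt_rpow_const (x := 1 + s * l) (p := -α) (Or.inl hu.ne')).comp l h1
    simpa [Function.comp_def] using this
  have h3 : HasDerivAt (fun l : ℝ => 1 - (1 + s * l) ^ (-α))
      (α * (1 + s * l) ^ (-α - 1) * s) l := by
    simpa using h2.const_sub 1
  have h4 : HasDerivAt (fun l : ℝ => Real.log (1 - (1 + s * l) ^ (-α)))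
      ((α * (1 + s * l) ^ (-α - 1) * s) / (1 - (1 + s * l) ^ (-α))) l := h3.log hg.ne'
  simpa [Pi.mul_def] using (hasDerivAt_id l).mul h4

lemma F_deriv_nonpos {α s : ℝ} (hα : 0 < α) (hα1 : α ≤ 1) (hs : 0 < s) {l : ℝ} (hl : 0 < l) :
    Real.log (1 - (1 + s * l) ^ (-α)) +
      l * ((α * (1 + s * l) ^ (-α - 1) * s) / (1 - (1 + s * l) ^ (-α))) ≤ 0 := by
  set u := 1 + s * l with hu_def
  have hu : (0:ℝ) < u := by positivity
  have hu1 : (1:ℝ) < u := by simp only [hu_def]; nlinarith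
  set y := u ^ (-α) with hy_def
  have hy0 : 0 < y := rpow_pos_of_pos hu _
  have hy1 : y < 1 := by
    rw [hy_def, rpow_neg hu.le, inv_lt_one_iff₀]
    right; exact one_lt_rpow_iff_of_pos hu |>.2 (Or.inl ⟨hu1, hα⟩)
  have hg : (0:ℝ) < 1 - y := by linarith
  -- log (1 - y) ≤ -y
  have hlog : Real.log (1 - y) ≤ -y := by
    have := Real.log_le_sub_one_of_pos hg
    linarith
  -- l * (α * u^(-α-1) * s) ≤ y * (1 - y)
  have hkey : l * (α * u ^ (-α - 1) * s) ≤ y * (1 - y) := by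
    have huinv : u ^ (-α - 1) = y / u := by
      rw [hy_def, ← rpow_sub_one hu.ne']
    have hls : l * s = u - 1 := by rw [hu_def]; ring
    have hbern : α * (1 - 1/u) ≤ 1 - y := by
      have h1u : -1 ≤ 1/u - 1 := by
        have : 0 < 1/u := by positivity
        linarith
      have := rpow_one_add_le_one_add_mul_self (s := 1/u - 1) h1u hα.le hα1
      have h1 : (1 + (1/u - 1)) = 1/u := by ring
      rw [h1] at this
      have h2 : (1/u : ℝ) ^ α = y := by
        rw [one_div, ← rpow_neg_one u, ← rpow_mul hu.le, hy_def]
        norm_num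
      rw [h2] at this
      linarith
    calc l * (α * u ^ (-α - 1) * s) = α * (1 - 1/u) * y := by
          rw [huinv]
          have : l * (α * (y / u) * s) = α * (l * s) * y / u := by ring
          rw [this, hls]
          field_simp
      _ ≤ (1 - y) * y := by
          apply mul_le_mul_of_nonneg_right hbern hy0.le
      _ = y * (1 - y) := by ring
  have hdiv : l * ((α * u ^ (-α - 1) * s) / (1 - y)) ≤ y := by
    rw [mul_div_assoc']
    rw [div_le_iff₀ hg]
    calc l * (α * u ^ (-α - 1) * s) ≤ y * (1 - y) := hkey
      _ = y * (1 - y) := rfl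
  calc Real.log (1 - y) + l * ((α * u ^ (-α - 1) * s) / (1 - y)) ≤ -y + y := by
        exact add_le_add hlog hdiv
    _ = 0 := by ring

lemma aux_rpow_neg_lt_one {u α : ℝ} (hu : 1 < u) (hα : 0 < α) : u ^ (-α) < 1 := by
  have hu0 : (0:ℝ) < u := lt_trans zero_lt_one hu
  rw [rpow_neg hu0.le, inv_lt_one_iff₀]
  right; exact one_lt_rpow_iff_of_pos hu0 |>.2 (Or.inl ⟨hu, hα⟩)

lemma main_ineq {α c s : ℝ} (hα : 0 < α) (hα1 : α ≤ 1) (hc : 0 < c) (hc1 : c ≤ 1)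
    (hs : 0 ≤ s) : 1 - (1 + s / c) ^ (-α) ≤ (1 - (1 + s) ^ (-α)) ^ c := by
  rcases hs.eq_or_lt with rfl | hs
  · simp [Real.zero_rpow hc.ne', Real.one_rpow]
  set F := fun l : ℝ => l * Real.log (1 - (1 + s * l) ^ (-α)) with hF
  have hanti : AntitoneOn F (Ici 1) := by
    apply antitoneOn_of_deriv_nonpos (convex_Ici 1)
    · intro l hl
      exact (F_hasDeriv hα hs (lt_of_lt_of_le zero_lt_one hl)).continuousAt.continuousWithinAt
    · intro l hl
      rw [interior_Ici] at hl
      exact (F_hasDeriv hα hs (lt_trans zero_lt_one hl)).differentiableAt.differentiableWithinAt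
    · intro l hl
      rw [interior_Ici] at hl
      have h0 : (0:ℝ) < l := lt_trans zero_lt_one hl
      rw [(F_hasDeriv hα hs h0).deriv]
      exact F_deriv_nonpos hα hα1 hs h0
  have h1c : (1:ℝ) ≤ 1/c := one_le_one_div hc hc1
  have hmono := hanti (self_mem_Ici) (mem_Ici.2 h1c) h1c
  have hsc : s * (1/c) = s / c := by field_simp
  rw [hF] at hmono
  simp only [one_mul, mul_one, hsc] at hmono
  -- hmono : 1/c * log (1 - (1+s/c)^(-α)) ≤ log (1 - (1+s)^(-α))
  have hA : (0:ℝ) < 1 - (1 + s / c) ^ (-α) := by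
    have : (1:ℝ) < 1 + s / c := by
      have : 0 < s / c := div_pos hs hc
      linarith
    linarith [aux_rpow_neg_lt_one this hα]
  have hB : (0:ℝ) < 1 - (1 + s) ^ (-α) := by
    have h1 : (1:ℝ) < 1 + s := by linarith
    linarith [aux_rpow_neg_lt_one h1 hα]
  have hlog : Real.log (1 - (1 + s / c) ^ (-α)) ≤ c * Real.log (1 - (1 + s) ^ (-α)) := by
    calc Real.log (1 - (1 + s / c) ^ (-α))
        = c * (1/c * Real.log (1 - (1 + s / c) ^ (-α))) := by field_simp
      _ ≤ c * Real.log (1 - (1 + s) ^ (-α)) :=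
          mul_le_mul_of_nonneg_left hmono hc.le
  calc 1 - (1 + s / c) ^ (-α) = Real.exp (Real.log (1 - (1 + s / c) ^ (-α))) :=
        (Real.exp_log hA).symm
    _ ≤ Real.exp (Real.log (1 - (1 + s) ^ (-α)) * c) := by
        apply Real.exp_le_exp.2; linarith [hlog]
    _ = (1 - (1 + s) ^ (-α)) ^ c := (Real.rpow_def_of_pos hB c).symm

lemma prod_ineq_s16 {n : ℕ} (hn : n ≠ 0) {ξ t : ℝ} (hξ : 1 ≤ ξ) (ht : 0 ≤ t)
    (β : Fin n → ℝ) (hβ : ∀ i, 0 < β i) :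
    ∏ i, (1 - (1 + ξ * t / β i) ^ (-1/ξ)) ≤ 1 - (1 + ξ * t / (∑ i, β i)) ^ (-1/ξ) := by
  have hξ0 : (0:ℝ) < ξ := lt_of_lt_of_le zero_lt_one hξ
  have hα : 0 < 1/ξ := by positivity
  have hα1 : 1/ξ ≤ 1 := by
    rw [div_le_one hξ0]; exact hξ
  have hne : (Finset.univ : Finset (Fin n)).Nonempty := by
    rwa [Finset.univ_nonempty_iff, ← Fin.pos_iff_nonempty, Nat.pos_iff_ne_zero]
  have hB : 0 < ∑ i, β i := Finset.sum_pos (fun i _ => hβ i) hne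
  have hexp : (-1/ξ : ℝ) = -(1/ξ) := by ring
  rcases ht.eq_or_lt with rfl | ht
  · obtain ⟨i, _⟩ := hne
    rw [Finset.prod_eq_zero (Finset.mem_univ i)]
    · have : ξ * 0 / (∑ i, β i) = 0 := by ring
      rw [this]; simp
    · have : ξ * 0 / β i = 0 := by ring
      rw [this]; simp
  · set B := ∑ i, β i with hBdef
    have key : ∀ i, 1 - (1 + ξ * t / β i) ^ (-1/ξ) ≤
        (1 - (1 + ξ * t / B) ^ (-1/ξ)) ^ (β i / B) := by
      intro i
      have hc : 0 < β i / B := div_pos (hβ i) hB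
      have hc1 : β i / B ≤ 1 := by
        rw [div_le_one hB, hBdef]
        exact Finset.single_le_sum (fun j _ => (hβ j).le) (Finset.mem_univ i)
      have hs : 0 ≤ ξ * t / B := div_nonneg (by positivity) hB.le
      have h := main_ineq hα hα1 hc hc1 hs
      have harg : ξ * t / B / (β i / B) = ξ * t / β i := by
        field_simp
      rw [harg] at h
      rw [hexp]
      exact h
    have hX : 0 < 1 - (1 + ξ * t / B) ^ (-1/ξ) := by
      have h1 : (1:ℝ) < 1 + ξ * t / B := by
        have : 0 < ξ * t / B := div_pos (by positivity) hB
        linarith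
      rw [hexp]
      linarith [aux_rpow_neg_lt_one h1 hα]
    calc ∏ i, (1 - (1 + ξ * t / β i) ^ (-1/ξ))
        ≤ ∏ i, (1 - (1 + ξ * t / B) ^ (-1/ξ)) ^ (β i / B) := by
          apply Finset.prod_le_prod
          · intro i _
            have h1 : (1:ℝ) ≤ 1 + ξ * t / β i := by
              have : 0 ≤ ξ * t / β i := div_nonneg (by positivity) (hβ i).le
              linarith
            have := Real.rpow_le_one_of_one_le_of_nonpos h1 (by rw [hexp]; linarith [hα] : (-1/ξ:ℝ) ≤ 0)
            linarith
          · exact fun i _ => key i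
      _ = (1 - (1 + ξ * t / B) ^ (-1/ξ)) ^ (∑ i, β i / B) :=
          (Real.rpow_sum_of_pos hX _ _).symm
      _ = 1 - (1 + ξ * t / B) ^ (-1/ξ) := by
          rw [← Finset.sum_div, ← hBdef, div_self hB.ne', Real.rpow_one]

end Aux

/-- For `ξ ≥ 1` and independent generalized Pareto losses `Yᵢ ~ G_{ξ,βᵢ}`, a variable
`Y ~ G_{ξ,β}` with `β = ∑ βᵢ` satisfies `Y ≤_st ∑ Yᵢ`. -/
theorem stmt16 {Ω : Type*} [MeasurableSpace Ω] (P : Measure Ω) [IsProbabilityMeasure P]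
    (n : ℕ) (ξ : ℝ) (hξ : 1 ≤ ξ) (β : Fin n → ℝ) (hβ : ∀ i, 0 < β i)
    (Ys : Fin n → Ω → ℝ) (hYs : ∀ i, IsGPD P (Ys i) ξ (β i))
    (hind : iIndepFun Ys P)
    (Y : Ω → ℝ) (hY : IsGPD P Y ξ (∑ i, β i)) :
    ∀ t : ℝ, P {ω | t < Y ω} ≤ P {ω | t < ∑ i, Ys i ω} := by
  intro t
  have hξ0 : (0:ℝ) < ξ := lt_of_lt_of_le zero_lt_one hξ
  have hM : ∀ i, Measurable (Ys i) := fun i => (hYs i).1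
  -- the good event where all Ys are nonneg
  set G : Set Ω := ⋂ i, {ω | 0 ≤ Ys i ω} with hGdef
  have hGm : MeasurableSet G :=
    MeasurableSet.iInter fun i => (hM i) measurableSet_Ici
  have hGc : P Gᶜ = 0 := by
    rw [hGdef, Set.compl_iInter]
    refine measure_iUnion_null fun i => ?_
    have : MeasurableSet {ω | 0 ≤ Ys i ω} := (hM i) measurableSet_Ici
    rw [prob_compl_eq_zero_iff this]
    exact (hYs i).2.1
  have hG1 : P G = 1 := by
    have h := measure_union_le (μ := P) G Gᶜ
    rw [Set.union_compl_self, measure_univ, hGc, add_zero] at h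
    exact le_antisymm prob_le_one h
  rcases lt_or_ge t 0 with ht | ht
  · -- t < 0
    have hsub : G ⊆ {ω | t < ∑ i, Ys i ω} := by
      intro ω hω
      have : 0 ≤ ∑ i, Ys i ω :=
        Finset.sum_nonneg fun i _ => Set.mem_iInter.mp hω i
      exact lt_of_lt_of_le ht this
    calc P {ω | t < Y ω} ≤ 1 := prob_le_one
      _ = P G := hG1.symm
      _ ≤ P {ω | t < ∑ i, Ys i ω} := measure_mono hsub
  rcases Nat.eq_zero_or_pos n with rfl | hn
  · -- n = 0 : hypotheses on Y are contradictory
    exfalso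
    have htail := hY.2.2
    simp only [Finset.univ_eq_empty, Finset.sum_empty, div_zero] at htail
    have hone : ∀ k : ℕ, P {ω | (k:ℝ) < Y ω} = 1 := by
      intro k
      rw [htail k (Nat.cast_nonneg k)]
      simp
    have hnull : ∀ k : ℕ, P {ω | (k:ℝ) < Y ω}ᶜ = 0 := by
      intro k
      rw [prob_compl_eq_zero_iff (measurableSet_lt measurable_const hY.1)]
      exact hone k
    have huniv : (⋃ k : ℕ, {ω | (k:ℝ) < Y ω}ᶜ) = Set.univ := by
      ext ω
      simp only [Set.mem_iUnion, Set.mem_compl_iff, Set.mem_setOf_eq, not_lt, Set.mem_univ,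
        iff_true]
      exact exists_nat_ge (Y ω)
    have := measure_iUnion_null hnull
    rw [huniv, measure_univ] at this
    exact one_ne_zero this
  · -- main case : t ≥ 0, n ≥ 1
    set B : ℝ := ∑ i, β i with hBdef
    have hne : (Finset.univ : Finset (Fin n)).Nonempty := by
      rwa [Finset.univ_nonempty_iff, ← Fin.pos_iff_nonempty]
    have hB : 0 < B := Finset.sum_pos (fun i _ => hβ i) hne
    have hexp : (-1/ξ : ℝ) ≤ 0 := by
      apply div_nonpos_of_nonpos_of_nonneg <;> linarith
    set q : ℝ := (1 + ξ * t / B) ^ (-1/ξ) with hqdef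
    have hq0 : 0 ≤ q := by
      have : 0 ≤ ξ * t / B := div_nonneg (by positivity) hB.le
      exact Real.rpow_nonneg (by linarith) _
    have hq1 : q ≤ 1 := by
      apply Real.rpow_le_one_of_one_le_of_nonpos _ hexp
      have : 0 ≤ ξ * t / B := div_nonneg (by positivity) hB.le
      linarith
    have hLHS : P {ω | t < Y ω} = ENNReal.ofReal q := hY.2.2 t ht
    -- the union event
    set U : Set Ω := ⋃ i, {ω | t < Ys i ω} with hUdef
    have hUm : MeasurableSet U := MeasurableSet.iUnion fun i => (hM i) measurableSet_Ioi
    -- complement computation via independence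
    have hprod := hind.measure_inter_preimage_eq_mul Finset.univ
      (sets := fun _ => Set.Iic t) (fun i _ => measurableSet_Iic)
    have hUc : Uᶜ = ⋂ i ∈ Finset.univ, Ys i ⁻¹' Set.Iic t := by
      rw [hUdef, Set.compl_iUnion]
      simp only [Finset.mem_univ, Set.iInter_true]
      ext ω
      simp [Set.mem_Iic, not_lt]
    have hterm : ∀ i : Fin n, P (Ys i ⁻¹' Set.Iic t) =
        ENNReal.ofReal (1 - (1 + ξ * t / β i) ^ (-1/ξ)) := by
      intro i
      have hri0 : (0:ℝ) ≤ (1 + ξ * t / β i) ^ (-1/ξ) := by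
        have : 0 ≤ ξ * t / β i := div_nonneg (by positivity) (hβ i).le
        exact Real.rpow_nonneg (by linarith) _
      have hcompl : Ys i ⁻¹' Set.Iic t = {ω | t < Ys i ω}ᶜ := by
        ext ω; simp [not_lt]
      rw [hcompl, prob_compl_eq_one_sub (measurableSet_lt measurable_const (hM i)), (hYs i).2.2 t ht,
        ← ENNReal.ofReal_one, ← ENNReal.ofReal_sub _ hri0]
    have hUcval : P Uᶜ = ENNReal.ofReal (∏ i, (1 - (1 + ξ * t / β i) ^ (-1/ξ))) := by
      rw [hUc, hprod]
      rw [ENNReal.ofReal_prod_of_nonneg]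
      · exact Finset.prod_congr rfl fun i _ => hterm i
      · intro i _
        have h1 : (1:ℝ) ≤ 1 + ξ * t / β i := by
          have : 0 ≤ ξ * t / β i := div_nonneg (by positivity) (hβ i).le
          linarith
        linarith [Real.rpow_le_one_of_one_le_of_nonpos h1 hexp]
    have hUcle : P Uᶜ ≤ ENNReal.ofReal (1 - q) := by
      rw [hUcval]
      exact ENNReal.ofReal_le_ofReal (prod_ineq_s16 (Nat.pos_iff_ne_zero.mp hn) hξ ht β hβ)
    have hPU : ENNReal.ofReal q ≤ P U := by
      have hUeq : P U = 1 - P Uᶜ := by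
        conv_lhs => rw [← compl_compl U]
        rw [prob_compl_eq_one_sub hUm.compl]
      rw [hUeq]
      have hq : ENNReal.ofReal q = 1 - ENNReal.ofReal (1 - q) := by
        apply ENNReal.eq_sub_of_add_eq ENNReal.ofReal_ne_top
        rw [← ENNReal.ofReal_add hq0 (by linarith)]
        norm_num
      rw [hq]
      exact tsub_le_tsub_left hUcle 1
    have hfinal : P U ≤ P {ω | t < ∑ i, Ys i ω} := by
      have hsub : U ⊆ {ω | t < ∑ i, Ys i ω} ∪ Gᶜ := by
        intro ω hω
        rcases Set.mem_iUnion.mp hω with ⟨i, hi⟩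
        by_cases hg : ω ∈ G
        · left
          have hnn : ∀ j ∈ Finset.univ, 0 ≤ Ys j ω := fun j _ => Set.mem_iInter.mp hg j
          have := Finset.single_le_sum hnn (Finset.mem_univ i)
          exact lt_of_lt_of_le hi this
        · right; exact hg
      calc P U ≤ P ({ω | t < ∑ i, Ys i ω} ∪ Gᶜ) := measure_mono hsub
        _ ≤ P {ω | t < ∑ i, Ys i ω} + P Gᶜ := measure_union_le _ _
        _ = P {ω | t < ∑ i, Ys i ω} := by rw [hGc, add_zero]
    rw [hLHS]
    exact le_trans hPU hfinal
end

section
/- Let X ~ Pareto(α) with α ∈ (0,1] and let c > 1. Then min(X₁, c) ≤_st min(∑ᵢ θᵢXᵢ, c) for iid Pareto(α) variables X₁,…,Xₙ and weights (θ₁,…,θₙ) in the simplex; moreover, for any strictly increasing continuous function v on [1,c], 𝔼[v(min(X₁,c))] < 𝔼[v(min(∑ᵢθᵢXᵢ, c))] when at least two θᵢ > 0. -/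
open MeasureTheory ProbabilityTheory Set
open Filter Topology
open scoped ENNReal

section Stmt17Aux

lemma rpow_pair_majorize' {α a' a b b' : ℝ} (hα0 : 0 < α) (hα1 : α ≤ 1)
    (ha' : 0 ≤ a') (h1 : a' ≤ a) (h2 : a ≤ b) (h3 : b ≤ b') (hsum : a + b = a' + b') :
    a' ^ α + b' ^ α ≤ a ^ α + b ^ α := by
  have hcc := Real.concaveOn_rpow hα0.le hα1
  have ha'b' : a' ≤ b' := le_trans h1 (le_trans h2 h3)
  rcases eq_or_lt_of_le ha'b' with heq | hlt
  · have haa : a = a' := le_antisymm (by linarith) h1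
    have hbb : b = b' := by linarith
    rw [haa, hbb]
  · have hd : 0 < b' - a' := by linarith
    set lam : ℝ := (b' - a) / (b' - a') with hlam
    have hlam0 : 0 ≤ lam := div_nonneg (by linarith) hd.le
    have hlam1 : lam ≤ 1 := (div_le_one hd).mpr (by linarith)
    have hk : lam * (b' - a') = b' - a := by rw [hlam]; exact div_mul_cancel₀ _ hd.ne'
    have hma : lam • a' + (1 - lam) • b' = a := by
      simp only [smul_eq_mul]; linear_combination -hk
    have hmb : (1 - lam) • a' + lam • b' = b := by
      simp only [smul_eq_mul]; linear_combination hk - hsum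
    have key1 := hcc.2 (mem_Ici.mpr ha') (mem_Ici.mpr (le_trans ha' ha'b'))
      hlam0 (by linarith : (0:ℝ) ≤ 1 - lam) (by ring)
    have key2 := hcc.2 (mem_Ici.mpr ha') (mem_Ici.mpr (le_trans ha' ha'b'))
      (by linarith : (0:ℝ) ≤ 1 - lam) hlam0 (by ring)
    rw [hma] at key1
    rw [hmb] at key2
    simp only [smul_eq_mul] at key1 key2
    nlinarith [key1, key2]

lemma stmt17_core_aux {α u v w : ℝ} (hα0 : 0 < α) (hα1 : α ≤ 1) (hu0 : 0 < u) (hv0 : 0 < v)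
    (huv : u ≤ v) (hv1 : v ≤ 1) (hw0 : 0 ≤ w) (hw : w ≤ u + v - u * v) :
    (1 - u ^ α) * (1 - v ^ α) ≤ 1 - w ^ α := by
  have maj := rpow_pair_majorize' hα0 hα1 (mul_nonneg hu0.le hv0.le)
    (by nlinarith : u * v ≤ u) huv (by nlinarith : v ≤ u + v - u * v) (by ring)
  have hmul : (u * v) ^ α = u ^ α * v ^ α := Real.mul_rpow hu0.le hv0.le
  have mono : w ^ α ≤ (u + v - u * v) ^ α := Real.rpow_le_rpow hw0 hw hα0.le
  rw [hmul] at maj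
  nlinarith [maj, mono]

lemma stmt17_core {α u v w : ℝ} (hα0 : 0 < α) (hα1 : α ≤ 1) (hu0 : 0 < u) (hv0 : 0 < v)
    (hu1 : u ≤ 1) (hv1 : v ≤ 1) (hw0 : 0 ≤ w) (hw : w ≤ u + v - u * v) :
    (1 - u ^ α) * (1 - v ^ α) ≤ 1 - w ^ α := by
  rcases le_total u v with h | h
  · exact stmt17_core_aux hα0 hα1 hu0 hv0 h hv1 hw0 hw
  · rw [mul_comm]
    exact stmt17_core_aux hα0 hα1 hv0 hu0 h hu1 hw0 (by nlinarith)

lemma stmt17_core_strict {α u v w : ℝ} (hα0 : 0 < α) (hα1 : α ≤ 1) (hu0 : 0 < u) (hv0 : 0 < v)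
    (hu1 : u ≤ 1) (hv1 : v ≤ 1) (hw0 : 0 ≤ w) (hw : w < u + v - u * v) :
    (1 - u ^ α) * (1 - v ^ α) < 1 - w ^ α := by
  have h1 : (1 - u ^ α) * (1 - v ^ α) ≤ 1 - (u + v - u * v) ^ α := by
    rcases le_total u v with h | h
    · exact stmt17_core_aux hα0 hα1 hu0 hv0 h hv1 (by nlinarith) le_rfl
    · rw [mul_comm]; exact stmt17_core_aux hα0 hα1 hv0 hu0 h hu1 (by nlinarith) (by nlinarith)
  have h2 : w ^ α < (u + v - u * v) ^ α := Real.rpow_lt_rpow hw0 hw hα0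
  linarith

/-- `fP s α x = (x/(s+x))^α`. -/
noncomputable def fP (s α x : ℝ) : ℝ := (x / (s + x)) ^ α

lemma fP_nonneg {s α x : ℝ} (hs : 0 ≤ s) (hx : 0 ≤ x) : 0 ≤ fP s α x :=
  Real.rpow_nonneg (div_nonneg hx (by linarith)) _

lemma fP_le_one {s α x : ℝ} (hα : 0 ≤ α) (hs : 0 ≤ s) (hx : 0 ≤ x) : fP s α x ≤ 1 := by
  refine Real.rpow_le_one (div_nonneg hx (by linarith)) ?_ hα
  rcases eq_or_lt_of_le (by linarith : (0:ℝ) ≤ s + x) with h | h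
  · rw [← h]; simp
  · exact (div_le_one h).mpr (by linarith)

lemma fP_zero {s α : ℝ} (hα0 : 0 < α) : fP s α 0 = 0 := by
  simp [fP, Real.zero_rpow hα0.ne']

lemma pair_ineq_s17 {s α a b : ℝ} (hα0 : 0 < α) (hα1 : α ≤ 1) (hs : 0 ≤ s)
    (ha : 0 ≤ a) (hb : 0 ≤ b) :
    (1 - fP s α a) * (1 - fP s α b) ≤ 1 - fP s α (a + b) := by
  rcases eq_or_lt_of_le ha with ha0 | ha0
  · rw [← ha0, fP_zero hα0, zero_add]; ring_nf; rfl
  rcases eq_or_lt_of_le hb with hb0 | hb0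
  · rw [← hb0, fP_zero hα0, add_zero]; ring_nf
    nlinarith [fP_le_one (α := α) (x := a) hα0.le hs ha]
  rcases eq_or_lt_of_le hs with hs0 | hs0
  · have h1 : fP s α a = 1 := by rw [fP, ← hs0, zero_add, div_self ha0.ne', Real.one_rpow]
    have h2 : fP s α (a + b) ≤ 1 := fP_le_one hα0.le hs (by linarith)
    rw [h1]; nlinarith
  · have hu0 : 0 < a / (s + a) := div_pos ha0 (by linarith)
    have hv0 : 0 < b / (s + b) := div_pos hb0 (by linarith)
    have hu1 : a / (s + a) ≤ 1 := (div_le_one (by linarith)).mpr (by linarith)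
    have hv1 : b / (s + b) ≤ 1 := (div_le_one (by linarith)).mpr (by linarith)
    have hw0 : (0:ℝ) ≤ (a + b) / (s + (a + b)) := div_nonneg (by linarith) (by linarith)
    have hkey : (1 - a / (s + a)) * (1 - b / (s + b)) ≤ 1 - (a + b) / (s + (a + b)) := by
      have e1 : 1 - a / (s + a) = s / (s + a) := by field_simp; ring
      have e2 : 1 - b / (s + b) = s / (s + b) := by field_simp; ring
      have e3 : 1 - (a + b) / (s + (a + b)) = s / (s + (a + b)) := by field_simp; ring
      rw [e1, e2, e3, div_mul_div_comm, div_le_div_iff₀ (by positivity) (by linarith)]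
      nlinarith [mul_nonneg (mul_nonneg hs0.le ha0.le) hb0.le]
    have hw : (a + b) / (s + (a + b)) ≤
        a / (s + a) + b / (s + b) - (a / (s + a)) * (b / (s + b)) := by
      nlinarith [hkey]
    exact stmt17_core hα0 hα1 hu0 hv0 hu1 hv1 hw0 hw

lemma pair_ineq_strict {s α a b : ℝ} (hα0 : 0 < α) (hα1 : α ≤ 1) (hs : 0 < s)
    (ha : 0 < a) (hb : 0 < b) :
    (1 - fP s α a) * (1 - fP s α b) < 1 - fP s α (a + b) := by
  have hu0 : 0 < a / (s + a) := div_pos ha (by linarith)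
  have hv0 : 0 < b / (s + b) := div_pos hb (by linarith)
  have hu1 : a / (s + a) ≤ 1 := (div_le_one (by linarith)).mpr (by linarith)
  have hv1 : b / (s + b) ≤ 1 := (div_le_one (by linarith)).mpr (by linarith)
  have hw0 : (0:ℝ) ≤ (a + b) / (s + (a + b)) := div_nonneg (by linarith) (by linarith)
  have hkey : (1 - a / (s + a)) * (1 - b / (s + b)) < 1 - (a + b) / (s + (a + b)) := by
    have e1 : 1 - a / (s + a) = s / (s + a) := by field_simp; ring
    have e2 : 1 - b / (s + b) = s / (s + b) := by field_simp; ring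
    have e3 : 1 - (a + b) / (s + (a + b)) = s / (s + (a + b)) := by field_simp; ring
    rw [e1, e2, e3, div_mul_div_comm, div_lt_div_iff₀ (by positivity) (by linarith)]
    nlinarith [mul_pos (mul_pos hs ha) hb]
  have hw : (a + b) / (s + (a + b)) <
      a / (s + a) + b / (s + b) - (a / (s + a)) * (b / (s + b)) := by
    nlinarith [hkey]
  exact stmt17_core_strict hα0 hα1 hu0 hv0 hu1 hv1 hw0 hw

lemma prod_ineq_s17 {ι : Type*} {s α : ℝ} (hα0 : 0 < α) (hα1 : α ≤ 1) (hs : 0 ≤ s)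
    (F : Finset ι) (θ : ι → ℝ) (hθ : ∀ i ∈ F, 0 ≤ θ i) :
    ∏ i ∈ F, (1 - fP s α (θ i)) ≤ 1 - fP s α (∑ i ∈ F, θ i) := by
  induction F using Finset.cons_induction with
  | empty => simp [fP_zero hα0]
  | cons i F hiF ih =>
    rw [Finset.prod_cons, Finset.sum_cons]
    have hθi : 0 ≤ θ i := hθ i (Finset.mem_cons_self i F)
    have hθF : ∀ j ∈ F, 0 ≤ θ j := fun j hj => hθ j (Finset.mem_cons_of_mem hj)
    have hsum : 0 ≤ ∑ j ∈ F, θ j := Finset.sum_nonneg hθF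
    calc (1 - fP s α (θ i)) * ∏ j ∈ F, (1 - fP s α (θ j))
        ≤ (1 - fP s α (θ i)) * (1 - fP s α (∑ j ∈ F, θ j)) := by
          apply mul_le_mul_of_nonneg_left (ih hθF)
          linarith [fP_le_one (α := α) (x := θ i) hα0.le hs hθi]
      _ ≤ 1 - fP s α (θ i + ∑ j ∈ F, θ j) := pair_ineq_s17 hα0 hα1 hs hθi hsum

lemma prod_ineq_strict {ι : Type*} {s α : ℝ} (hα0 : 0 < α) (hα1 : α ≤ 1) (hs : 0 < s)
    (F : Finset ι) (θ : ι → ℝ) (hθ : ∀ i ∈ F, 0 ≤ θ i)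
    {i j : ι} (hi : i ∈ F) (hj : j ∈ F) (hij : i ≠ j) (hθi : 0 < θ i) (hθj : 0 < θ j) :
    ∏ k ∈ F, (1 - fP s α (θ k)) < 1 - fP s α (∑ k ∈ F, θ k) := by
  classical
  rw [← Finset.mul_prod_erase F _ hi, ← Finset.add_sum_erase F _ hi]
  have hθE : ∀ k ∈ F.erase i, 0 ≤ θ k := fun k hk => hθ k (Finset.mem_of_mem_erase hk)
  have hjE : j ∈ F.erase i := Finset.mem_erase.mpr ⟨fun h => hij h.symm, hj⟩
  have hb : 0 < ∑ k ∈ F.erase i, θ k :=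
    lt_of_lt_of_le hθj (Finset.single_le_sum hθE hjE)
  calc (1 - fP s α (θ i)) * ∏ k ∈ F.erase i, (1 - fP s α (θ k))
      ≤ (1 - fP s α (θ i)) * (1 - fP s α (∑ k ∈ F.erase i, θ k)) := by
        apply mul_le_mul_of_nonneg_left (prod_ineq_s17 hα0 hα1 hs.le _ _ hθE)
        linarith [fP_le_one (α := α) (x := θ i) hα0.le hs.le hθi.le]
    _ < 1 - fP s α (θ i + ∑ k ∈ F.erase i, θ k) :=
        pair_ineq_strict hα0 hα1 hs hθi hb

lemma tail_master {Ω : Type*} [MeasurableSpace Ω] (P : Measure Ω) [IsProbabilityMeasure P]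
    {n : ℕ} {α : ℝ} (hα0 : 0 < α)
    (X : Fin n → Ω → ℝ) (hXm : ∀ i, Measurable (X i))
    (hae : ∀ᵐ ω ∂P, ∀ j, 1 ≤ X j ω)
    (hXt : ∀ i, ∀ y : ℝ, 1 ≤ y → P {ω | y < X i ω} = ENNReal.ofReal (y ^ (-α)))
    (hind : iIndepFun X P)
    (θ : Fin n → ℝ) (hθ : ∀ i, 0 ≤ θ i) (hsum : ∑ i, θ i = 1)
    {t : ℝ} (ht : 1 ≤ t) :
    ENNReal.ofReal ((1:ℝ) - ∏ i, (1 - fP (t-1) α (θ i)))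
      ≤ P {ω | t < ∑ i, θ i * X i ω} := by
  classical
  set s : ℝ := t - 1 with hs_def
  have hs : 0 ≤ s := by simp [hs_def]; linarith
  set B : Fin n → Set ℝ := fun i => {x | θ i * x ≤ s + θ i} with hB_def
  have hBm : ∀ i, MeasurableSet (B i) :=
    fun i => measurableSet_le (measurable_id.const_mul _) measurable_const
  have hPB : ∀ i, P (X i ⁻¹' B i) = ENNReal.ofReal (1 - fP s α (θ i)) := by
    intro i
    rcases eq_or_lt_of_le (hθ i) with hθi | hθi
    · have : B i = univ := by
        ext x; simp only [hB_def, mem_setOf_eq, mem_univ, iff_true, ← hθi]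
        simpa using hs
      rw [this]
      simp [← hθi, fP_zero hα0]
    · set y : ℝ := (s + θ i) / θ i with hy_def
      have hy1 : 1 ≤ y := (one_le_div hθi).mpr (by linarith)
      have hpre : X i ⁻¹' B i = {ω | y < X i ω}ᶜ := by
        ext ω
        simp only [hB_def, mem_preimage, mem_setOf_eq, mem_compl_iff, not_lt, hy_def]
        rw [le_div_iff₀ hθi, mul_comm]
      have hyval : y ^ (-α) = fP s α (θ i) := by
        rw [Real.rpow_neg (by linarith : (0:ℝ) ≤ y), ← Real.inv_rpow (by linarith : (0:ℝ) ≤ y),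
          hy_def, inv_div]
        rfl
      rw [hpre, measure_compl (measurableSet_lt measurable_const (hXm i)) (measure_ne_top _ _),
        hXt i y hy1, hyval, measure_univ, ← ENNReal.ofReal_one,
        ← ENNReal.ofReal_sub _ (fP_nonneg hs (hθ i))]
  have hInter : P (⋂ i, X i ⁻¹' B i) = ∏ i, P (X i ⁻¹' B i) :=
    hind.meas_iInter (fun i => ⟨B i, hBm i, rfl⟩)
  set A : Set Ω := {ω | t < ∑ i, θ i * X i ω} with hA_def
  have hAm : MeasurableSet A := by
    apply measurableSet_lt measurable_const
    exact Finset.measurable_sum _ (fun i _ => (hXm i).const_mul _)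
  have hsub : ∀ ω, (∀ j, 1 ≤ X j ω) → ω ∈ Aᶜ → ω ∈ ⋂ i, X i ⁻¹' B i := by
    intro ω hω hA'
    simp only [hA_def, mem_compl_iff, mem_setOf_eq, not_lt] at hA'
    simp only [mem_iInter, mem_preimage, hB_def, mem_setOf_eq]
    intro i
    have e1 : θ i * X i ω + ∑ j ∈ Finset.univ.erase i, θ j * X j ω
        = ∑ j, θ j * X j ω :=
      Finset.add_sum_erase _ (fun j => θ j * X j ω) (Finset.mem_univ i)
    have e2 : θ i + ∑ j ∈ Finset.univ.erase i, θ j = ∑ j, θ j :=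
      Finset.add_sum_erase _ θ (Finset.mem_univ i)
    have e3 : ∑ j ∈ Finset.univ.erase i, θ j ≤ ∑ j ∈ Finset.univ.erase i, θ j * X j ω :=
      Finset.sum_le_sum fun j _ => le_mul_of_one_le_right (hθ j) (hω j)
    rw [hsum] at e2
    linarith
  have hcompl : P Aᶜ ≤ ENNReal.ofReal (∏ i, (1 - fP s α (θ i))) := by
    calc P Aᶜ ≤ P (⋂ i, X i ⁻¹' B i) := by
          apply measure_mono_ae
          filter_upwards [hae] with ω hω hmem
          exact hsub ω hω hmem
      _ = ∏ i, P (X i ⁻¹' B i) := hInter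
      _ = ∏ i, ENNReal.ofReal (1 - fP s α (θ i)) :=
          Finset.prod_congr rfl fun i _ => hPB i
      _ = ENNReal.ofReal (∏ i, (1 - fP s α (θ i))) :=
          (ENNReal.ofReal_prod_of_nonneg fun i _ => by
            linarith [fP_le_one (α := α) (x := θ i) hα0.le hs (hθ i)]).symm
  have hone : (1:ℝ≥0∞) ≤ P A + ENNReal.ofReal (∏ i, (1 - fP s α (θ i))) := by
    calc (1:ℝ≥0∞) = P A + P Aᶜ := by rw [measure_add_measure_compl hAm, measure_univ]
      _ ≤ P A + ENNReal.ofReal (∏ i, (1 - fP s α (θ i))) := add_le_add le_rfl hcompl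
  have hq0 : 0 ≤ ∏ i, (1 - fP s α (θ i)) :=
    Finset.prod_nonneg fun i _ => by linarith [fP_le_one (α := α) (x := θ i) hα0.le hs (hθ i)]
  have hsplit : ENNReal.ofReal ((1:ℝ) - ∏ i, (1 - fP s α (θ i)))
      + ENNReal.ofReal (∏ i, (1 - fP s α (θ i))) = 1 := by
    have hq1 : ∏ i, (1 - fP s α (θ i)) ≤ 1 := by
      apply Finset.prod_le_one
      · intro i _; linarith [fP_le_one (α := α) (x := θ i) hα0.le hs (hθ i)]
      · intro i _; linarith [fP_nonneg (α := α) (x := θ i) hs (hθ i)]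
    rw [← ENNReal.ofReal_add (by linarith) hq0]
    simp
  rw [← ENNReal.add_le_add_iff_right
    (ENNReal.ofReal_ne_top : ENNReal.ofReal (∏ i, (1 - fP s α (θ i))) ≠ ⊤), hsplit]
  exact hone

lemma fP_one {t α : ℝ} (ht : 0 < t) : fP (t-1) α 1 = t ^ (-α) := by
  rw [fP, Real.rpow_neg ht.le, ← Real.inv_rpow ht.le]
  norm_num

lemma tail_ge {Ω : Type*} [MeasurableSpace Ω] (P : Measure Ω) [IsProbabilityMeasure P]
    {n : ℕ} {α : ℝ} (hα0 : 0 < α) (hα1 : α ≤ 1)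
    (X : Fin n → Ω → ℝ) (hXm : ∀ i, Measurable (X i))
    (hae : ∀ᵐ ω ∂P, ∀ j, 1 ≤ X j ω)
    (hXt : ∀ i, ∀ y : ℝ, 1 ≤ y → P {ω | y < X i ω} = ENNReal.ofReal (y ^ (-α)))
    (hind : iIndepFun X P)
    (θ : Fin n → ℝ) (hθ : ∀ i, 0 ≤ θ i) (hsum : ∑ i, θ i = 1)
    {t : ℝ} (ht : 1 ≤ t) :
    ENNReal.ofReal (t ^ (-α)) ≤ P {ω | t < ∑ i, θ i * X i ω} := by
  have hprod : ∏ i, (1 - fP (t-1) α (θ i)) ≤ 1 - fP (t-1) α 1 := by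
    have := prod_ineq_s17 (s := t-1) hα0 hα1 (by linarith) Finset.univ θ (fun i _ => hθ i)
    rwa [hsum] at this
  have h1 := tail_master P hα0 X hXm hae hXt hind θ hθ hsum ht
  refine le_trans ?_ h1
  apply ENNReal.ofReal_le_ofReal
  rw [← fP_one (by linarith : (0:ℝ) < t)]
  linarith

lemma tail_gt {Ω : Type*} [MeasurableSpace Ω] (P : Measure Ω) [IsProbabilityMeasure P]
    {n : ℕ} {α : ℝ} (hα0 : 0 < α) (hα1 : α ≤ 1)
    (X : Fin n → Ω → ℝ) (hXm : ∀ i, Measurable (X i))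
    (hae : ∀ᵐ ω ∂P, ∀ j, 1 ≤ X j ω)
    (hXt : ∀ i, ∀ y : ℝ, 1 ≤ y → P {ω | y < X i ω} = ENNReal.ofReal (y ^ (-α)))
    (hind : iIndepFun X P)
    (θ : Fin n → ℝ) (hθ : ∀ i, 0 ≤ θ i) (hsum : ∑ i, θ i = 1)
    {i j : Fin n} (hij : i ≠ j) (hθi : 0 < θ i) (hθj : 0 < θ j)
    {t : ℝ} (ht : 1 < t) :
    ENNReal.ofReal (t ^ (-α)) < P {ω | t < ∑ i, θ i * X i ω} := by
  have hprod : ∏ k, (1 - fP (t-1) α (θ k)) < 1 - fP (t-1) α 1 := by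
    have := prod_ineq_strict (s := t-1) hα0 hα1 (by linarith) Finset.univ θ (fun k _ => hθ k)
      (Finset.mem_univ i) (Finset.mem_univ j) hij hθi hθj
    rwa [hsum] at this
  have h1 := tail_master P hα0 X hXm hae hXt hind θ hθ hsum ht.le
  refine lt_of_lt_of_le ?_ h1
  apply ENNReal.ofReal_lt_ofReal_iff_of_nonneg (Real.rpow_nonneg (by linarith) _) |>.mpr
  rw [← fP_one (by linarith : (0:ℝ) < t)]
  linarith

end Stmt17Aux

/-- Aggregate excess-of-loss capping: for iid Pareto(α), `α ∈ (0,1]`, simplex weights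
and a cap `c > 1`, `min(X₁,c) ≤_st min(∑ θᵢXᵢ, c)`; moreover for every measurable
`v` strictly increasing and continuous on `[1,c]`, if at least two weights are positive
then `𝔼[v(min(X₁,c))] < 𝔼[v(min(∑ θᵢXᵢ, c))]`. -/
theorem stmt17 {Ω : Type*} [MeasurableSpace Ω] (P : Measure Ω) [IsProbabilityMeasure P]
    (n : ℕ) (hn : 0 < n) (α : ℝ) (hα : α ∈ Set.Ioc (0:ℝ) 1) (c : ℝ) (hc : 1 < c)
    (X : Fin n → Ω → ℝ) (hX : ∀ i, IsPareto P (X i) α)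
    (hind : iIndepFun X P)
    (θ : Fin n → ℝ) (hθ : ∀ i, 0 ≤ θ i) (hsum : ∑ i, θ i = 1) :
    (∀ t : ℝ, P {ω | t < min (X ⟨0, hn⟩ ω) c}
        ≤ P {ω | t < min (∑ i, θ i * X i ω) c})
    ∧ (∀ v : ℝ → ℝ, Measurable v → StrictMonoOn v (Set.Icc 1 c) →
        ContinuousOn v (Set.Icc 1 c) →
        (∃ i j, i ≠ j ∧ 0 < θ i ∧ 0 < θ j) →
        ∫ ω, v (min (X ⟨0, hn⟩ ω) c) ∂P
          < ∫ ω, v (min (∑ i, θ i * X i ω) c) ∂P) := by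
  obtain ⟨hα0, hα1⟩ := hα
  have hXm : ∀ i, Measurable (X i) := fun i => (hX i).1
  have hXt : ∀ i, ∀ y : ℝ, 1 ≤ y → P {ω | y < X i ω} = ENNReal.ofReal (y ^ (-α)) :=
    fun i => (hX i).2.2
  have hae : ∀ᵐ ω ∂P, ∀ j, 1 ≤ X j ω := by
    rw [ae_all_iff]
    intro j
    rw [ae_iff]
    have hm : MeasurableSet {ω | 1 ≤ X j ω} := measurableSet_le measurable_const (hXm j)
    have hce : {ω | ¬ 1 ≤ X j ω} = {ω | 1 ≤ X j ω}ᶜ := rfl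
    rw [hce, measure_compl hm (measure_ne_top _ _), (hX j).2.1, measure_univ, tsub_self]
  have hS1 : ∀ᵐ ω ∂P, 1 ≤ ∑ i, θ i * X i ω := by
    filter_upwards [hae] with ω hω
    calc (1:ℝ) = ∑ i, θ i := hsum.symm
      _ ≤ ∑ i, θ i * X i ω :=
        Finset.sum_le_sum fun i _ => le_mul_of_one_le_right (hθ i) (hω i)
  have part1 : ∀ t : ℝ, P {ω | t < min (X ⟨0, hn⟩ ω) c}
      ≤ P {ω | t < min (∑ i, θ i * X i ω) c} := by
    intro t
    rcases lt_or_ge t 1 with ht1 | ht1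
    · have h2 : (1:ℝ≥0∞) ≤ P {ω | t < min (∑ i, θ i * X i ω) c} := by
        rw [← measure_univ (μ := P)]
        apply measure_mono_ae
        filter_upwards [hS1] with ω hω
        intro _
        exact lt_min (lt_of_lt_of_le ht1 hω) (lt_trans ht1 hc)
      exact le_trans prob_le_one h2
    rcases lt_or_ge t c with htc | htc
    · have hset1 : {ω | t < min (X ⟨0, hn⟩ ω) c} = {ω | t < X ⟨0, hn⟩ ω} := by
        ext ω; simp [lt_min_iff, htc]
      have hset2 : {ω | t < min (∑ i, θ i * X i ω) c} = {ω | t < ∑ i, θ i * X i ω} := by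
        ext ω; simp [lt_min_iff, htc]
      rw [hset1, hset2, hXt ⟨0, hn⟩ t ht1]
      exact tail_ge P hα0 hα1 X hXm hae hXt hind θ hθ hsum ht1
    · have hset1 : {ω | t < min (X ⟨0, hn⟩ ω) c} = (∅ : Set Ω) := by
        apply eq_empty_iff_forall_notMem.mpr
        intro ω hω
        exact absurd (lt_of_lt_of_le hω (le_trans (min_le_right _ _) htc)) (lt_irrefl t)
      rw [hset1]
      simp
  refine ⟨part1, ?_⟩
  intro v hvm hvs hvc hex
  obtain ⟨i, j, hij, hθi, hθj⟩ := hex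
  have hSm : Measurable (fun ω => ∑ i, θ i * X i ω) :=
    Finset.measurable_sum _ fun i _ => (hXm i).const_mul _
  have hmono : MonotoneOn v (Icc 1 c) := hvs.monotoneOn
  have h1c : (1:ℝ) ∈ Icc 1 c := ⟨le_refl 1, hc.le⟩
  have hcc : c ∈ Icc 1 c := ⟨hc.le, le_refl c⟩
  have hW₁m : Measurable (fun ω => min (X ⟨0, hn⟩ ω) c) := (hXm _).min measurable_const
  have hW₂m : Measurable (fun ω => min (∑ i, θ i * X i ω) c) := hSm.min measurable_const
  have hW₁mem : ∀ᵐ ω ∂P, min (X ⟨0, hn⟩ ω) c ∈ Icc 1 c := by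
    filter_upwards [hae] with ω hω
    exact ⟨le_min (hω _) hc.le, min_le_right _ _⟩
  have hW₂mem : ∀ᵐ ω ∂P, min (∑ i, θ i * X i ω) c ∈ Icc 1 c := by
    filter_upwards [hS1] with ω hω
    exact ⟨le_min hω hc.le, min_le_right _ _⟩
  have hint : ∀ W : Ω → ℝ, Measurable W → (∀ᵐ ω ∂P, W ω ∈ Icc 1 c) →
      Integrable (fun ω => v (W ω)) P := by
    intro W hWm hWmem
    refine ⟨(hvm.comp hWm).aestronglyMeasurable, ?_⟩
    apply HasFiniteIntegral.of_bounded (C := max |v 1| |v c|)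
    filter_upwards [hWmem] with ω hω
    rw [Real.norm_eq_abs]
    exact abs_le_max_abs_abs (hmono h1c hω hω.1) (hmono hω hcc hω.2)
  have hlayer : ∀ W : Ω → ℝ, Measurable W → (∀ᵐ ω ∂P, W ω ∈ Icc 1 c) →
      ∫ ω, v (W ω) ∂P = v 1 + ∫ u in Ioi (0:ℝ), (P {ω | u < v (W ω) - v 1}).toReal := by
    intro W hWm hWmem
    have hI := hint W hWm hWmem
    have hInn : 0 ≤ᵐ[P] fun ω => v (W ω) - v 1 := by
      filter_upwards [hWmem] with ω hω
      have := hmono h1c hω hω.1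
      simp only [Pi.zero_apply]
      linarith
    have hIsub : Integrable (fun ω => v (W ω) - v 1) P := hI.sub (integrable_const _)
    have hkey := hIsub.integral_eq_integral_meas_lt hInn
    rw [integral_sub hI (integrable_const _), integral_const, probReal_univ] at hkey
    simp only [Measure.real, ENNReal.toReal_one, smul_eq_mul, one_mul] at hkey
    linarith [hkey]
  have hzero : ∀ W : Ω → ℝ, (∀ᵐ ω ∂P, W ω ∈ Icc 1 c) → ∀ u : ℝ, v c - v 1 ≤ u →
      P {ω | u < v (W ω) - v 1} = 0 := by
    intro W hWmem u hu
    rw [measure_eq_zero_iff_ae_notMem]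
    filter_upwards [hWmem] with ω hω
    simp only [mem_setOf_eq, not_lt]
    have := hmono hω hcc hω.2
    linarith
  have hcomp : ∀ u : ℝ, 0 < u → u < v c - v 1 →
      P {ω | u < v (min (X ⟨0, hn⟩ ω) c) - v 1}
        < P {ω | u < v (min (∑ i, θ i * X i ω) c) - v 1} := by
    intro u hu0 huM
    set y := v 1 + u with hy
    have hvy1 : v 1 < y := by simp only [hy]; linarith
    have hyc : y < v c := by simp only [hy]; linarith
    set T := Icc 1 c ∩ v ⁻¹' (Iic y) with hT
    have hT1 : (1:ℝ) ∈ T := ⟨h1c, by simp only [mem_preimage, mem_Iic]; linarith⟩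
    have hTbdd : BddAbove T := bddAbove_Icc.mono inter_subset_left
    have hTcl : IsClosed T := hvc.preimage_isClosed_of_isClosed isClosed_Icc isClosed_Iic
    have hxqT : sSup T ∈ T := hTcl.csSup_mem ⟨1, hT1⟩ hTbdd
    have hq_mem : sSup T ∈ Icc 1 c := hxqT.1
    have hq_le : v (sSup T) ≤ y := hxqT.2
    have hq_lt_c : sSup T < c := by
      rcases eq_or_lt_of_le hq_mem.2 with h | h
      · rw [h] at hq_le; linarith
      · exact h
    have hq_gt_1 : 1 < sSup T := by
      have hne : (𝓝[Ioc 1 c] (1:ℝ)).NeBot := by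
        rw [← mem_closure_iff_nhdsWithin_neBot, closure_Ioc (by linarith : (1:ℝ) ≠ c)]
        exact h1c
      have hcw : ContinuousWithinAt v (Ioc 1 c) 1 :=
        (hvc 1 h1c).mono Ioc_subset_Icc_self
      have hev1 : ∀ᶠ x in 𝓝[Ioc 1 c] (1:ℝ), v x < y :=
        hcw.eventually (eventually_lt_nhds hvy1)
      have hev2 : ∀ᶠ x in 𝓝[Ioc 1 c] (1:ℝ), x ∈ Ioc 1 c := eventually_mem_nhdsWithin
      obtain ⟨x, hx1, hx2⟩ := (hev1.and hev2).exists
      calc (1:ℝ) < x := hx2.1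
        _ ≤ sSup T := le_csSup hTbdd ⟨⟨hx2.1.le, hx2.2⟩, le_of_lt hx1⟩
    have hsetW : ∀ W : Ω → ℝ, ∀ ω : Ω, W ω ∈ Icc 1 c →
        ((u < v (W ω) - v 1) ↔ (sSup T < W ω)) := by
      intro W ω hω
      constructor
      · intro h
        by_contra hle
        push_neg at hle
        have h2 : v (W ω) ≤ v (sSup T) := hmono hω hq_mem hle
        have h3 : v (W ω) ≤ y := le_trans h2 hq_le
        simp only [hy] at h3
        linarith
      · intro h
        by_contra hle
        push_neg at hle
        have hWT : W ω ∈ T := ⟨hω, by simp only [mem_preimage, mem_Iic, hy]; linarith⟩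
        exact absurd (le_csSup hTbdd hWT) (not_le.mpr h)
    have hPeq : ∀ W : Ω → ℝ, (∀ᵐ ω ∂P, W ω ∈ Icc 1 c) →
        P {ω | u < v (W ω) - v 1} = P {ω | sSup T < W ω} := by
      intro W hWmem
      apply measure_congr
      filter_upwards [hWmem] with ω hω
      exact eq_iff_iff.mpr (hsetW W ω hω)
    rw [hPeq _ hW₁mem, hPeq _ hW₂mem]
    have e1 : {ω | sSup T < min (X ⟨0, hn⟩ ω) c} = {ω | sSup T < X ⟨0, hn⟩ ω} := by
      ext ω; simp [lt_min_iff, hq_lt_c]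
    have e2 : {ω | sSup T < min (∑ i, θ i * X i ω) c}
        = {ω | sSup T < ∑ i, θ i * X i ω} := by
      ext ω; simp [lt_min_iff, hq_lt_c]
    rw [e1, e2, hXt ⟨0, hn⟩ _ hq_mem.1]
    exact tail_gt P hα0 hα1 X hXm hae hXt hind θ hθ hsum hij hθi hθj hq_gt_1
  -- integrability of the tail functions
  have hGint : ∀ W : Ω → ℝ, (∀ᵐ ω ∂P, W ω ∈ Icc 1 c) →
      IntegrableOn (fun u => (P {ω | u < v (W ω) - v 1}).toReal) (Ioi (0:ℝ)) := by
    intro W hWmem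
    have hanti : Antitone (fun u => (P {ω | u < v (W ω) - v 1}).toReal) := by
      intro a b hab
      apply (ENNReal.toReal_le_toReal (measure_ne_top _ _) (measure_ne_top _ _)).mpr
      apply measure_mono
      intro ω hω
      exact lt_of_le_of_lt hab hω
    refine Integrable.mono' (g := (Ioc (0:ℝ) (v c - v 1)).indicator fun _ => (1:ℝ))
      ?_ hanti.measurable.aestronglyMeasurable ?_
    · apply Integrable.restrict
      rw [integrable_indicator_iff measurableSet_Ioc]
      refine integrableOn_const ?_
      exact measure_Ioc_lt_top.ne
    · rw [ae_restrict_iff' measurableSet_Ioi]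
      apply Filter.Eventually.of_forall
      intro u hu
      rcases le_or_gt u (v c - v 1) with hle | hlt
      · have hmem : u ∈ Ioc (0:ℝ) (v c - v 1) := ⟨hu, hle⟩
        rw [Set.indicator_of_mem hmem]
        rw [Real.norm_eq_abs, abs_of_nonneg ENNReal.toReal_nonneg]
        calc (P {ω | u < v (W ω) - v 1}).toReal
            ≤ (1:ℝ≥0∞).toReal := by
              apply (ENNReal.toReal_le_toReal (measure_ne_top _ _) (by simp)).mpr
              exact prob_le_one
          _ = 1 := by simp
      · rw [indicator_of_notMem (by simp [mem_Ioc]; intro _; linarith : u ∉ Ioc (0:ℝ) (v c - v 1))]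
        rw [hzero W hWmem u hlt.le]
        simp
  have hG1int := hGint _ hW₁mem
  have hG2int := hGint _ hW₂mem
  have hle : ∀ u ∈ Ioi (0:ℝ),
      (P {ω | u < v (min (X ⟨0, hn⟩ ω) c) - v 1}).toReal
        ≤ (P {ω | u < v (min (∑ i, θ i * X i ω) c) - v 1}).toReal := by
    intro u hu
    rcases lt_or_ge u (v c - v 1) with hlt | hge
    · exact (ENNReal.toReal_le_toReal (measure_ne_top _ _) (measure_ne_top _ _)).mpr
        (hcomp u hu hlt).le
    · rw [hzero _ hW₁mem u hge, hzero _ hW₂mem u hge]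
  have hM0 : 0 < v c - v 1 := by
    have := hvs h1c hcc hc
    linarith
  have hIoi : ∫ u in Ioi (0:ℝ), (P {ω | u < v (min (X ⟨0, hn⟩ ω) c) - v 1}).toReal
      < ∫ u in Ioi (0:ℝ), (P {ω | u < v (min (∑ i, θ i * X i ω) c) - v 1}).toReal := by
    have hdiff : 0 < ∫ u in Ioi (0:ℝ),
        ((P {ω | u < v (min (∑ i, θ i * X i ω) c) - v 1}).toReal
          - (P {ω | u < v (min (X ⟨0, hn⟩ ω) c) - v 1}).toReal) := by
      have hnn : 0 ≤ᵐ[volume.restrict (Ioi (0:ℝ))] fun u =>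
          (P {ω | u < v (min (∑ i, θ i * X i ω) c) - v 1}).toReal
            - (P {ω | u < v (min (X ⟨0, hn⟩ ω) c) - v 1}).toReal := by
        rw [EventuallyLE, ae_restrict_iff' measurableSet_Ioi]
        apply Filter.Eventually.of_forall
        intro u hu
        simp only [Pi.zero_apply]
        linarith [hle u hu]
      have hsupp : Ioo (0:ℝ) (v c - v 1) ⊆ Function.support (fun u =>
          (P {ω | u < v (min (∑ i, θ i * X i ω) c) - v 1}).toReal
            - (P {ω | u < v (min (X ⟨0, hn⟩ ω) c) - v 1}).toReal) := by
        intro u hu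
        have h := hcomp u hu.1 hu.2
        have h2 := (ENNReal.toReal_lt_toReal (measure_ne_top _ _) (measure_ne_top _ _)).mpr h
        simp only [Function.mem_support]
        intro h0
        linarith
      have hvol : (0:ℝ≥0∞) < volume.restrict (Ioi (0:ℝ)) (Ioo 0 (v c - v 1)) := by
        rw [Measure.restrict_apply measurableSet_Ioo,
          inter_eq_left.mpr (fun x hx => hx.1), Real.volume_Ioo]
        simp only [sub_zero]
        exact ENNReal.ofReal_pos.mpr hM0
      exact (integral_pos_iff_support_of_nonneg_ae hnn (hG2int.sub hG1int)).mpr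
        (lt_of_lt_of_le hvol (measure_mono hsupp))
    have heq := integral_sub hG2int hG1int
    rw [heq] at hdiff
    linarith
  calc ∫ ω, v (min (X ⟨0, hn⟩ ω) c) ∂P
      = v 1 + ∫ u in Ioi (0:ℝ),
          (P {ω | u < v (min (X ⟨0, hn⟩ ω) c) - v 1}).toReal := hlayer _ hW₁m hW₁mem
    _ < v 1 + ∫ u in Ioi (0:ℝ),
          (P {ω | u < v (min (∑ i, θ i * X i ω) c) - v 1}).toReal := by linarith
    _ = ∫ ω, v (min (∑ i, θ i * X i ω) c) ∂P := (hlayer _ hW₂m hW₂mem).symm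
end

section
/- Let X₁,…,Xₙ be iid Pareto(α), α ∈ (0,1], let ρ : 𝒳 → ℝ be a weakly monotone risk measure (ρ(X) ≤ ρ(Y) whenever X ≤_st Y), and let g : ℝ → ℝ be arbitrary. Fix w > 0. Then for every w⃗ = (w₁,…,wₙ) ∈ ℝ₊ⁿ with ∑ᵢ wᵢ = w, ρ(w⃗·X⃗ − g(w)) ≥ ρ(w·X₁ − g(w)); i.e., among all nonnegative positions of total exposure w, concentrating on a single Pareto loss minimizes any weakly monotone risk measure. -/
open MeasureTheory ProbabilityTheory Set


lemma concShift {α : ℝ} (hα0 : 0 ≤ α) (hα1 : α ≤ 1) {s t d : ℝ}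
    (hs : 0 ≤ s) (hst : s ≤ t) (hd : 0 ≤ d) :
    (t + d) ^ α + s ^ α ≤ (s + d) ^ α + t ^ α := by
  rcases eq_or_lt_of_le (by linarith : s ≤ t + d) with h | hL
  · have h1 : t = s := le_antisymm (by linarith) hst
    have h2 : d = 0 := by linarith
    simp [h1, h2]
  · set L := t + d - s with hLdef
    have hLpos : 0 < L := by simp only [hLdef]; linarith
    have key := (Real.concaveOn_rpow hα0 hα1).2
    have ht0 : (0:ℝ) ≤ t + d := by linarith
    have ha : (0:ℝ) ≤ (t - s)/L := div_nonneg (by linarith) hLpos.le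
    have hb : (0:ℝ) ≤ d/L := div_nonneg hd hLpos.le
    have hco : (t - s)/L + d/L = 1 := by
      rw [← add_div, div_eq_one_iff_eq hLpos.ne', hLdef]; ring
    have h1 := key (Set.mem_Ici.mpr hs) (Set.mem_Ici.mpr ht0) ha hb hco
    have h2 := key (Set.mem_Ici.mpr hs) (Set.mem_Ici.mpr ht0) hb ha (by linarith)
    simp only [smul_eq_mul] at h1 h2
    have e1 : (t - s)/L * s + d/L * (t + d) = s + d := by field_simp; ring
    have e2 : d/L * s + (t - s)/L * (t + d) = t := by field_simp; ring
    rw [e1] at h1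
    rw [e2] at h2
    have expand : (t + d) ^ α + s ^ α =
        ((t - s)/L * s ^ α + d/L * (t + d) ^ α) + (d/L * s ^ α + (t - s)/L * (t + d) ^ α) := by
      linear_combination (-(s ^ α + (t + d) ^ α)) * hco
    linarith

lemma keyC {a b c : ℝ} (ha : 0 ≤ a) (hb : 0 ≤ b) (hc : 0 ≤ c) :
    (a + b)/(a + b + c) ≤ a/(a + c) + b/(b + c) - (a/(a + c)) * (b/(b + c)) := by
  rcases ha.eq_or_lt with rfl | ha'
  · simp
  rcases hb.eq_or_lt with rfl | hb'
  · simp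
  rcases hc.eq_or_lt with rfl | hc'
  · rw [add_zero, add_zero, add_zero, div_self (by linarith : a + b ≠ 0),
      div_self ha'.ne', div_self hb'.ne']
    norm_num
  · have h1 : (1 - a/(a+c)) * (1 - b/(b+c)) ≤ 1 - (a+b)/(a+b+c) := by
      have e1 : 1 - a/(a+c) = c/(a+c) := by field_simp; ring
      have e2 : 1 - b/(b+c) = c/(b+c) := by field_simp; ring
      have e3 : 1 - (a+b)/(a+b+c) = c/(a+b+c) := by field_simp; ring
      rw [e1, e2, e3, div_mul_div_comm, div_le_div_iff₀ (by positivity) (by positivity)]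
      nlinarith [mul_pos (mul_pos ha' hb') hc']
    nlinarith [h1]

lemma pairw {α : ℝ} (hα0 : 0 < α) (hα1 : α ≤ 1) {a b c : ℝ}
    (ha : 0 ≤ a) (hb : 0 ≤ b) (hc : 0 ≤ c) :
    (1 - (a/(a+c))^α) * (1 - (b/(b+c))^α) ≤ 1 - ((a+b)/(a+b+c))^α := by
  set A := a/(a+c) with hA
  set B := b/(b+c) with hB
  set C := (a+b)/(a+b+c) with hC
  have hA0 : 0 ≤ A := div_nonneg ha (by linarith)
  have hB0 : 0 ≤ B := div_nonneg hb (by linarith)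
  have hC0 : 0 ≤ C := div_nonneg (by linarith) (by linarith)
  have hA1 : A ≤ 1 := div_le_one_of_le₀ (by linarith) (by linarith)
  have hB1 : B ≤ 1 := div_le_one_of_le₀ (by linarith) (by linarith)
  have conc := concShift hα0.le hα1 (mul_nonneg hA0 hB0)
      (by nlinarith : A * B ≤ A) (by nlinarith : (0:ℝ) ≤ B - A * B)
  have e1 : A * B + (B - A * B) = B := by ring
  have e2 : A + (B - A * B) = A + B - A * B := by ring
  rw [e1, e2] at conc
  have step2 : C ^ α ≤ (A + B - A * B) ^ α :=
    Real.rpow_le_rpow hC0 (keyC ha hb hc) hα0.le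
  have step3 : (A * B) ^ α = A ^ α * B ^ α := Real.mul_rpow hA0 hB0
  rw [step3] at conc
  nlinarith [conc, step2]

lemma prodw {α : ℝ} (hα0 : 0 < α) (hα1 : α ≤ 1) {c : ℝ} (hc : 0 ≤ c)
    {ι : Type*} (v : ι → ℝ) (hv : ∀ i, 0 ≤ v i) :
    ∀ s : Finset ι, s.Nonempty →
      ∏ i ∈ s, (1 - (v i/(v i + c))^α) ≤
        1 - ((∑ i ∈ s, v i)/((∑ i ∈ s, v i) + c))^α := by
  intro s hs
  induction s using Finset.cons_induction with
  | empty => exact absurd hs (by simp)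
  | cons a t hat ih =>
    rw [Finset.prod_cons, Finset.sum_cons]
    rcases t.eq_empty_or_nonempty with rfl | ht
    · simp
    · have h1 := ih ht
      have hsum0 : 0 ≤ ∑ i ∈ t, v i := Finset.sum_nonneg fun i _ => hv i
      have hd0 : (0:ℝ) ≤ v a / (v a + c) := div_nonneg (hv a) (by linarith [hv a])
      have hd1 : v a / (v a + c) ≤ 1 :=
        div_le_one_of_le₀ (by linarith [hv a]) (by linarith [hv a])
      have hfac : 0 ≤ 1 - (v a/(v a + c))^α := by
        have := Real.rpow_le_one hd0 hd1 hα0.le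
        linarith
      calc (1 - (v a/(v a + c))^α) * ∏ i ∈ t, (1 - (v i/(v i + c))^α)
          ≤ (1 - (v a/(v a + c))^α) *
            (1 - ((∑ i ∈ t, v i)/((∑ i ∈ t, v i) + c))^α) :=
            mul_le_mul_of_nonneg_left h1 hfac
        _ ≤ 1 - ((v a + ∑ i ∈ t, v i)/((v a + ∑ i ∈ t, v i) + c))^α :=
            pairw hα0 hα1 (hv a) hsum0 hc

/-- Optimality of concentration: for iid Pareto(α), `α ∈ (0,1]`, a weakly monotone risk
measure `ρ` and any `g`, every nonnegative position `w⃗` with total exposure `w > 0`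
satisfies `ρ(w·X₁ − g(w)) ≤ ρ(w⃗·X⃗ − g(w))`. -/
theorem stmt18 {Ω : Type*} [MeasurableSpace Ω] (P : Measure Ω) [IsProbabilityMeasure P]
    (n : ℕ) (hn : 0 < n) (α : ℝ) (hα : α ∈ Set.Ioc (0:ℝ) 1)
    (X : Fin n → Ω → ℝ) (hX : ∀ i, IsPareto P (X i) α)
    (hind : iIndepFun X P)
    (ρ : (Ω → ℝ) → ℝ)
    (hρ : ∀ Y Z : Ω → ℝ, (∀ x : ℝ, P {ω | Z ω ≤ x} ≤ P {ω | Y ω ≤ x}) → ρ Y ≤ ρ Z)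
    (g : ℝ → ℝ) (w : ℝ) (hw : 0 < w)
    (wv : Fin n → ℝ) (hwv : ∀ i, 0 ≤ wv i) (hwsum : ∑ i, wv i = w) :
    ρ (fun ω => w * X ⟨0, hn⟩ ω - g w) ≤ ρ (fun ω => (∑ i, wv i * X i ω) - g w) := by
  obtain ⟨hα0, hα1⟩ := hα
  set i0 : Fin n := ⟨0, hn⟩
  haveI : Nonempty (Fin n) := ⟨i0⟩
  have hone : ∀ i : Fin n, P {ω | ¬ (1 ≤ X i ω)} = 0 := by
    intro i
    have hms : MeasurableSet {ω | 1 ≤ X i ω} := measurableSet_le measurable_const (hX i).1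
    have hcp := measure_compl hms (measure_ne_top P _)
    rw [(hX i).2.1, measure_univ] at hcp
    simpa [Set.compl_setOf] using hcp
  set G : Set Ω := {ω | ∀ i, 1 ≤ X i ω} with hG
  have hGc : P Gᶜ = 0 := by
    have he : Gᶜ = ⋃ i, {ω | ¬ (1 ≤ X i ω)} := by
      ext ω; simp [hG, not_forall]
    rw [he]
    exact measure_iUnion_null fun i => hone i
  apply hρ
  intro x
  have hset : ∀ f : Ω → ℝ, {ω | f ω - g w ≤ x} = {ω | f ω ≤ x + g w} := by
    intro f; ext ω; simp [sub_le_iff_le_add]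
  simp only [hset]
  set s : ℝ := x + g w with hsdef
  by_cases hsw : s < w
  · have hsub : {ω | (∑ i, wv i * X i ω) ≤ s} ⊆ Gᶜ := by
      intro ω hω hGω
      have hle : ∑ i, wv i * X i ω ≤ s := hω
      have hge : w ≤ ∑ i, wv i * X i ω := by
        rw [← hwsum]
        refine Finset.sum_le_sum fun i _ => ?_
        nlinarith [hwv i, hGω i]
      linarith
    rw [measure_mono_null hsub hGc]
    exact zero_le
  · push_neg at hsw
    set c : ℝ := s - w with hcdef
    have hc0 : (0:ℝ) ≤ c := by simp only [hcdef]; linarith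
    have hRHS : P {ω | w * X i0 ω ≤ s} = 1 - ENNReal.ofReal ((w/s)^α) := by
      have hu : (1:ℝ) ≤ s / w := (one_le_div hw).mpr hsw
      have heq : {ω | w * X i0 ω ≤ s} = {ω | s/w < X i0 ω}ᶜ := by
        ext ω
        simp only [Set.mem_setOf_eq, Set.mem_compl_iff, not_lt]
        rw [mul_comm, ← le_div_iff₀ hw]
      have hms : MeasurableSet {ω | s/w < X i0 ω} :=
        measurableSet_lt measurable_const (hX i0).1
      have hcp := measure_compl hms (measure_ne_top P _)
      rw [(hX i0).2.2 (s/w) hu, measure_univ] at hcp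
      have hval : (s/w) ^ (-α) = (w/s)^α := by
        rw [Real.rpow_neg (by positivity), ← Real.inv_rpow (by positivity), inv_div]
      rw [heq, hcp, hval]
    set T : Fin n → Set ℝ :=
      fun i => if 0 < wv i then Iic ((wv i + c)/wv i) else univ with hT
    have hsub : {ω | (∑ i, wv i * X i ω) ≤ s} ⊆ (⋂ i, X i ⁻¹' T i) ∪ Gᶜ := by
      intro ω hω
      by_cases hGω : ω ∈ G
      · left
        simp only [Set.mem_iInter, Set.mem_preimage, hT]
        intro i
        by_cases hi : 0 < wv i
        · simp only [if_pos hi, Set.mem_Iic]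
          rw [le_div_iff₀ hi]
          have key : wv i * X i ω + ∑ j ∈ Finset.univ.erase i, wv j * X j ω
              = ∑ j, wv j * X j ω :=
            Finset.add_sum_erase _ (fun j => wv j * X j ω) (Finset.mem_univ i)
          have h2 : ∑ j ∈ Finset.univ.erase i, wv j
              ≤ ∑ j ∈ Finset.univ.erase i, wv j * X j ω :=
            Finset.sum_le_sum fun j _ => by nlinarith [hwv j, hGω j]
          have h3 : ∑ j ∈ Finset.univ.erase i, wv j = w - wv i := by
            rw [Finset.sum_erase_eq_sub (Finset.mem_univ i), hwsum]
          have hle : ∑ j, wv j * X j ω ≤ s := hω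
          have hcc : c = s - w := hcdef
          nlinarith [key, h2, h3, hle]
        · simp [if_neg hi]
      · right; exact hGω
    have hmeasT : ∀ i, MeasurableSet (T i) := by
      intro i
      rw [hT]
      dsimp only
      split
      · exact measurableSet_Iic
      · exact MeasurableSet.univ
    have hprod : P (⋂ i, X i ⁻¹' T i) = ∏ i, P (X i ⁻¹' T i) :=
      hind.meas_iInter fun i => ⟨T i, hmeasT i, rfl⟩
    have hq0 : ∀ i : Fin n, (0:ℝ) ≤ (wv i/(wv i + c))^α := fun i =>
      Real.rpow_nonneg (div_nonneg (hwv i) (by linarith [hwv i])) _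
    have hq1 : ∀ i : Fin n, (wv i/(wv i + c))^α ≤ 1 := fun i =>
      Real.rpow_le_one (div_nonneg (hwv i) (by linarith [hwv i]))
        (div_le_one_of_le₀ (by linarith [hwv i]) (by linarith [hwv i])) hα0.le
    have hfac : ∀ i, P (X i ⁻¹' T i) = ENNReal.ofReal (1 - (wv i/(wv i + c))^α) := by
      intro i
      by_cases hi : 0 < wv i
      · have hu : (1:ℝ) ≤ (wv i + c)/wv i := (one_le_div hi).mpr (by linarith)
        have heq : X i ⁻¹' T i = {ω | (wv i + c)/wv i < X i ω}ᶜ := by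
          ext ω; simp [hT, if_pos hi, not_lt]
        have hms : MeasurableSet {ω | (wv i + c)/wv i < X i ω} :=
          measurableSet_lt measurable_const (hX i).1
        have hcp := measure_compl hms (measure_ne_top P _)
        rw [(hX i).2.2 _ hu, measure_univ] at hcp
        have hval : ((wv i + c)/wv i) ^ (-α) = (wv i/(wv i + c))^α := by
          rw [Real.rpow_neg (by positivity), ← Real.inv_rpow (by positivity), inv_div]
        rw [heq, hcp, hval, ENNReal.ofReal_sub _ (hq0 i), ENNReal.ofReal_one]
      · have h0 : wv i = 0 := le_antisymm (not_lt.1 hi) (hwv i)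
        have heq : X i ⁻¹' T i = univ := by
          ext ω; simp [hT, if_neg hi]
        rw [heq, measure_univ, h0]
        simp [Real.zero_rpow hα0.ne']
    have hmain : ∏ i, (1 - (wv i/(wv i + c))^α) ≤ 1 - ((w/(w + c)))^α := by
      have := prodw hα0 hα1 hc0 wv hwv Finset.univ Finset.univ_nonempty
      rwa [hwsum] at this
    calc P {ω | (∑ i, wv i * X i ω) ≤ s}
        ≤ P ((⋂ i, X i ⁻¹' T i) ∪ Gᶜ) := measure_mono hsub
      _ ≤ P (⋂ i, X i ⁻¹' T i) + P Gᶜ := measure_union_le _ _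
      _ = ∏ i, P (X i ⁻¹' T i) := by rw [hGc, add_zero, hprod]
      _ = ENNReal.ofReal (∏ i, (1 - (wv i/(wv i + c))^α)) := by
          simp_rw [hfac]
          rw [← ENNReal.ofReal_prod_of_nonneg fun i _ => by linarith [hq1 i]]
      _ ≤ ENNReal.ofReal (1 - (w/(w + c))^α) := ENNReal.ofReal_le_ofReal hmain
      _ = 1 - ENNReal.ofReal ((w/s)^α) := by
          have hwc : w + c = s := by simp only [hcdef]; ring
          have hs0 : (0:ℝ) < s := lt_of_lt_of_le hw hsw
          rw [hwc, ENNReal.ofReal_sub _ (Real.rpow_nonneg (div_nonneg hw.le hs0.le) α),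
            ENNReal.ofReal_one]
      _ = P {ω | w * X i0 ω ≤ s} := hRHS.symm
end

section
/- For p ∈ (0,1) and n ≥ 2, let X₁,…,Xₙ be iid Pareto(α), α ∈ (0,1], (θ₁,…,θₙ) in the simplex with all θᵢ > 0, and set cᵢ = VaR_p(∑_{j} θⱼXⱼ)/θᵢ for each i. Then VaR_p(∑ᵢ θᵢ·min(Xᵢ,cᵢ)) = VaR_p(∑ᵢ θᵢXᵢ) > ∑ᵢ θᵢ·VaR_p(min(Xᵢ,cᵢ)); i.e., a diversification penalty for VaR_p persists under per-loss capping at sufficiently high thresholds. -/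
open MeasureTheory ProbabilityTheory Set

section AnalyticCore

/-- Two-point Karamata inequality for the concave function `x ↦ x ^ α`. -/
lemma karamata_rpow {α x y u w : ℝ} (hα : 0 < α) (hα1 : α ≤ 1)
    (hy : 0 ≤ y) (hyu : y ≤ u) (hux : u ≤ x) (hwx : w ≤ x) (hsum : u + w = x + y) :
    x ^ α + y ^ α ≤ u ^ α + w ^ α := by
  have hconc := Real.concaveOn_rpow hα.le hα1
  rcases eq_or_lt_of_le (hyu.trans hux) with h | hxy
  · have hu : u = y := le_antisymm (h ▸ hux) hyu
    have hw : w = y := by linarith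
    have hx : x = y := h.symm
    rw [hu, hw, hx]
  · set lam := (u - y) / (x - y) with hlam
    have hxy' : 0 < x - y := by linarith
    have h0 : 0 ≤ lam := div_nonneg (by linarith) hxy'.le
    have h1 : lam ≤ 1 := (div_le_one hxy').2 (by linarith)
    have key : lam * (x - y) = u - y := div_mul_cancel₀ _ hxy'.ne'
    have hux' : lam * x + (1 - lam) * y = u := by linear_combination key
    have hwx' : (1 - lam) * x + lam * y = w := by linear_combination (-1 : ℝ) * key - hsum
    have hxm : x ∈ Set.Ici (0:ℝ) := by simp only [Set.mem_Ici]; linarith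
    have hym : y ∈ Set.Ici (0:ℝ) := hy
    have hu' : lam • (x ^ α) + (1 - lam) • (y ^ α) ≤ (lam • x + (1 - lam) • y) ^ α :=
      hconc.2 hxm hym h0 (by linarith) (by ring)
    have hw' : (1 - lam) • (x ^ α) + lam • (y ^ α) ≤ ((1 - lam) • x + lam • y) ^ α :=
      hconc.2 hxm hym (by linarith) h0 (by ring)
    simp only [smul_eq_mul] at hu' hw'
    rw [hux'] at hu'
    rw [hwx'] at hw'
    nlinarith [hu', hw']

/-- Pairwise step: `(1 - f a)(1 - f b) < 1 - f (a+b)` for `f θ = (θ/(θ+c))^α`. -/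
lemma pareto_pair {α c a b : ℝ} (hα : 0 < α) (hα1 : α ≤ 1) (hc : 0 < c)
    (ha : 0 < a) (hb : 0 < b) :
    (1 - (a / (a + c)) ^ α) * (1 - (b / (b + c)) ^ α)
      < 1 - ((a + b) / (a + b + c)) ^ α := by
  set u := a / (a + c) with hu
  set w := b / (b + c) with hw
  set z := (a + b) / (a + b + c) with hz
  have hac : 0 < a + c := by linarith
  have hbc : 0 < b + c := by linarith
  have habc : 0 < a + b + c := by linarith
  have hu0 : 0 < u := div_pos ha hac
  have hu1 : u < 1 := (div_lt_one hac).2 (by linarith)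
  have hw0 : 0 < w := div_pos hb hbc
  have hw1 : w < 1 := (div_lt_one hbc).2 (by linarith)
  have hz0 : 0 < z := div_pos (by linarith) habc
  have hkey : z < u + w - u * w := by
    rw [hu, hw, hz, div_add_div _ _ hac.ne' hbc.ne', div_mul_div_comm,
      div_sub_div _ _ (mul_pos hac hbc).ne' (mul_pos hac hbc).ne',
      div_lt_div_iff₀ habc (by positivity)]
    ring_nf
    nlinarith [mul_pos (mul_pos ha hb) (pow_pos hc 3), mul_pos (mul_pos ha (pow_pos hb 2)) (pow_pos hc 2),
      mul_pos (mul_pos (pow_pos ha 2) hb) (pow_pos hc 2), mul_pos (mul_pos (pow_pos ha 2) (pow_pos hb 2)) hc]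
  have hkar : (u + w - u * w) ^ α + (u * w) ^ α ≤ u ^ α + w ^ α :=
    karamata_rpow hα hα1 (by positivity) (by nlinarith) (by nlinarith) (by nlinarith) (by ring)
  have hzlt : z ^ α < (u + w - u * w) ^ α :=
    Real.rpow_lt_rpow hz0.le hkey hα
  have hmul : (u * w) ^ α = u ^ α * w ^ α := Real.mul_rpow hu0.le hw0.le
  nlinarith [hzlt, hkar, hmul]

lemma pareto_f_le_one {α c t : ℝ} (hα : 0 < α) (hc : 0 < c) (ht : 0 < t) :
    (t / (t + c)) ^ α ≤ 1 :=
  Real.rpow_le_one (by positivity) ((div_le_one (by linarith)).2 (by linarith)) hα.le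

lemma pareto_prod_le {ι : Type*} {α c : ℝ} (hα : 0 < α) (hα1 : α ≤ 1) (hc : 0 < c)
    (s : Finset ι) (hs : s.Nonempty) (θ : ι → ℝ) (hθ : ∀ i ∈ s, 0 < θ i) :
    ∏ i ∈ s, (1 - (θ i / (θ i + c)) ^ α)
      ≤ 1 - ((∑ i ∈ s, θ i) / ((∑ i ∈ s, θ i) + c)) ^ α := by
  induction hs using Finset.Nonempty.cons_induction with
  | singleton i => simp
  | cons a s ha hs ih =>
    have hθs : ∀ i ∈ s, 0 < θ i := fun i hi => hθ i (Finset.mem_cons_of_mem hi)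
    have hsum : 0 < ∑ i ∈ s, θ i := Finset.sum_pos hθs hs
    have hθa : 0 < θ a := hθ a (Finset.mem_cons_self a s)
    rw [Finset.prod_cons, Finset.sum_cons]
    calc (1 - (θ a / (θ a + c)) ^ α) * ∏ i ∈ s, (1 - (θ i / (θ i + c)) ^ α)
        ≤ (1 - (θ a / (θ a + c)) ^ α)
            * (1 - ((∑ i ∈ s, θ i) / ((∑ i ∈ s, θ i) + c)) ^ α) := by
          apply mul_le_mul_of_nonneg_left (ih hθs)
          have := pareto_f_le_one (t := θ a) hα hc hθa
          linarith
      _ ≤ 1 - ((θ a + ∑ i ∈ s, θ i) / ((θ a + ∑ i ∈ s, θ i) + c)) ^ α :=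
          (pareto_pair hα hα1 hc hθa hsum).le

lemma pareto_prod_lt {ι : Type*} [DecidableEq ι] {α c : ℝ} (hα : 0 < α) (hα1 : α ≤ 1) (hc : 0 < c)
    (s : Finset ι) (hs : 2 ≤ s.card) (θ : ι → ℝ) (hθ : ∀ i ∈ s, 0 < θ i) :
    ∏ i ∈ s, (1 - (θ i / (θ i + c)) ^ α)
      < 1 - ((∑ i ∈ s, θ i) / ((∑ i ∈ s, θ i) + c)) ^ α := by
  obtain ⟨a, ha⟩ : s.Nonempty := Finset.card_pos.1 (by omega)
  have htne : (s.erase a).Nonempty := by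
    rw [← Finset.card_pos, Finset.card_erase_of_mem ha]; omega
  have hθa : 0 < θ a := hθ a ha
  have hθt : ∀ i ∈ s.erase a, 0 < θ i := fun i hi => hθ i (Finset.mem_of_mem_erase hi)
  have hsum : 0 < ∑ i ∈ s.erase a, θ i := Finset.sum_pos hθt htne
  rw [← Finset.mul_prod_erase s _ ha, ← Finset.add_sum_erase s θ ha]
  calc (1 - (θ a / (θ a + c)) ^ α) * ∏ i ∈ s.erase a, (1 - (θ i / (θ i + c)) ^ α)
      ≤ (1 - (θ a / (θ a + c)) ^ α)
          * (1 - ((∑ i ∈ s.erase a, θ i) / ((∑ i ∈ s.erase a, θ i) + c)) ^ α) := by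
        apply mul_le_mul_of_nonneg_left (pareto_prod_le hα hα1 hc _ htne θ hθt)
        have := pareto_f_le_one (t := θ a) hα hc hθa
        linarith
    _ < 1 - ((θ a + ∑ i ∈ s.erase a, θ i) / ((θ a + ∑ i ∈ s.erase a, θ i) + c)) ^ α :=
        pareto_pair hα hα1 hc hθa hsum

end AnalyticCore

section VaRLemmas

open Filter

variable {Ω : Type*} [MeasurableSpace Ω] {P : Measure Ω} [IsProbabilityMeasure P]
  {Y : Ω → ℝ} {p : ℝ}

/-- If `Y ≥ 1` a.s., then `P(Y ≤ t) = 0` for `t < 1`. -/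
lemma measure_le_eq_zero (hY : Measurable Y) (hae : P {ω | 1 ≤ Y ω} = 1)
    {t : ℝ} (ht : t < 1) : P {ω | Y ω ≤ t} = 0 := by
  have h0 : P {ω | 1 ≤ Y ω}ᶜ = 0 :=
    (prob_compl_eq_zero_iff (hY measurableSet_Ici : MeasurableSet {ω | 1 ≤ Y ω})).2 hae
  refine measure_mono_null (fun ω hω => ?_) h0
  simp only [mem_compl_iff, mem_setOf_eq, not_le] at *
  linarith [hω]

lemma bddBelow_VaRset (hY : Measurable Y) (hae : P {ω | 1 ≤ Y ω} = 1) (hp : 0 < p) :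
    BddBelow {t : ℝ | ENNReal.ofReal p ≤ P {ω | Y ω ≤ t}} := by
  refine ⟨1, fun t ht => ?_⟩
  by_contra h
  push_neg at h
  rw [mem_setOf_eq, measure_le_eq_zero hY hae h, nonpos_iff_eq_zero,
    ENNReal.ofReal_eq_zero] at ht
  linarith

lemma nonempty_VaRset (hY : Measurable Y) (hp1 : p < 1) :
    Set.Nonempty {t : ℝ | ENNReal.ofReal p ≤ P {ω | Y ω ≤ t}} := by
  have hmono : Monotone (fun n : ℕ => {ω | Y ω ≤ (n : ℝ)}) := by
    intro m n hmn ω hω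
    simp only [mem_setOf_eq] at *
    exact le_trans hω (Nat.cast_le.2 hmn)
  have hU : (⋃ n : ℕ, {ω | Y ω ≤ (n : ℝ)}) = univ := by
    ext ω; simp only [mem_iUnion, mem_setOf_eq, mem_univ, iff_true]
    obtain ⟨n, hn⟩ := exists_nat_ge (Y ω)
    exact ⟨n, hn⟩
  have hten := tendsto_measure_iUnion_atTop (μ := P) hmono
  rw [hU, measure_univ] at hten
  have hlt : ENNReal.ofReal p < 1 := ENNReal.ofReal_lt_one.2 hp1
  obtain ⟨n, hn⟩ := (hten.eventually_const_lt hlt).exists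
  exact ⟨n, hn.le⟩

lemma measure_le_VaR_ge (hY : Measurable Y) (hae : P {ω | 1 ≤ Y ω} = 1)
    (hp : 0 < p) (hp1 : p < 1) :
    ENNReal.ofReal p ≤ P {ω | Y ω ≤ VaR P Y p} := by
  set M := {t : ℝ | ENNReal.ofReal p ≤ P {ω | Y ω ≤ t}} with hM
  have hne := nonempty_VaRset (P := P) hY hp1
  set v := VaR P Y p with hv
  have hInter : (⋂ n : ℕ, {ω | Y ω ≤ v + 1 / (n + 1)}) = {ω | Y ω ≤ v} := by
    ext ω
    simp only [mem_iInter, mem_setOf_eq]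
    constructor
    · intro h
      by_contra hlt
      push_neg at hlt
      obtain ⟨n, hn⟩ := exists_nat_one_div_lt (sub_pos.2 hlt)
      linarith [h n]
    · intro h n
      have : (0:ℝ) < 1 / (n + 1) := by positivity
      linarith
  have hanti : Antitone (fun n : ℕ => {ω | Y ω ≤ v + 1 / (n + 1)}) := by
    intro m n hmn ω hω
    simp only [mem_setOf_eq] at *
    have : (1:ℝ) / (n + 1) ≤ 1 / (m + 1) := by
      apply one_div_le_one_div_of_le (by positivity)
      exact_mod_cast by omega
    linarith
  have hten := tendsto_measure_iInter_atTop (μ := P)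
    (s := fun n : ℕ => {ω | Y ω ≤ v + 1 / (n + 1)})
    (fun n => (hY measurableSet_Iic).nullMeasurableSet) hanti ⟨0, measure_ne_top _ _⟩
  rw [hInter] at hten
  refine ge_of_tendsto hten (Eventually.of_forall fun n => ?_)
  have hpos : (0:ℝ) < 1 / (n + 1) := by positivity
  obtain ⟨t, htM, htlt⟩ := exists_lt_of_csInf_lt hne (show sInf M < v + 1 / (n+1) by
    rw [hv]; unfold VaR; linarith [lt_add_of_pos_right (sInf M) hpos])
  exact le_trans htM (measure_mono fun ω hω => le_trans hω htlt.le)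

/-- If `P(Y ≤ a) < p` then `a < VaR`. -/
lemma lt_VaR (hY : Measurable Y) (hp1 : p < 1)
    {a : ℝ} (ha : P {ω | Y ω ≤ a} < ENNReal.ofReal p) : a < VaR P Y p := by
  set M := {t : ℝ | ENNReal.ofReal p ≤ P {ω | Y ω ≤ t}} with hM
  have hne := nonempty_VaRset (P := P) hY hp1
  have hInter : (⋂ n : ℕ, {ω | Y ω ≤ a + 1 / (n + 1)}) = {ω | Y ω ≤ a} := by
    ext ω
    simp only [mem_iInter, mem_setOf_eq]
    constructor
    · intro h
      by_contra hlt
      push_neg at hlt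
      obtain ⟨n, hn⟩ := exists_nat_one_div_lt (sub_pos.2 hlt)
      linarith [h n]
    · intro h n
      have : (0:ℝ) < 1 / (n + 1) := by positivity
      linarith
  have hanti : Antitone (fun n : ℕ => {ω | Y ω ≤ a + 1 / (n + 1)}) := by
    intro m n hmn ω hω
    simp only [mem_setOf_eq] at *
    have : (1:ℝ) / (n + 1) ≤ 1 / (m + 1) := by
      apply one_div_le_one_div_of_le (by positivity)
      exact_mod_cast by omega
    linarith
  have hten := tendsto_measure_iInter_atTop (μ := P)
    (s := fun n : ℕ => {ω | Y ω ≤ a + 1 / (n + 1)})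
    (fun n => (hY measurableSet_Iic).nullMeasurableSet) hanti ⟨0, measure_ne_top _ _⟩
  rw [hInter] at hten
  obtain ⟨n, hn⟩ := (hten.eventually_lt_const ha).exists
  have hlb : ∀ t ∈ M, a + 1 / (n+1) ≤ t := by
    intro t htM
    by_contra h
    push_neg at h
    exact absurd (le_trans htM (measure_mono fun ω hω => le_trans hω h.le)) (not_le.2 hn)
  have : a + 1 / (n+1) ≤ VaR P Y p := le_csInf hne hlb
  have hpos : (0:ℝ) < 1 / (n + 1) := by positivity
  linarith

lemma VaR_le (hY : Measurable Y) (hae : P {ω | 1 ≤ Y ω} = 1) (hp : 0 < p)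
    {a : ℝ} (ha : ENNReal.ofReal p ≤ P {ω | Y ω ≤ a}) : VaR P Y p ≤ a :=
  csInf_le (bddBelow_VaRset hY hae hp) ha

lemma VaR_mono {Z : Ω → ℝ} (hY : Measurable Y) (haeY : P {ω | 1 ≤ Y ω} = 1)
    (hZ : Measurable Z) (hp : 0 < p) (hp1 : p < 1)
    (h : ∀ ω, Y ω ≤ Z ω) : VaR P Y p ≤ VaR P Z p := by
  apply csInf_le_csInf (bddBelow_VaRset hY haeY hp) (nonempty_VaRset hZ hp1)
  intro t ht
  exact le_trans ht (measure_mono fun ω hω => le_trans (h ω) hω)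

end VaRLemmas

/-- Per-loss capping at thresholds `cᵢ = VaR_p(∑ θⱼXⱼ)/θᵢ` preserves the VaR
diversification penalty: `VaR_p(∑ θᵢ min(Xᵢ,cᵢ)) = VaR_p(∑ θᵢXᵢ) > ∑ θᵢ VaR_p(min(Xᵢ,cᵢ))`. -/
theorem stmt19 {Ω : Type*} [MeasurableSpace Ω] (P : Measure Ω) [IsProbabilityMeasure P]
    (n : ℕ) (hn : 2 ≤ n) (α : ℝ) (hα : α ∈ Set.Ioc (0:ℝ) 1)
    (X : Fin n → Ω → ℝ) (hX : ∀ i, IsPareto P (X i) α)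
    (hind : iIndepFun X P)
    (θ : Fin n → ℝ) (hθ : ∀ i, 0 < θ i) (hsum : ∑ i, θ i = 1)
    (p : ℝ) (hp : p ∈ Set.Ioo (0:ℝ) 1)
    (c : Fin n → ℝ)
    (hc : ∀ i, c i = VaR P (fun ω => ∑ j, θ j * X j ω) p / θ i) :
    VaR P (fun ω => ∑ i, θ i * min (X i ω) (c i)) p
        = VaR P (fun ω => ∑ i, θ i * X i ω) p
    ∧ ∑ i, θ i * VaR P (fun ω => min (X i ω) (c i)) p
        < VaR P (fun ω => ∑ i, θ i * min (X i ω) (c i)) p := by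
  obtain ⟨hα0, hα1⟩ := hα
  obtain ⟨hp0, hp1⟩ := hp
  have hXm : ∀ i, Measurable (X i) := fun i => (hX i).1
  set S : Ω → ℝ := fun ω => ∑ i, θ i * X i ω with hSdef
  set T : Ω → ℝ := fun ω => ∑ i, θ i * min (X i ω) (c i) with hTdef
  have hSmeas : Measurable S :=
    Finset.measurable_sum _ (fun i _ => measurable_const.mul (hXm i))
  have hTmeas : Measurable T :=
    Finset.measurable_sum _ (fun i _ => measurable_const.mul ((hXm i).min measurable_const))
  -- a.e. all `X i ≥ 1`
  have hEae : ∀ᵐ ω ∂P, ∀ i, 1 ≤ X i ω := by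
    rw [ae_all_iff]
    intro i
    have h1 := (hX i).2.1
    have hms : MeasurableSet {ω | 1 ≤ X i ω} := measurableSet_le measurable_const (hXm i)
    have h1' : P {ω | 1 ≤ X i ω}ᶜ = 0 := (prob_compl_eq_zero_iff hms).2 h1
    rw [ae_iff]
    exact h1'
  have meas_one : ∀ {s : Set Ω}, (∀ᵐ ω ∂P, ω ∈ s) → P s = 1 := by
    intro s hs
    have h0 : P sᶜ = 0 := by rwa [ae_iff] at hs
    have hnm : NullMeasurableSet s P := by
      simpa using (NullMeasurableSet.of_null h0).compl
    exact (prob_compl_eq_zero_iff₀ hnm).1 h0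
  have hS1 : P {ω | 1 ≤ S ω} = 1 := by
    apply meas_one
    filter_upwards [hEae] with ω hω
    show (1:ℝ) ≤ S ω
    calc (1:ℝ) = ∑ i, θ i * 1 := by simp [hsum]
      _ ≤ ∑ i, θ i * X i ω :=
        Finset.sum_le_sum fun i _ => mul_le_mul_of_nonneg_left (hω i) (hθ i).le
  -- basic facts about θ
  have hθ1 : ∀ i, θ i ≤ 1 := fun i =>
    hsum ▸ Finset.single_le_sum (fun j _ => (hθ j).le) (Finset.mem_univ i)
  have hθlt1 : ∀ i, θ i < 1 := by
    intro i
    obtain ⟨j, -, hj⟩ := Finset.exists_mem_ne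
      (s := (Finset.univ : Finset (Fin n))) (by simp; omega) i
    have hsplit := Finset.add_sum_erase Finset.univ θ (Finset.mem_univ i)
    have hjmem : j ∈ Finset.univ.erase i := Finset.mem_erase.2 ⟨hj, Finset.mem_univ j⟩
    have hjle : θ j ≤ ∑ k ∈ Finset.univ.erase i, θ k :=
      Finset.single_le_sum (fun k _ => (hθ k).le) hjmem
    have := hθ j
    rw [hsum] at hsplit
    linarith
  -- the quantile of a single Pareto
  set q : ℝ := (1 - p) ^ (-(1/α)) with hqdef
  have h1p : 0 < 1 - p := by linarith
  have h1p1 : 1 - p < 1 := by linarith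
  have hq1 : 1 < q := by
    rw [hqdef, Real.one_lt_rpow_iff_of_pos h1p]
    right
    constructor
    · linarith
    · rw [neg_lt, neg_zero]
      positivity
  have hq0 : 0 < q := lt_trans one_pos hq1
  have hqpow : q ^ (-α) = 1 - p := by
    rw [hqdef, ← Real.rpow_mul h1p.le]
    rw [show (-(1/α)) * (-α) = 1 by field_simp]
    exact Real.rpow_one _
  -- CDF of each Pareto variable
  have hPc : ∀ (i : Fin n) (t : ℝ), 1 ≤ t →
      P {ω | X i ω ≤ t} = ENNReal.ofReal (1 - t ^ (-α)) := by
    intro i t ht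
    have h2 := (hX i).2.2 t ht
    have hcompl : {ω | X i ω ≤ t} = {ω | t < X i ω}ᶜ := by
      ext ω; simp [not_lt]
    have hms : MeasurableSet {ω | t < X i ω} := measurableSet_lt measurable_const (hXm i)
    have h3 : P {ω | t < X i ω}ᶜ = 1 - P {ω | t < X i ω} := prob_compl_eq_one_sub hms
    rw [hcompl, h3, h2, ← ENNReal.ofReal_one,
      ← ENNReal.ofReal_sub _ (Real.rpow_nonneg (le_trans zero_le_one ht) _)]
  -- Step A : q < VaR of the sum
  set v := VaR P S p with hvdef
  have hqv : q < v := by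
    apply lt_VaR hSmeas hp1
    -- threshold levels
    set sf : Fin n → ℝ := fun i => (q - 1 + θ i) / θ i with hsfdef
    have hsf1 : ∀ i, 1 < sf i := by
      intro i
      rw [hsfdef, lt_div_iff₀ (hθ i)]
      linarith
    have hsfpos : ∀ i, (0:ℝ) < sf i := fun i => lt_trans one_pos (hsf1 i)
    have hθsf : ∀ i, θ i * sf i = q - 1 + θ i := by
      intro i
      show θ i * ((q - 1 + θ i) / θ i) = q - 1 + θ i
      rw [← mul_div_assoc]
      exact mul_div_cancel_left₀ _ (hθ i).ne'
    have hsinv : ∀ i, (sf i) ^ (-α) = (θ i / (θ i + (q-1))) ^ α := by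
      intro i
      rw [Real.rpow_neg (hsfpos i).le, ← Real.inv_rpow (hsfpos i).le]
      congr 1
      rw [hsfdef, inv_div]
      ring_nf
    have hr_nonneg : ∀ i, (0:ℝ) ≤ 1 - (sf i) ^ (-α) := by
      intro i
      have := Real.rpow_le_one_of_one_le_of_nonpos (hsf1 i).le (neg_nonpos.2 hα0.le)
      linarith
    -- independence product
    have hInd : P (⋂ i, {ω | X i ω ≤ sf i}) = ∏ i, P {ω | X i ω ≤ sf i} :=
      hind.meas_iInter (fun i => ⟨Iic (sf i), measurableSet_Iic, rfl⟩)
    have hprod : P (⋂ i, {ω | X i ω ≤ sf i})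
        = ENNReal.ofReal (∏ i, (1 - (sf i) ^ (-α))) := by
      rw [hInd]
      rw [ENNReal.ofReal_prod_of_nonneg (fun i _ => hr_nonneg i)]
      exact Finset.prod_congr rfl fun i _ => hPc i (sf i) (hsf1 i).le
    -- the core strict inequality
    have hcore : (∏ i, (1 - (sf i) ^ (-α))) < p := by
      have hmain := pareto_prod_lt (ι := Fin n) hα0 hα1 (c := q - 1) (by linarith)
        Finset.univ (by simp; omega) θ (fun i _ => hθ i)
      rw [hsum] at hmain
      have hone : ((1:ℝ) / (1 + (q-1))) ^ α = q ^ (-α) := by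
        rw [show (1:ℝ) + (q-1) = q by ring, one_div, Real.inv_rpow hq0.le,
          ← Real.rpow_neg hq0.le]
      calc (∏ i, (1 - (sf i) ^ (-α)))
          = ∏ i, (1 - (θ i / (θ i + (q-1))) ^ α) :=
            Finset.prod_congr rfl fun i _ => by rw [hsinv i]
        _ < 1 - ((1:ℝ) / (1 + (q-1))) ^ α := hmain
        _ = p := by rw [hone, hqpow]; ring
    -- subset bound
    have hEc : P {ω | ∀ i, 1 ≤ X i ω}ᶜ = 0 := by
      rw [ae_iff] at hEae
      exact hEae
    have hsub : {ω | S ω ≤ q} ⊆ (⋂ i, {ω | X i ω ≤ sf i}) ∪ {ω | ∀ i, 1 ≤ X i ω}ᶜ := by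
      intro ω hω
      by_cases hE : ∀ i, 1 ≤ X i ω
      · left
        rw [mem_iInter]
        intro i
        simp only [mem_setOf_eq]
        by_contra hlt
        push_neg at hlt
        have hterm : θ i * sf i < θ i * X i ω := mul_lt_mul_of_pos_left hlt (hθ i)
        have hsplit : θ i * X i ω + ∑ j ∈ Finset.univ.erase i, θ j * X j ω
            = ∑ j, θ j * X j ω :=
          Finset.add_sum_erase Finset.univ (fun j => θ j * X j ω) (Finset.mem_univ i)
        have hsplitθ := Finset.add_sum_erase Finset.univ θ (Finset.mem_univ i)
        rw [hsum] at hsplitθ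
        have hrest : ∑ j ∈ Finset.univ.erase i, θ j
            ≤ ∑ j ∈ Finset.univ.erase i, θ j * X j ω :=
          Finset.sum_le_sum fun j _ => le_mul_of_one_le_right (hθ j).le (hE j)
        have hSω : S ω ≤ q := hω
        have hθsfi := hθsf i
        have : q < S ω := by
          show q < ∑ j, θ j * X j ω
          linarith
        linarith
      · right
        exact hE
    calc P {ω | S ω ≤ q}
        ≤ P ((⋂ i, {ω | X i ω ≤ sf i}) ∪ {ω | ∀ i, 1 ≤ X i ω}ᶜ) := measure_mono hsub
      _ ≤ P (⋂ i, {ω | X i ω ≤ sf i}) + P {ω | ∀ i, 1 ≤ X i ω}ᶜ := measure_union_le _ _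
      _ = ENNReal.ofReal (∏ i, (1 - (sf i) ^ (-α))) := by rw [hprod, hEc, add_zero]
      _ < ENNReal.ofReal p := (ENNReal.ofReal_lt_ofReal_iff hp0).2 hcore
  have hv1 : 1 < v := lt_of_le_of_lt hq1.le hqv
  -- relations between c and v
  have hcv : ∀ i, θ i * c i = v := by
    intro i
    rw [hc i, ← mul_div_assoc]
    exact mul_div_cancel_left₀ _ (hθ i).ne'
  have hc1 : ∀ i, 1 ≤ c i := by
    intro i
    rw [hc i, le_div_iff₀ (hθ i), one_mul]
    exact le_trans (hθ1 i) (le_trans hq1.le hqv.le)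
  -- Step B : the capped sum has the same distribution below v
  have hT1 : P {ω | 1 ≤ T ω} = 1 := by
    apply meas_one
    filter_upwards [hEae] with ω hω
    show (1:ℝ) ≤ T ω
    calc (1:ℝ) = ∑ i, θ i * 1 := by simp [hsum]
      _ ≤ ∑ i, θ i * min (X i ω) (c i) :=
        Finset.sum_le_sum fun i _ =>
          mul_le_mul_of_nonneg_left (le_min (hω i) (hc1 i)) (hθ i).le
  have hTS : ∀ t : ℝ, t ≤ v → P {ω | T ω ≤ t} = P {ω | S ω ≤ t} := by
    intro t htv
    apply measure_congr
    filter_upwards [hEae] with ω hω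
    show (T ω ≤ t) = (S ω ≤ t)
    apply propext
    constructor
    · intro hT
      have hall : ∀ i, X i ω ≤ c i := by
        intro i
        by_contra hlt
        push_neg at hlt
        have hmin : min (X i ω) (c i) = c i := min_eq_right hlt.le
        have hsplit : θ i * min (X i ω) (c i) + ∑ j ∈ Finset.univ.erase i, θ j * min (X j ω) (c j)
            = ∑ j, θ j * min (X j ω) (c j) :=
          Finset.add_sum_erase Finset.univ
            (fun j => θ j * min (X j ω) (c j)) (Finset.mem_univ i)
        have hsplitθ := Finset.add_sum_erase Finset.univ θ (Finset.mem_univ i)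
        rw [hsum] at hsplitθ
        have hrest : ∑ j ∈ Finset.univ.erase i, θ j
            ≤ ∑ j ∈ Finset.univ.erase i, θ j * min (X j ω) (c j) :=
          Finset.sum_le_sum fun j _ =>
            le_mul_of_one_le_right (hθ j).le (le_min (hω j) (hc1 j))
        have hTω : T ω ≤ t := hT
        have hvi := hcv i
        have hθi := hθlt1 i
        have : v + (1 - θ i) ≤ T ω := by
          show v + (1 - θ i) ≤ ∑ j, θ j * min (X j ω) (c j)
          rw [← hsplit, hmin]
          linarith
        linarith
      have hST : S ω = T ω := by
        show (∑ i, θ i * X i ω) = ∑ i, θ i * min (X i ω) (c i)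
        exact Finset.sum_congr rfl fun i _ => by rw [min_eq_left (hall i)]
      rw [hST]
      exact hT
    · intro hS
      have hall : ∀ i, X i ω ≤ c i := by
        intro i
        have hle : θ i * X i ω ≤ S ω :=
          Finset.single_le_sum
            (fun j _ => mul_nonneg (hθ j).le (le_trans zero_le_one (hω j)))
            (Finset.mem_univ i)
        have : θ i * X i ω ≤ θ i * c i := by
          rw [hcv i]
          linarith
        exact le_of_mul_le_mul_left this (hθ i)
      have hST : T ω = S ω := by
        show (∑ i, θ i * min (X i ω) (c i)) = ∑ i, θ i * X i ω
        exact Finset.sum_congr rfl fun i _ => by rw [min_eq_left (hall i)]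
      rw [hST]
      exact hS
  -- conclude part 1
  have hvmemT : ENNReal.ofReal p ≤ P {ω | T ω ≤ v} := by
    rw [hTS v le_rfl]
    exact measure_le_VaR_ge hSmeas hS1 hp0 hp1
  have hTv : VaR P T p = v := by
    apply le_antisymm
    · exact VaR_le hTmeas hT1 hp0 hvmemT
    · apply le_csInf ⟨v, hvmemT⟩
      intro t ht
      by_contra hlt
      push_neg at hlt
      rw [mem_setOf_eq, hTS t hlt.le] at ht
      exact absurd (VaR_le hSmeas hS1 hp0 ht) (not_le.2 hlt)
  refine ⟨hTv, ?_⟩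
  -- part 2
  have hminVaR : ∀ i, VaR P (fun ω => min (X i ω) (c i)) p ≤ q := by
    intro i
    have hminmeas : Measurable (fun ω => min (X i ω) (c i)) :=
      (hXm i).min measurable_const
    have hmin1 : P {ω | 1 ≤ min (X i ω) (c i)} = 1 := by
      apply meas_one
      filter_upwards [hEae] with ω hω
      exact le_min (hω i) (hc1 i)
    have h1 : VaR P (fun ω => min (X i ω) (c i)) p ≤ VaR P (X i) p :=
      VaR_mono hminmeas hmin1 (hXm i) hp0 hp1 (fun ω => min_le_left _ _)
    have h2 : VaR P (X i) p ≤ q := by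
      apply VaR_le (hXm i) (hX i).2.1 hp0
      rw [hPc i q hq1.le, hqpow]
      apply ENNReal.ofReal_le_ofReal
      linarith
    linarith
  calc ∑ i, θ i * VaR P (fun ω => min (X i ω) (c i)) p
      ≤ ∑ i, θ i * q :=
        Finset.sum_le_sum fun i _ => mul_le_mul_of_nonneg_left (hminVaR i) (hθ i).le
    _ = q := by rw [← Finset.sum_mul, hsum, one_mul]
    _ < v := hqv
    _ = VaR P T p := hTv.symm
end
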